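/- arXiv:1912.04343 — 8 statements merged into one kernel-verified Lean document; each statement's English description precedes it below -/
import Mathlib

section
/- Let ρ ≥ 0 and let S ⊂ Γ be a uniform subset of Sup(ρ). Then for each τ with 0 < τ < 1/ρ there exists n ∈ ℕ such that S ⊂ Sad(n,τ). Analogously, if S is a uniform subset of Sdn(ρ), then for each τ > 1/ρ there exists n ∈ ℕ such that S ⊂ Srad(n,τ). -/
open Set Filter MeasureTheory

noncomputable section

/-- An impulse-time sequence, modeled as a subset of `(0,∞)` whose intersection with any
half-line `(-∞, t]` is finite (equivalently: a strictly increasing, finite or infinite,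
sequence of positive reals with no finite limit point). -/
def IsImpulseSeq (γ : Set ℝ) : Prop :=
  γ ⊆ Set.Ioi (0 : ℝ) ∧ ∀ t : ℝ, (γ ∩ Set.Iic t).Finite

/-- `impCnt γ s t` is the number `n^γ_{(s,t]}` of impulse times in the interval `(s, t]`. -/
def impCnt (γ : Set ℝ) (s t : ℝ) : ℕ := (γ ∩ Set.Ioc s t).ncard

/-- The class `Sup(ρ)` of impulse-time sequences whose impulse frequency is eventually
uniformly upper bounded by `ρ`. -/
def MemSup (ρ : ℝ) (γ : Set ℝ) : Prop :=
  IsImpulseSeq γ ∧ ∀ ε : ℝ, 0 < ε → ∃ T : ℝ, 0 < T ∧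
    ∀ t : ℝ, T ≤ t → ∀ s : ℝ, 0 ≤ s → (impCnt γ s (s + t) : ℝ) / t ≤ ρ + ε

/-- The class `Sdn(ρ)` of impulse-time sequences whose impulse frequency is eventually
uniformly lower bounded by `ρ`. -/
def MemSdn (ρ : ℝ) (γ : Set ℝ) : Prop :=
  IsImpulseSeq γ ∧ ∀ ε : ℝ, 0 < ε → ∃ T : ℝ, 0 < T ∧
    ∀ t : ℝ, T ≤ t → ∀ s : ℝ, 0 ≤ s → ρ - ε ≤ (impCnt γ s (s + t) : ℝ) / t

/-- `S` is a uniform subset of `Sup(ρ)`: the time `T` can be chosen independently of `γ ∈ S`. -/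
def USubSup (ρ : ℝ) (S : Set (Set ℝ)) : Prop :=
  (∀ γ ∈ S, IsImpulseSeq γ) ∧ ∀ ε : ℝ, 0 < ε → ∃ T : ℝ, 0 < T ∧
    ∀ γ ∈ S, ∀ t : ℝ, T ≤ t → ∀ s : ℝ, 0 ≤ s → (impCnt γ s (s + t) : ℝ) / t ≤ ρ + ε

/-- `S` is a uniform subset of `Sdn(ρ)`: the time `T` can be chosen independently of `γ ∈ S`. -/
def USubSdn (ρ : ℝ) (S : Set (Set ℝ)) : Prop :=
  (∀ γ ∈ S, IsImpulseSeq γ) ∧ ∀ ε : ℝ, 0 < ε → ∃ T : ℝ, 0 < T ∧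
    ∀ γ ∈ S, ∀ t : ℝ, T ≤ t → ∀ s : ℝ, 0 ≤ s → ρ - ε ≤ (impCnt γ s (s + t) : ℝ) / t

/-- The average dwell-time class `Sad(n, τ)`. -/
def MemSad (n : ℕ) (τ : ℝ) (γ : Set ℝ) : Prop :=
  IsImpulseSeq γ ∧ ∀ s t : ℝ, 0 ≤ s → s ≤ t → (impCnt γ s t : ℝ) ≤ (n : ℝ) + (t - s) / τ

/-- The reverse average dwell-time class `Srad(n, τ)`. -/
def MemSrad (n : ℕ) (τ : ℝ) (γ : Set ℝ) : Prop :=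
  IsImpulseSeq γ ∧ ∀ s t : ℝ, 0 ≤ s → s ≤ t → -(n : ℝ) + (t - s) / τ ≤ (impCnt γ s t : ℝ)

/-- Lemma 1 ii): if `S` is a uniform subset of `Sup(ρ)` then for each `τ` with `0 < τ < 1/ρ`
(equivalently `ρ·τ < 1`) there is `n ∈ ℕ` with `S ⊆ Sad(n,τ)`; analogously, if `S` is a
uniform subset of `Sdn(ρ)` then for each `τ > 1/ρ` (equivalently `ρ·τ > 1`) there is `n ∈ ℕ`
with `S ⊆ Srad(n,τ)`. -/
theorem usubset_sup_subset_sad (ρ : ℝ) (hρ : 0 ≤ ρ) (S : Set (Set ℝ)) :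
    (USubSup ρ S → ∀ τ : ℝ, 0 < τ → ρ * τ < 1 → ∃ n : ℕ, ∀ γ ∈ S, MemSad n τ γ) ∧
    (USubSdn ρ S → ∀ τ : ℝ, 0 < τ → 1 < ρ * τ → ∃ n : ℕ, ∀ γ ∈ S, MemSrad n τ γ) := by
  constructor
  · rintro ⟨hImp, hU⟩ τ hτ hρτ
    have hρτ' : ρ < 1 / τ := (lt_div_iff₀ hτ).2 hρτ
    have hε : 0 < (1 / τ - ρ) / 2 := by linarith
    obtain ⟨T, hT, hmain⟩ := hU _ hε
    set ε := (1 / τ - ρ) / 2 with hεdef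
    refine ⟨⌈(ρ + ε) * T⌉₊, fun γ hγ => ⟨hImp γ hγ, fun s t hs hst => ?_⟩⟩
    have hnn : (ρ + ε) * T ≤ (⌈(ρ + ε) * T⌉₊ : ℝ) := Nat.le_ceil _
    by_cases hL : T ≤ t - s
    · have h1 := hmain γ hγ (t - s) hL s hs
      rw [add_sub_cancel] at h1
      have hts : 0 < t - s := lt_of_lt_of_le hT hL
      rw [div_le_iff₀ hts] at h1
      have h3 : ρ + ε ≤ 1 / τ := by rw [hεdef]; linarith
      have h4 : (ρ + ε) * (t - s) ≤ (t - s) / τ := by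
        rw [div_eq_mul_inv, ← one_div]
        nlinarith
      have h5 : (0 : ℝ) ≤ (⌈(ρ + ε) * T⌉₊ : ℕ) := Nat.cast_nonneg _
      linarith
    · push_neg at hL
      have hsub : γ ∩ Set.Ioc s t ⊆ γ ∩ Set.Ioc s (s + T) :=
        Set.inter_subset_inter_right _ (Set.Ioc_subset_Ioc_right (by linarith))
      have hfin : (γ ∩ Set.Ioc s (s + T)).Finite :=
        ((hImp γ hγ).2 (s + T)).subset
          (Set.inter_subset_inter_right _ (fun x hx => hx.2))
      have hmono : impCnt γ s t ≤ impCnt γ s (s + T) := Set.ncard_le_ncard hsub hfin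
      have h1 := hmain γ hγ T le_rfl s hs
      rw [div_le_iff₀ hT] at h1
      have h4 : 0 ≤ (t - s) / τ := div_nonneg (by linarith) hτ.le
      have h5 : (impCnt γ s t : ℝ) ≤ (impCnt γ s (s + T) : ℝ) := Nat.cast_le.2 hmono
      linarith
  · rintro ⟨hImp, hU⟩ τ hτ hρτ
    have hρτ' : 1 / τ < ρ := (div_lt_iff₀ hτ).2 hρτ
    have hε : 0 < (ρ - 1 / τ) / 2 := by linarith
    obtain ⟨T, hT, hmain⟩ := hU _ hε
    set ε := (ρ - 1 / τ) / 2 with hεdef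
    refine ⟨⌈T / τ⌉₊, fun γ hγ => ⟨hImp γ hγ, fun s t hs hst => ?_⟩⟩
    have hnn : T / τ ≤ (⌈T / τ⌉₊ : ℝ) := Nat.le_ceil _
    by_cases hL : T ≤ t - s
    · have h1 := hmain γ hγ (t - s) hL s hs
      rw [add_sub_cancel] at h1
      have hts : 0 < t - s := lt_of_lt_of_le hT hL
      rw [le_div_iff₀ hts] at h1
      have h3 : 1 / τ ≤ ρ - ε := by rw [hεdef]; linarith
      have h4 : (t - s) / τ ≤ (ρ - ε) * (t - s) := by
        rw [div_eq_mul_inv, ← one_div]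
        nlinarith
      have h5 : (0 : ℝ) ≤ (⌈T / τ⌉₊ : ℕ) := Nat.cast_nonneg _
      linarith
    · push_neg at hL
      have h4 : (t - s) / τ ≤ T / τ := by
        gcongr
      have h5 : (0 : ℝ) ≤ (impCnt γ s t : ℝ) := Nat.cast_nonneg _
      linarith
end
end

section
/- Let ρ ≥ 0 and Δ ≥ 0. If γ ∈ Sup(ρ) and γ* is a Δ-perturbation of γ, then γ* ∈ Sup(ρ). Analogously, if γ ∈ Sdn(ρ) and γ* is a Δ-perturbation of γ, then γ* ∈ Sdn(ρ). -/
open Set Filter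

noncomputable section

/-- An (infinite) impulse-time sequence: strictly increasing, positive, with no finite
limit point (i.e. tending to `∞`). -/
def IsImpSeqFun (τ : ℕ → ℝ) : Prop :=
  StrictMono τ ∧ 0 < τ 0 ∧ Filter.Tendsto τ Filter.atTop Filter.atTop

/-- `seqCnt τ s t` is the number `n^γ_{(s,t]}` of terms of the sequence `τ` lying in `(s, t]`. -/
def seqCnt (τ : ℕ → ℝ) (s t : ℝ) : ℕ := (Set.range τ ∩ Set.Ioc s t).ncard

/-- Membership in the class `Sup(ρ)` (impulse frequency eventually uniformly upper bounded
by `ρ`), for sequences. -/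
def SeqMemSup (ρ : ℝ) (τ : ℕ → ℝ) : Prop :=
  IsImpSeqFun τ ∧ ∀ ε : ℝ, 0 < ε → ∃ T : ℝ, 0 < T ∧
    ∀ t : ℝ, T ≤ t → ∀ s : ℝ, 0 ≤ s → (seqCnt τ s (s + t) : ℝ) / t ≤ ρ + ε

/-- Membership in the class `Sdn(ρ)` (impulse frequency eventually uniformly lower bounded
by `ρ`), for sequences. -/
def SeqMemSdn (ρ : ℝ) (τ : ℕ → ℝ) : Prop :=
  IsImpSeqFun τ ∧ ∀ ε : ℝ, 0 < ε → ∃ T : ℝ, 0 < T ∧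
    ∀ t : ℝ, T ≤ t → ∀ s : ℝ, 0 ≤ s → ρ - ε ≤ (seqCnt τ s (s + t) : ℝ) / t

/-- Membership in the average dwell-time class `Sad(n, τADT)`. -/
def SeqMemSad (n : ℕ) (τADT : ℝ) (τ : ℕ → ℝ) : Prop :=
  IsImpSeqFun τ ∧ ∀ s t : ℝ, 0 ≤ s → s ≤ t → (seqCnt τ s t : ℝ) ≤ (n : ℝ) + (t - s) / τADT

/-- Membership in the reverse average dwell-time class `Srad(n, τADT)`. -/
def SeqMemSrad (n : ℕ) (τADT : ℝ) (τ : ℕ → ℝ) : Prop :=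
  IsImpSeqFun τ ∧ ∀ s t : ℝ, 0 ≤ s → s ≤ t → -(n : ℝ) + (t - s) / τADT ≤ (seqCnt τ s t : ℝ)

/-- `τs` is a `Δ`-perturbation of `τ`: with the same index set, `τs k ∈ [τ k − Δ, τ k + Δ]`
for all `k`. -/
def IsDeltaPert (Δ : ℝ) (τ τs : ℕ → ℝ) : Prop :=
  ∀ k : ℕ, τ k - Δ ≤ τs k ∧ τs k ≤ τ k + Δ

/-- Counting via the preimage of the interval, for injective sequences. -/
lemma seqCnt_eq_preimage (τ : ℕ → ℝ) (hτ : Function.Injective τ) (s t : ℝ) :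
    seqCnt τ s t = (τ ⁻¹' Set.Ioc s t).ncard := by
  unfold seqCnt
  rw [Set.inter_comm, ← Set.image_preimage_eq_inter_range,
    Set.ncard_image_of_injective _ hτ]

/-- Finiteness of the index set of points in a bounded interval. -/
lemma preimage_Ioc_finite (τ : ℕ → ℝ) (h : Filter.Tendsto τ Filter.atTop Filter.atTop)
    (s t : ℝ) : (τ ⁻¹' Set.Ioc s t).Finite := by
  obtain ⟨N, hN⟩ := (h.eventually (Filter.eventually_gt_atTop t)).exists_forall_of_atTop
  apply Set.Finite.subset (Set.finite_Iio N)
  intro k hk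
  by_contra hkN
  exact absurd (hN k (le_of_not_gt hkN)) (not_lt.mpr hk.2)

/-- Lemma 1 v-a): `Sup(ρ)` and `Sdn(ρ)` are persistent under `Δ`-perturbations: if
`γ* ∈ Γ` is a `Δ`-perturbation of `γ ∈ Sup(ρ)` (resp. `γ ∈ Sdn(ρ)`), then `γ* ∈ Sup(ρ)`
(resp. `γ* ∈ Sdn(ρ)`). -/
theorem deltaPert_mem_sup_sdn (ρ Δ : ℝ) (hρ : 0 ≤ ρ) (hΔ : 0 ≤ Δ)
    (τ τs : ℕ → ℝ) (hτs : IsImpSeqFun τs) (hpert : IsDeltaPert Δ τ τs) :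
    (SeqMemSup ρ τ → SeqMemSup ρ τs) ∧ (SeqMemSdn ρ τ → SeqMemSdn ρ τs) := by
  obtain ⟨hτsmono, hτspos, hτstop⟩ := hτs
  constructor
  · rintro ⟨⟨hmono, hpos0, htop⟩, hsup⟩
    refine ⟨⟨hτsmono, hτspos, hτstop⟩, ?_⟩
    intro ε hε
    obtain ⟨T₁, hT₁pos, hT₁⟩ := hsup (ε / 2) (by linarith)
    refine ⟨max T₁ (max 1 (4 * Δ * (ρ + ε / 2) / ε)), by positivity, ?_⟩
    intro t ht s hs
    have ht1 : (1 : ℝ) ≤ t := le_trans (le_trans (le_max_left _ _) (le_max_right _ _)) ht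
    have htpos : 0 < t := by linarith
    set s₀ : ℝ := max (s - Δ) 0 with hs₀def
    set u : ℝ := s + t + Δ with hudef
    have hs₀0 : 0 ≤ s₀ := le_max_right _ _
    -- count comparison
    have hsub : τs ⁻¹' Set.Ioc s (s + t) ⊆ τ ⁻¹' Set.Ioc s₀ u := by
      intro k hk
      obtain ⟨hk1, hk2⟩ := hk
      have hp := hpert k
      have hτkpos : 0 < τ k := lt_of_lt_of_le hpos0 (hmono.monotone (Nat.zero_le k))
      constructor
      · have h1 : s - Δ < τ k := by linarith
        exact max_lt h1 hτkpos
      · linarith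
    have hfin : (τ ⁻¹' Set.Ioc s₀ u).Finite := preimage_Ioc_finite τ htop s₀ u
    have hcard : seqCnt τs s (s + t) ≤ seqCnt τ s₀ u := by
      rw [seqCnt_eq_preimage τs hτsmono.injective, seqCnt_eq_preimage τ hmono.injective]
      exact Set.ncard_le_ncard hsub hfin
    -- apply the hypothesis for τ with start s₀ and length u - s₀
    have hL : T₁ ≤ u - s₀ := by
      have h1 : u - s₀ ≥ t := by
        rcases max_cases (s - Δ) 0 with ⟨h, _⟩ | ⟨h, _⟩ <;> rw [hs₀def, h] <;> linarith
      have : T₁ ≤ t := le_trans (le_max_left _ _) ht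
      linarith
    have hLpos : 0 < u - s₀ := lt_of_lt_of_le hT₁pos hL
    have hbound := hT₁ (u - s₀) hL s₀ hs₀0
    rw [show s₀ + (u - s₀) = u by ring] at hbound
    have hcnt : (seqCnt τ s₀ u : ℝ) ≤ (ρ + ε / 2) * (u - s₀) := by
      rw [div_le_iff₀ hLpos] at hbound
      linarith
    have hLle : u - s₀ ≤ t + 2 * Δ := by
      rcases max_cases (s - Δ) 0 with ⟨h, _⟩ | ⟨h, h'⟩ <;> rw [hs₀def, h] <;> linarith
    have htbig : 4 * Δ * (ρ + ε / 2) / ε ≤ t :=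
      le_trans (le_trans (le_max_right _ _) (le_max_right _ _)) ht
    have htbig' : 4 * Δ * (ρ + ε / 2) ≤ ε * t := by
      rw [div_le_iff₀ hε] at htbig; linarith
    rw [div_le_iff₀ htpos]
    have h1 : (seqCnt τs s (s + t) : ℝ) ≤ (seqCnt τ s₀ u : ℝ) := by exact_mod_cast hcard
    have h2 : (ρ + ε / 2) * (u - s₀) ≤ (ρ + ε / 2) * (t + 2 * Δ) := by
      apply mul_le_mul_of_nonneg_left hLle; linarith
    nlinarith
  · rintro ⟨⟨hmono, hpos0, htop⟩, hsdn⟩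
    refine ⟨⟨hτsmono, hτspos, hτstop⟩, ?_⟩
    intro ε hε
    obtain ⟨T₁, hT₁pos, hT₁⟩ := hsdn (ε / 2) (by linarith)
    refine ⟨max (T₁ + 2 * Δ) (max 1 (4 * Δ * ρ / ε + 2 * Δ)), by positivity, ?_⟩
    intro t ht s hs
    have ht1 : (1 : ℝ) ≤ t := le_trans (le_trans (le_max_left _ _) (le_max_right _ _)) ht
    have htpos : 0 < t := by linarith
    have htT : T₁ + 2 * Δ ≤ t := le_trans (le_max_left _ _) ht
    have htρ : 4 * Δ * ρ / ε + 2 * Δ ≤ t :=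
      le_trans (le_trans (le_max_right _ _) (le_max_right _ _)) ht
    have hsub : τ ⁻¹' Set.Ioc (s + Δ) (s + t - Δ) ⊆ τs ⁻¹' Set.Ioc s (s + t) := by
      intro k hk
      obtain ⟨hk1, hk2⟩ := hk
      have hp := hpert k
      exact ⟨by linarith, by linarith⟩
    have hfin : (τs ⁻¹' Set.Ioc s (s + t)).Finite := preimage_Ioc_finite τs hτstop s (s + t)
    have hcard : seqCnt τ (s + Δ) (s + t - Δ) ≤ seqCnt τs s (s + t) := by
      rw [seqCnt_eq_preimage τs hτsmono.injective, seqCnt_eq_preimage τ hmono.injective]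
      exact Set.ncard_le_ncard hsub hfin
    have hL : T₁ ≤ t - 2 * Δ := by linarith
    have hLpos : 0 < t - 2 * Δ := lt_of_lt_of_le hT₁pos hL
    have hbound := hT₁ (t - 2 * Δ) hL (s + Δ) (by linarith)
    rw [show s + Δ + (t - 2 * Δ) = s + t - Δ by ring] at hbound
    have hcnt : (ρ - ε / 2) * (t - 2 * Δ) ≤ (seqCnt τ (s + Δ) (s + t - Δ) : ℝ) := by
      rw [le_div_iff₀ hLpos] at hbound
      linarith
    have h1 : (seqCnt τ (s + Δ) (s + t - Δ) : ℝ) ≤ (seqCnt τs s (s + t) : ℝ) := by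
      exact_mod_cast hcard
    rw [le_div_iff₀ htpos]
    have htρ' : 4 * Δ * ρ ≤ ε * (t - 2 * Δ) := by
      rw [div_add' _ _ _ (ne_of_gt hε), div_le_iff₀ hε] at htρ
      nlinarith
    nlinarith
end
end

section
/- Let ρ ≥ 0 and Δ ≥ 0. If S ⊂ Γ is a uniform subset of Sup(ρ), then the set S_Δ of all Δ-perturbations of sequences in S is again a uniform subset of Sup(ρ). Analogously, if S is a uniform subset of Sdn(ρ), then S_Δ is a uniform subset of Sdn(ρ). -/
open Set Filter

noncomputable section

/-- `S` is a uniform subset of `Sup(ρ)` (the time `T` independent of the sequence). -/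
def SeqUSubSup (ρ : ℝ) (S : Set (ℕ → ℝ)) : Prop :=
  (∀ τ ∈ S, IsImpSeqFun τ) ∧ ∀ ε : ℝ, 0 < ε → ∃ T : ℝ, 0 < T ∧
    ∀ τ ∈ S, ∀ t : ℝ, T ≤ t → ∀ s : ℝ, 0 ≤ s → (seqCnt τ s (s + t) : ℝ) / t ≤ ρ + ε

/-- `S` is a uniform subset of `Sdn(ρ)` (the time `T` independent of the sequence). -/
def SeqUSubSdn (ρ : ℝ) (S : Set (ℕ → ℝ)) : Prop :=
  (∀ τ ∈ S, IsImpSeqFun τ) ∧ ∀ ε : ℝ, 0 < ε → ∃ T : ℝ, 0 < T ∧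
    ∀ τ ∈ S, ∀ t : ℝ, T ≤ t → ∀ s : ℝ, 0 ≤ s → ρ - ε ≤ (seqCnt τ s (s + t) : ℝ) / t

/-- `S_Δ`: the set of all `Δ`-perturbations (which are impulse-time sequences) of sequences
in `S`. -/
def PertSet (Δ : ℝ) (S : Set (ℕ → ℝ)) : Set (ℕ → ℝ) :=
  {τs | IsImpSeqFun τs ∧ ∃ τ ∈ S, IsDeltaPert Δ τ τs}

lemma finite_le_pre {τ : ℕ → ℝ} (h : Filter.Tendsto τ Filter.atTop Filter.atTop)
    (d : ℝ) : {k : ℕ | τ k ≤ d}.Finite := by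
  obtain ⟨N, hN⟩ := (Filter.tendsto_atTop.mp h (d + 1)).exists_forall_of_atTop
  apply Set.Finite.subset (Set.finite_Iio N)
  intro k hk
  by_contra hlt
  have := hN k (le_of_not_gt fun h' => hlt h')
  simp only [Set.mem_setOf_eq] at hk
  linarith

lemma cnt_as_pre {τ : ℕ → ℝ} (hτ : Function.Injective τ) (s t : ℝ) :
    seqCnt τ s t = (τ ⁻¹' Set.Ioc s t).ncard := by
  rw [seqCnt, Set.inter_comm, ← Set.image_preimage_eq_inter_range,
    Set.ncard_image_of_injective _ hτ]

lemma cnt_mono {σ σ' : ℕ → ℝ} (hσ : Function.Injective σ) (hσ' : Function.Injective σ')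
    (htend : Filter.Tendsto σ' Filter.atTop Filter.atTop) {a b c d : ℝ}
    (h : ∀ k, σ k ∈ Set.Ioc a b → σ' k ∈ Set.Ioc c d) :
    seqCnt σ a b ≤ seqCnt σ' c d := by
  rw [cnt_as_pre hσ, cnt_as_pre hσ']
  exact Set.ncard_le_ncard h ((finite_le_pre htend d).subset fun k hk => hk.2)

/-- Lemma 1 v-b): if `S` is a uniform subset of `Sup(ρ)` (resp. of `Sdn(ρ)`), then the set
`S_Δ` of all `Δ`-perturbations of sequences in `S` is again a uniform subset of `Sup(ρ)`
(resp. of `Sdn(ρ)`). -/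
theorem pertSet_usubset (ρ Δ : ℝ) (hρ : 0 ≤ ρ) (hΔ : 0 ≤ Δ) (S : Set (ℕ → ℝ)) :
    (SeqUSubSup ρ S → SeqUSubSup ρ (PertSet Δ S)) ∧
    (SeqUSubSdn ρ S → SeqUSubSdn ρ (PertSet Δ S)) := by
  constructor
  · rintro ⟨hS, hU⟩
    refine ⟨fun τs hτs => hτs.1, fun ε hε => ?_⟩
    obtain ⟨T', hT'pos, hT'⟩ := hU (ε / 2) (by linarith)
    refine ⟨max T' ((4 * ρ * Δ + 2 * ε * Δ) / ε),
      lt_of_lt_of_le hT'pos (le_max_left _ _), ?_⟩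
    rintro τs ⟨hτsΓ, τ, hτS, hpert⟩ t ht s hs
    have hτΓ := hS τ hτS
    have hTt : T' ≤ t := le_trans (le_max_left _ _) ht
    have htpos : 0 < t := lt_of_lt_of_le hT'pos hTt
    set s' : ℝ := max (s - Δ) 0 with hs'def
    set t' : ℝ := s + t + Δ - s' with ht'def
    have hs'0 : 0 ≤ s' := le_max_right _ _
    have hs'le : s' ≤ s := max_le (by linarith) hs
    have htt' : t ≤ t' := by simp only [ht'def]; linarith
    have ht'le : t' ≤ t + 2 * Δ := by
      have : s - Δ ≤ s' := le_max_left _ _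
      simp only [ht'def]; linarith
    have hcnt : seqCnt τs s (s + t) ≤ seqCnt τ s' (s' + t') := by
      refine cnt_mono hτsΓ.1.injective hτΓ.1.injective hτΓ.2.2 fun k hk => ?_
      obtain ⟨hk1, hk2⟩ := hk
      obtain ⟨hp1, hp2⟩ := hpert k
      have hpos : 0 < τ k := lt_of_lt_of_le hτΓ.2.1 (hτΓ.1.monotone (Nat.zero_le k))
      constructor
      · exact max_lt (by linarith) hpos
      · have : s' + t' = s + t + Δ := by ring
        rw [this]; linarith
    have ht'pos : 0 < t' := lt_of_lt_of_le htpos htt'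
    have hb := hT' τ hτS t' (le_trans hTt htt') s' hs'0
    rw [div_le_iff₀ ht'pos] at hb
    rw [div_le_iff₀ htpos]
    have hc : (seqCnt τs s (s + t) : ℝ) ≤ (seqCnt τ s' (s' + t') : ℝ) :=
      Nat.cast_le.mpr hcnt
    have hTε : (4 * ρ * Δ + 2 * ε * Δ) / ε ≤ t := le_trans (le_max_right _ _) ht
    have hTε' : 4 * ρ * Δ + 2 * ε * Δ ≤ t * ε := (div_le_iff₀ hε).mp hTε
    nlinarith [mul_nonneg (by linarith : (0:ℝ) ≤ ρ + ε / 2)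
      (by linarith : (0:ℝ) ≤ t + 2 * Δ - t')]
  · rintro ⟨hS, hU⟩
    refine ⟨fun τs hτs => hτs.1, fun ε hε => ?_⟩
    obtain ⟨T', hT'pos, hT'⟩ := hU (ε / 2) (by linarith)
    refine ⟨max (T' + 2 * Δ) (4 * ρ * Δ / ε),
      lt_of_lt_of_le (by linarith) (le_max_left _ _), ?_⟩
    rintro τs ⟨hτsΓ, τ, hτS, hpert⟩ t ht s hs
    have hτΓ := hS τ hτS
    have hTt : T' + 2 * Δ ≤ t := le_trans (le_max_left _ _) ht
    have htpos : 0 < t := by linarith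
    set s'' : ℝ := s + Δ with hs''def
    set t'' : ℝ := t - 2 * Δ with ht''def
    have hT'' : T' ≤ t'' := by simp only [ht''def]; linarith
    have ht''pos : 0 < t'' := lt_of_lt_of_le hT'pos hT''
    have hcnt : seqCnt τ s'' (s'' + t'') ≤ seqCnt τs s (s + t) := by
      refine cnt_mono hτΓ.1.injective hτsΓ.1.injective hτsΓ.2.2 fun k hk => ?_
      obtain ⟨hk1, hk2⟩ := hk
      obtain ⟨hp1, hp2⟩ := hpert k
      have h1 : s + Δ < τ k := by simpa [hs''def] using hk1
      have h2 : τ k ≤ s + t - Δ := by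
        have : s'' + t'' = s + t - Δ := by simp [hs''def, ht''def]; ring
        linarith [this ▸ hk2]
      exact ⟨by linarith, by linarith⟩
    have hb := hT' τ hτS t'' hT'' s'' (by simp only [hs''def]; linarith)
    rw [le_div_iff₀ ht''pos] at hb
    rw [le_div_iff₀ htpos]
    have hc : (seqCnt τ s'' (s'' + t'') : ℝ) ≤ (seqCnt τs s (s + t) : ℝ) :=
      Nat.cast_le.mpr hcnt
    have hTε : 4 * ρ * Δ / ε ≤ t := le_trans (le_max_right _ _) ht
    have hTε' : 4 * ρ * Δ ≤ t * ε := (div_le_iff₀ hε).mp hTε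
    nlinarith [mul_nonneg hε.le hΔ]
end
end

section
/- Define the sequence γ = {τ_k}_{k=1}^∞ by τ_1 = 1 and τ_k = k − Σ_{ℓ=2}^k (1/ℓ) for k ≥ 2. Then γ is an impulse-time sequence (strictly increasing, positive, tending to ∞), γ belongs to Sup(1), but γ does not belong to Sad(n,1) for any n ∈ ℕ. -/
open Set Filter

noncomputable section

/-- The sequence of Example 2: `τ_1 = 1` and `τ_k = k − Σ_{ℓ=2}^k 1/ℓ` for `k ≥ 2`
(indexed here so that `gammaSeq (k-1) = τ_k`). -/
def gammaSeq (k : ℕ) : ℝ :=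
  ((k + 1 : ℕ) : ℝ) - ∑ ℓ ∈ Finset.Icc 2 (k + 1), (1 : ℝ) / (ℓ : ℝ)

lemma gammaSeq_eq (k : ℕ) :
    gammaSeq k = ((k:ℝ) + 1) - ∑ ℓ ∈ Finset.Ioc 1 (k + 1), (1 : ℝ) / (ℓ : ℝ) := by
  rw [gammaSeq, ← Finset.Icc_add_one_left_eq_Ioc]
  push_cast
  ring_nf

lemma gammaSeq_zero : gammaSeq 0 = 1 := by
  simp [gammaSeq]

lemma gammaSeq_succ (k : ℕ) :
    gammaSeq (k + 1) = gammaSeq k + (1 - 1 / ((k:ℝ) + 2)) := by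
  rw [gammaSeq_eq, gammaSeq_eq, Finset.sum_Ioc_succ_top (by omega)]
  push_cast
  ring

lemma gammaSeq_strictMono : StrictMono gammaSeq := by
  apply strictMono_nat_of_lt_succ
  intro k
  rw [gammaSeq_succ]
  have h2 : (0:ℝ) < (k:ℝ) + 2 := by positivity
  have : 1 / ((k:ℝ) + 2) < 1 := by
    rw [div_lt_one h2]; linarith
  linarith

lemma gammaSeq_lower (k : ℕ) : (k:ℝ)/2 + 1 ≤ gammaSeq k := by
  rw [gammaSeq_eq]
  have hb : ∑ ℓ ∈ Finset.Ioc 1 (k + 1), (1 : ℝ) / (ℓ : ℝ)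
      ≤ (Finset.Ioc 1 (k+1)).card • (1/2 : ℝ) := by
    apply Finset.sum_le_card_nsmul
    intro x hx
    rw [Finset.mem_Ioc] at hx
    have hx2 : (2:ℝ) ≤ (x:ℝ) := by exact_mod_cast hx.1
    rw [div_le_div_iff₀ (by linarith) (by norm_num)]
    linarith
  rw [Nat.card_Ioc] at hb
  simp only [Nat.add_sub_cancel, nsmul_eq_mul] at hb
  linarith

lemma gammaSeq_pos (k : ℕ) : 0 < gammaSeq k := by
  have h : (0:ℝ) ≤ (k:ℝ)/2 := by positivity
  linarith [gammaSeq_lower k]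

lemma gammaSeq_tendsto : Tendsto gammaSeq atTop atTop := by
  apply tendsto_atTop_mono gammaSeq_lower
  apply Filter.Tendsto.atTop_add _ tendsto_const_nhds
  exact (tendsto_natCast_atTop_atTop).atTop_div_const (by norm_num)

lemma sum_shift (m D : ℕ) :
    ∑ ℓ ∈ Finset.Ioc (m+1) (m+1+D), (1 : ℝ) / (ℓ : ℝ)
      ≤ ∑ ℓ ∈ Finset.Ioc 1 (D+1), (1 : ℝ) / (ℓ : ℝ) := by
  have him : Finset.Ioc (m+1) (m+1+D) = (Finset.Ioc 1 (D+1)).image (· + m) := by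
    rw [Finset.image_add_right_Ioc]
    congr 1 <;> omega
  rw [him, Finset.sum_image (by intro a _ b _ h; simp only at h; omega)]
  apply Finset.sum_le_sum
  intro i hi
  rw [Finset.mem_Ioc] at hi
  have h1 : (0:ℝ) < (i:ℝ) := by
    have : 1 ≤ i := by omega
    exact_mod_cast Nat.lt_of_lt_of_le Nat.one_pos this
  have h2 : (i:ℝ) ≤ ((i + m : ℕ):ℝ) := by
    have : (0:ℝ) ≤ (m:ℝ) := Nat.cast_nonneg m
    push_cast
    linarith
  exact one_div_le_one_div_of_le h1 h2

lemma gammaSeq_gap (m D : ℕ) : gammaSeq D - 1 ≤ gammaSeq (m + D) - gammaSeq m := by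
  have hsplit := Finset.sum_Ioc_consecutive (fun ℓ : ℕ => (1:ℝ)/(ℓ:ℝ))
    (show 1 ≤ m+1 by omega) (show m+1 ≤ m+1+D by omega)
  have hs := sum_shift m D
  rw [gammaSeq_eq, gammaSeq_eq, gammaSeq_eq]
  rw [show m + D + 1 = m + 1 + D by omega]
  push_cast
  linarith [hs, hsplit]

lemma harmonic_le_sqrt (N : ℕ) :
    ∑ ℓ ∈ Finset.Ioc 0 N, (1 : ℝ) / (ℓ : ℝ) ≤ 2 * Real.sqrt N := by
  induction N with
  | zero => simp
  | succ n ih =>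
    rw [Finset.sum_Ioc_succ_top (Nat.zero_le n)]
    have hcast : ((n+1 : ℕ):ℝ) = (n:ℝ)+1 := by push_cast; ring
    rw [hcast]
    set a := Real.sqrt n with hadef
    set b := Real.sqrt ((n:ℝ)+1) with hbdef
    have ha : a ^ 2 = (n:ℝ) := Real.sq_sqrt (by positivity)
    have hb : b ^ 2 = ((n:ℝ)+1) := Real.sq_sqrt (by positivity)
    have ha0 : 0 ≤ a := Real.sqrt_nonneg _
    have hb0 : 0 ≤ b := Real.sqrt_nonneg _
    have hba : a ≤ b := Real.sqrt_le_sqrt (by linarith [Nat.cast_nonneg (α := ℝ) n])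
    have hb1 : 1 ≤ b := by nlinarith
    have h2 : a + b ≤ 2*((n:ℝ)+1) := by nlinarith
    have key : 1 ≤ (b - a) * (2*((n:ℝ)+1)) := by nlinarith
    have hpos : (0:ℝ) < (n:ℝ) + 1 := by positivity
    have h3 : (1:ℝ)/((n:ℝ)+1) ≤ 2*(b-a) := by
      rw [div_le_iff₀ hpos]; nlinarith
    linarith

lemma preimage_finite (s t : ℝ) : (gammaSeq ⁻¹' Set.Ioc s t).Finite := by
  obtain ⟨K, hK⟩ := (gammaSeq_tendsto.eventually_ge_atTop (t+1)).exists_forall_of_atTop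
  apply Set.Finite.subset (Set.finite_Iio K)
  intro k hk
  simp only [Set.mem_preimage, Set.mem_Ioc] at hk
  by_contra h
  have h1 : t + 1 ≤ gammaSeq k := hK k (by simpa [Set.mem_Iio] using h)
  linarith [hk.2]

lemma seqCnt_eq (s t : ℝ) :
    seqCnt gammaSeq s t = (gammaSeq ⁻¹' Set.Ioc s t).ncard := by
  rw [seqCnt, Set.inter_comm, ← Set.image_preimage_eq_inter_range,
    Set.ncard_image_of_injective _ gammaSeq_strictMono.injective]

lemma seqCnt_zero (K : ℕ) : seqCnt gammaSeq 0 (gammaSeq K) = K + 1 := by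
  rw [seqCnt_eq]
  have : gammaSeq ⁻¹' Set.Ioc 0 (gammaSeq K) = Set.Iic K := by
    ext k
    simp only [Set.mem_preimage, Set.mem_Ioc, Set.mem_Iic]
    constructor
    · rintro ⟨_, h2⟩
      exact gammaSeq_strictMono.le_iff_le.mp h2
    · intro h
      exact ⟨gammaSeq_pos k, gammaSeq_strictMono.monotone h⟩
  rw [this, ← Finset.coe_Iic, Set.ncard_coe_finset, Nat.card_Iic]

lemma seqCnt_upper (s t : ℝ) (hN : 1 ≤ seqCnt gammaSeq s t) :
    gammaSeq (seqCnt gammaSeq s t - 1) - 1 < t - s := by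
  set N := seqCnt gammaSeq s t with hNdef
  have hfin := preimage_finite s t
  have hcard : N = (gammaSeq ⁻¹' Set.Ioc s t).ncard := seqCnt_eq s t
  set J := hfin.toFinset with hJ
  have hcard' : N = J.card := by
    rw [hcard, Set.ncard_eq_toFinset_card _ hfin]
  have hJne : J.Nonempty := by
    rw [← Finset.card_pos, ← hcard']; omega
  set m := J.min' hJne
  set M := J.max' hJne
  have hmM : m ≤ M := J.min'_le _ (J.max'_mem hJne)
  have hsub : J ⊆ Finset.Icc m M := fun x hx =>
    Finset.mem_Icc.mpr ⟨J.min'_le x hx, J.le_max' x hx⟩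
  have hcardle : N ≤ M - m + 1 := by
    calc N = J.card := hcard'
    _ ≤ (Finset.Icc m M).card := Finset.card_le_card hsub
    _ = M - m + 1 := by rw [Nat.card_Icc]; omega
  have hmmem : gammaSeq m ∈ Set.Ioc s t :=
    (Set.Finite.mem_toFinset hfin).mp (J.min'_mem hJne)
  have hMmem : gammaSeq M ∈ Set.Ioc s t :=
    (Set.Finite.mem_toFinset hfin).mp (J.max'_mem hJne)
  have hgap : gammaSeq M - gammaSeq m < t - s := by
    have h1 := hmmem.1
    have h2 := hMmem.2
    linarith
  have hstep : gammaSeq (M - m) - 1 ≤ gammaSeq M - gammaSeq m := by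
    have := gammaSeq_gap m (M - m)
    rwa [show m + (M - m) = M by omega] at this
  have hmono : gammaSeq (N - 1) ≤ gammaSeq (M - m) :=
    gammaSeq_strictMono.monotone (by omega)
  linarith

lemma sum_range_eq_Ioc (n : ℕ) :
    ∑ i ∈ Finset.range n, (1 / ((i:ℝ) + 1) : ℝ) = ∑ ℓ ∈ Finset.Ioc 0 n, (1:ℝ)/(ℓ:ℝ) := by
  induction n with
  | zero => simp
  | succ k ih =>
    rw [Finset.sum_range_succ, Finset.sum_Ioc_succ_top (Nat.zero_le k), ih]
    push_cast; ring


/-- Example 2: `γ = {τ_k}` with `τ_1 = 1`, `τ_k = k − Σ_{ℓ=2}^k 1/ℓ` is an impulse-time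
sequence, belongs to `Sup(1)`, but does not belong to `Sad(n,1)` for any `n ∈ ℕ`. -/
theorem gammaSeq_mem_sup_not_sad :
    IsImpSeqFun gammaSeq ∧ SeqMemSup 1 gammaSeq ∧
    ∀ n : ℕ, ¬ SeqMemSad n 1 gammaSeq := by
  have himp : IsImpSeqFun gammaSeq :=
    ⟨gammaSeq_strictMono, by rw [gammaSeq_zero]; norm_num, gammaSeq_tendsto⟩
  refine ⟨himp, ⟨himp, ?_⟩, ?_⟩
  · -- Sup(1)
    intro ε hε
    set C : ℝ := 3 * (1 + ε) / ε with hC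
    have hC0 : 0 < C := by positivity
    have hCe : C * ε = 3 * (1 + ε) := by rw [hC]; field_simp
    refine ⟨1 + C^2, by positivity, ?_⟩
    intro t ht s hs
    have ht0 : (0:ℝ) < t := by nlinarith
    rw [div_le_iff₀ ht0]
    by_contra hcon
    push_neg at hcon
    set N := seqCnt gammaSeq s (s + t) with hNdef
    have hN1 : (1:ℝ) ≤ (N:ℝ) := by
      have : 1 ≤ N := by
        by_contra h
        have : N = 0 := by omega
        rw [this] at hcon
        push_cast at hcon
        nlinarith
      exact_mod_cast this
    have hNn : 1 ≤ N := by exact_mod_cast hN1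
    have hup := seqCnt_upper s (s + t) hNn
    rw [← hNdef] at hup
    have hups : gammaSeq (N - 1) - 1 < t := by linarith [hup]
    have hgl : (N:ℝ) - 2 * Real.sqrt N ≤ gammaSeq (N - 1) := by
      have hN1' : (N - 1) + 1 = N := by omega
      have hrw : gammaSeq (N-1)
          = (((N-1:ℕ)):ℝ) + 1 - ∑ ℓ ∈ Finset.Ioc 1 N, (1:ℝ)/(ℓ:ℝ) := by
        rw [gammaSeq_eq, hN1']
      have hsum : ∑ ℓ ∈ Finset.Ioc 1 N, (1:ℝ)/(ℓ:ℝ) ≤ 2 * Real.sqrt N - 1 := by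
        have h0 := harmonic_le_sqrt N
        have hspl : ∑ ℓ ∈ Finset.Ioc 0 N, (1:ℝ)/(ℓ:ℝ)
            = 1 + ∑ ℓ ∈ Finset.Ioc 1 N, (1:ℝ)/(ℓ:ℝ) := by
          rw [← Finset.sum_Ioc_consecutive (fun ℓ : ℕ => (1:ℝ)/(ℓ:ℝ))
            (show 0 ≤ 1 by omega) (show 1 ≤ N by omega)]
          norm_num
        linarith
      have hcast : (((N-1:ℕ)):ℝ) = (N:ℝ) - 1 := by
        push_cast [Nat.cast_sub hNn]; ring
      rw [hrw, hcast]
      linarith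
    have hkey : (N:ℝ) - 2 * Real.sqrt N - 1 < t := by linarith
    have hcon' : (1 + ε) * t < (N:ℝ) := hcon
    have hsq : Real.sqrt N ^ 2 = (N:ℝ) := Real.sq_sqrt (by positivity)
    have hsq0 : 0 ≤ Real.sqrt N := Real.sqrt_nonneg _
    have hsq1 : 1 ≤ Real.sqrt N := by nlinarith
    have h3 : (1 + ε) * ((N:ℝ) - 2 * Real.sqrt N - 1) < (N:ℝ) := by nlinarith
    have h4 : ε * (N:ℝ) < 3 * (1 + ε) * Real.sqrt N := by nlinarith
    have h5 : Real.sqrt N < C := by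
      by_contra hcc
      push_neg at hcc
      have e1 : 3 * (1 + ε) * Real.sqrt N ≤ ε * (N:ℝ) := by
        calc 3 * (1 + ε) * Real.sqrt N = (C * ε) * Real.sqrt N := by rw [hCe]
        _ ≤ (Real.sqrt N * ε) * Real.sqrt N := by
            apply mul_le_mul_of_nonneg_right _ hsq0
            exact mul_le_mul_of_nonneg_right hcc hε.le
        _ = ε * (Real.sqrt N ^ 2) := by ring
        _ = ε * (N:ℝ) := by rw [hsq]
      linarith
    have h6 : (N:ℝ) < C^2 := by nlinarith
    -- N > (1+ε) t ≥ t ≥ 1 + C² > C² > N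
    nlinarith [mul_pos hε ht0]
  · -- not Sad(n, 1)
    intro n ⟨_, hsad⟩
    obtain ⟨K₀, hK₀⟩ :=
      ((Real.tendsto_sum_range_one_div_nat_succ_atTop).eventually_ge_atTop
        ((n:ℝ) + 2)).exists_forall_of_atTop
    set K := K₀ + 1 with hKdef
    have hge : (n:ℝ) + 2 ≤ ∑ i ∈ Finset.range (K + 1), (1 / ((i:ℝ) + 1) : ℝ) := by
      have := hK₀ (K + 1) (by omega)
      exact_mod_cast this
    rw [sum_range_eq_Ioc] at hge
    have hspl : ∑ ℓ ∈ Finset.Ioc 0 (K+1), (1:ℝ)/(ℓ:ℝ)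
        = 1 + ∑ ℓ ∈ Finset.Ioc 1 (K+1), (1:ℝ)/(ℓ:ℝ) := by
      rw [← Finset.sum_Ioc_consecutive (fun ℓ : ℕ => (1:ℝ)/(ℓ:ℝ))
        (show 0 ≤ 1 by omega) (show 1 ≤ K+1 by omega)]
      norm_num
    have hsum : (n:ℝ) + 1 ≤ ∑ ℓ ∈ Finset.Ioc 1 (K+1), (1:ℝ)/(ℓ:ℝ) := by
      rw [hspl] at hge; linarith
    have h := hsad 0 (gammaSeq K) le_rfl (le_of_lt (gammaSeq_pos K))
    rw [seqCnt_zero] at h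
    rw [gammaSeq_eq] at h
    push_cast at h
    simp only [div_one] at h
    linarith
end
end

section
/- There exists an impulse-time sequence γ ∈ Γ such that limsup_{t→∞} n^γ_{(0,t]}/t ≤ 3/2, yet γ ∉ Sup(ρ) for every ρ > 0. In fact, the concatenation γ of the finite sequences {τ_k^1}_{k=0}^2 with τ_k^1 = 1 + k/2, and for ℓ ≥ 2, {τ_k^ℓ}_{k=0}^{p_ℓ−1} with τ_k^ℓ = 2^ℓ − 1 + k/(p_ℓ − 1) and p_ℓ = 3·2^{ℓ−2}, is a strictly increasing sequence tending to ∞ with this property: for every finite length T > 0 and every N ∈ ℕ there exists s ≥ 0 with n^γ_{(s,s+T]} ≥ N, so γ ∉ Sup(ρ) for any ρ > 0, while limsup_{t→∞} n^γ_{(0,t]}/t ≤ 3/2. -/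
open Set Filter MeasureTheory

noncomputable section

open scoped ENNReal

/-- `p_ℓ = 3·2^(ℓ−2)`, the number of elements of the `ℓ`-th finite block (`ℓ ≥ 2`). -/
def pEx (ℓ : ℕ) : ℕ := 3 * 2 ^ (ℓ - 2)

/-- The `ℓ`-th finite block of Example 1: for `ℓ = 1` the points `1 + k/2`, `k = 0,1,2`;
for `ℓ ≥ 2` the points `2^ℓ − 1 + k/(p_ℓ − 1)`, `k = 0,…,p_ℓ − 1`. -/
def blockEx (ℓ : ℕ) : Set ℝ :=
  if ℓ = 1 then (fun k : ℕ => 1 + (k : ℝ) / 2) '' {k : ℕ | k < 3}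
  else (fun k : ℕ => (2 : ℝ) ^ ℓ - 1 + (k : ℝ) / ((pEx ℓ : ℝ) - 1)) '' {k : ℕ | k < pEx ℓ}

/-- The concatenation `γ` of the blocks, as a set of impulse times. -/
def gammaEx : Set ℝ := ⋃ ℓ ∈ {ℓ : ℕ | 1 ≤ ℓ}, blockEx ℓ

lemma three_le_pEx (ℓ : ℕ) : 3 ≤ pEx ℓ := Nat.le_mul_of_pos_right 3 (Nat.pow_pos two_pos)

def blockF (ℓ : ℕ) : Finset ℝ :=
  if ℓ = 1 then (Finset.range 3).image (fun k : ℕ => 1 + (k : ℝ) / 2)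
  else (Finset.range (pEx ℓ)).image (fun k : ℕ => (2 : ℝ) ^ ℓ - 1 + (k : ℝ) / ((pEx ℓ : ℝ) - 1))

lemma blockEx_coe (ℓ : ℕ) : blockEx ℓ = ↑(blockF ℓ) := by
  unfold blockEx blockF
  split <;> simp [Finset.coe_image, Finset.coe_range, Set.Iio_def]

lemma card_blockF_le (ℓ : ℕ) : (blockF ℓ).card ≤ pEx ℓ := by
  unfold blockF
  split
  · exact (Finset.card_image_le.trans (by simp)).trans (three_le_pEx ℓ)
  · exact Finset.card_image_le.trans (by simp)

lemma mem_blockEx_bounds {ℓ : ℕ} (hℓ : 1 ≤ ℓ) {x : ℝ} (hx : x ∈ blockEx ℓ) :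
    (2:ℝ)^ℓ - 1 ≤ x ∧ x ≤ (2:ℝ)^ℓ := by
  unfold blockEx at hx
  split at hx
  · subst ‹ℓ = 1›
    obtain ⟨k, hk, rfl⟩ := hx
    simp only [Set.mem_setOf_eq] at hk
    have : (k:ℝ) ≤ 2 := by exact_mod_cast Nat.lt_succ_iff.mp hk
    constructor <;> [skip; skip] <;> push_cast <;> nlinarith [Nat.cast_nonneg (α := ℝ) k]
  · obtain ⟨k, hk, rfl⟩ := hx
    simp only [Set.mem_setOf_eq] at hk
    have hp : (3:ℝ) ≤ (pEx ℓ : ℝ) := by exact_mod_cast three_le_pEx ℓ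
    have hk' : (k:ℝ) ≤ (pEx ℓ : ℝ) - 1 := by
      have : k + 1 ≤ pEx ℓ := hk
      have := (Nat.cast_le (α := ℝ)).2 this
      push_cast at this; linarith
    have hq : (0:ℝ) < (pEx ℓ : ℝ) - 1 := by linarith
    constructor
    · have : 0 ≤ (k:ℝ) / ((pEx ℓ : ℝ) - 1) := div_nonneg (by positivity) hq.le
      linarith
    · have : (k:ℝ) / ((pEx ℓ : ℝ) - 1) ≤ 1 := (div_le_one hq).2 (by linarith)
      linarith

lemma gammaEx_inter_subset {t : ℝ} {L : ℕ} (hL : ∀ ℓ : ℕ, L < ℓ → t < (2:ℝ)^ℓ - 1) :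
    gammaEx ∩ Set.Iic t ⊆ ↑((Finset.Icc 1 L).biUnion blockF) := by
  rintro x ⟨hx, hxt⟩
  simp only [gammaEx, Set.mem_iUnion, Set.mem_setOf_eq] at hx
  obtain ⟨ℓ, hℓ, hxb⟩ := hx
  have hb := mem_blockEx_bounds hℓ hxb
  have hle : ℓ ≤ L := by
    by_contra h
    exact absurd (le_trans hb.1 hxt) (not_le.2 (hL ℓ (not_le.1 h)))
  simp only [Finset.coe_biUnion, Finset.mem_coe, Finset.mem_Icc, Set.mem_iUnion]
  exact ⟨ℓ, ⟨hℓ, hle⟩, by rw [← Finset.mem_coe, ← blockEx_coe]; exact hxb⟩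

lemma sum_pEx (L : ℕ) : 2 * ∑ ℓ ∈ Finset.Icc 1 L, pEx ℓ ≤ 3 * 2 ^ L := by
  induction L with
  | zero => simp
  | succ L ih =>
    rw [Finset.sum_Icc_succ_top (by omega : 1 ≤ L + 1)]
    rcases Nat.eq_zero_or_pos L with rfl | hL
    · simp [pEx]
    · have h1 : pEx (L + 1) = 3 * 2 ^ (L - 1) := rfl
      have h2 : 2 * 2 ^ (L-1) = 2 ^ L := by
        rw [← pow_succ']
        congr 1; omega
      calc 2 * (∑ ℓ ∈ Finset.Icc 1 L, pEx ℓ + pEx (L+1))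
          = 2 * ∑ ℓ ∈ Finset.Icc 1 L, pEx ℓ + 3 * (2 * 2^(L-1)) := by rw [h1]; ring
        _ ≤ 3 * 2^L + 3 * 2^L := by rw [h2]; omega
        _ = 3 * 2^(L+1) := by ring


lemma two_pow_big (ℓ : ℕ) : (ℓ:ℝ) + 1 ≤ (2:ℝ)^ℓ := by
  have := (Nat.lt_two_pow_self (n := ℓ))
  have : (ℓ:ℕ) + 1 ≤ 2^ℓ := this
  exact_mod_cast this

lemma exists_L (t : ℝ) : ∃ L : ℕ, ∀ ℓ : ℕ, L < ℓ → t < (2:ℝ)^ℓ - 1 := by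
  refine ⟨⌈t⌉₊ + 1, fun ℓ hℓ => ?_⟩
  have h1 : t ≤ (⌈t⌉₊ : ℝ) := Nat.le_ceil t
  have h2 : ((⌈t⌉₊ + 2 : ℕ) : ℝ) ≤ (ℓ : ℝ) := by exact_mod_cast hℓ
  have := two_pow_big ℓ
  push_cast at h2
  linarith

lemma gammaEx_finite_Iic (t : ℝ) : (gammaEx ∩ Set.Iic t).Finite := by
  obtain ⟨L, hL⟩ := exists_L t
  exact Set.Finite.subset (Finset.finite_toSet _) (gammaEx_inter_subset hL)

lemma isImpulseSeq_gammaEx : IsImpulseSeq gammaEx := by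
  refine ⟨?_, gammaEx_finite_Iic⟩
  intro x hx
  simp only [gammaEx, Set.mem_iUnion, Set.mem_setOf_eq] at hx
  obtain ⟨ℓ, hℓ, hxb⟩ := hx
  have hb := (mem_blockEx_bounds hℓ hxb).1
  have : (2:ℝ)^1 ≤ (2:ℝ)^ℓ := pow_le_pow_right₀ one_le_two hℓ
  simp only [Set.mem_Ioi]
  norm_num at this
  linarith

lemma impCnt_zero_le {t : ℝ} (ht : 1 ≤ t) : (impCnt gammaEx 0 t : ℝ) ≤ 3/2 * (t + 1) := by
  set n := ⌊t + 1⌋₊ with hn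
  have hn0 : n ≠ 0 := by
    have : (1:ℕ) ≤ n := Nat.le_floor (by push_cast; linarith)
    omega
  set L := Nat.log 2 n with hLdef
  have h2L : (2:ℕ)^L ≤ n := Nat.pow_log_le_self 2 hn0
  have hlt : n < 2^(L+1) := Nat.lt_pow_succ_log_self (by norm_num) n
  have hreal : t < (2:ℝ)^(L+1) - 1 := by
    have h1 : t + 1 < (n:ℝ) + 1 := Nat.lt_floor_add_one (t+1)
    have h2 : ((n:ℕ):ℝ) + 1 ≤ ((2^(L+1) : ℕ) : ℝ) := by exact_mod_cast hlt
    push_cast at h2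
    linarith
  have hL : ∀ ℓ : ℕ, L < ℓ → t < (2:ℝ)^ℓ - 1 := by
    intro ℓ hℓ
    have : (2:ℝ)^(L+1) ≤ (2:ℝ)^ℓ := pow_le_pow_right₀ one_le_two hℓ
    linarith
  have hsub : gammaEx ∩ Set.Ioc 0 t ⊆ ↑((Finset.Icc 1 L).biUnion blockF) :=
    (Set.inter_subset_inter_right _ Set.Ioc_subset_Iic_self).trans (gammaEx_inter_subset hL)
  have hcard : impCnt gammaEx 0 t ≤ ((Finset.Icc 1 L).biUnion blockF).card := by
    rw [← Set.ncard_coe_finset]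
    exact Set.ncard_le_ncard hsub (Finset.finite_toSet _)
  have hsum : ((Finset.Icc 1 L).biUnion blockF).card ≤ ∑ ℓ ∈ Finset.Icc 1 L, pEx ℓ :=
    Finset.card_biUnion_le.trans (Finset.sum_le_sum fun ℓ _ => card_blockF_le ℓ)
  have hnat : 2 * impCnt gammaEx 0 t ≤ 3 * 2^L := by
    calc 2 * impCnt gammaEx 0 t ≤ 2 * ∑ ℓ ∈ Finset.Icc 1 L, pEx ℓ := by omega
      _ ≤ 3 * 2^L := sum_pEx L
  have hpowle : ((2:ℝ))^L ≤ t + 1 := by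
    have h2 : ((2^L : ℕ) : ℝ) ≤ (n:ℝ) := by exact_mod_cast h2L
    have h3 : (n:ℝ) ≤ t + 1 := Nat.floor_le (by linarith)
    push_cast at h2
    linarith
  have := (Nat.cast_le (α := ℝ)).2 hnat
  push_cast at this
  linarith

lemma window_lemma : ∀ T : ℝ, 0 < T → ∀ N : ℕ, ∃ s : ℝ, 0 ≤ s ∧ N ≤ impCnt gammaEx s (s + T) := by
  intro T hT N
  rcases Nat.eq_zero_or_pos N with rfl | hN
  · exact ⟨0, le_refl 0, Nat.zero_le _⟩
  set u := min T 1 with hu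
  have hu0 : 0 < u := lt_min hT one_pos
  have hu1 : u ≤ 1 := min_le_right _ _
  have huT : u ≤ T := min_le_left _ _
  set M := ⌈2 * (N:ℝ) / u⌉₊ with hM
  set ℓ := M + 2 with hℓdef
  have hℓ1 : 1 ≤ ℓ := by omega
  have hℓne : ℓ ≠ 1 := by omega
  set p := pEx ℓ with hp
  have hpM : p = 3 * 2 ^ M := by simp [hp, pEx, hℓdef]
  have hpbig : 2 * (N:ℝ) / u + 1 ≤ (p:ℝ) := by
    have h1 : 2 * (N:ℝ) / u ≤ (M:ℝ) := Nat.le_ceil _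
    have h2 : M + 1 ≤ 2 ^ M := Nat.lt_two_pow_self (n := M)
    have h3 : (M:ℝ) + 1 ≤ ((2:ℕ)^M : ℝ) := by exact_mod_cast h2
    have h4 : ((2:ℕ)^M : ℝ) ≤ (p:ℝ) := by
      have : 2^M ≤ p := by rw [hpM]; omega
      exact_mod_cast this
    linarith
  have hNp : 2 * (N:ℝ) ≤ (p:ℝ) - 1 := by
    have : 2 * (N:ℝ) ≤ 2 * (N:ℝ) / u := by
      rw [le_div_iff₀ hu0]
      nlinarith [Nat.cast_nonneg (α := ℝ) N]
    linarith
  have hN1 : (1:ℝ) ≤ (N:ℝ) := by exact_mod_cast hN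
  have hq : (0:ℝ) < (p:ℝ) - 1 := by linarith
  set s := (2:ℝ)^ℓ - 1 - u/2 with hs
  have h2ℓ : (4:ℝ) ≤ (2:ℝ)^ℓ := by
    have : (2:ℝ)^2 ≤ (2:ℝ)^ℓ := pow_le_pow_right₀ one_le_two (by omega)
    norm_num at this; linarith
  have hs0 : 0 ≤ s := by rw [hs]; linarith
  refine ⟨s, hs0, ?_⟩
  set f : ℕ → ℝ := fun k => (2:ℝ)^ℓ - 1 + (k:ℝ) / ((p:ℝ) - 1) with hf
  have hfinj : Function.Injective f := by
    intro a b hab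
    simp only [hf] at hab
    have h2 : (a:ℝ)/((p:ℝ)-1) = (b:ℝ)/((p:ℝ)-1) := by linarith
    field_simp at h2
    exact_mod_cast h2
  have hsub : f '' {k : ℕ | k < N} ⊆ gammaEx ∩ Set.Ioc s (s + T) := by
    rintro x ⟨k, hk, rfl⟩
    simp only [Set.mem_setOf_eq] at hk
    have hkN : (k:ℝ) ≤ (N:ℝ) - 1 := by
      have : k + 1 ≤ N := hk
      have := (Nat.cast_le (α := ℝ)).2 this
      push_cast at this; linarith
    have hkp : k < p := by
      have : (k:ℝ) < (p:ℝ) := by linarith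
      exact_mod_cast this
    have hdiv_nonneg : 0 ≤ (k:ℝ) / ((p:ℝ) - 1) := div_nonneg (by positivity) hq.le
    have hdiv_le : (k:ℝ) / ((p:ℝ) - 1) ≤ u / 2 := by
      have h1 : 2*(N:ℝ)/u ≤ (p:ℝ)-1 := by linarith
      have h2 : u/2 * (2*(N:ℝ)/u) ≤ u/2*((p:ℝ)-1) := by
        apply mul_le_mul_of_nonneg_left h1; linarith
      have h3 : u/2 * (2*(N:ℝ)/u) = N := by field_simp
      rw [div_le_iff₀ hq]
      linarith
    constructor
    · simp only [gammaEx, Set.mem_iUnion, Set.mem_setOf_eq]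
      refine ⟨ℓ, hℓ1, ?_⟩
      unfold blockEx
      rw [if_neg hℓne]
      exact ⟨k, hkp, rfl⟩
    · constructor
      · simp only [hf, hs]; linarith
      · simp only [hf, hs]; linarith
  have hcard : (f '' {k : ℕ | k < N}).ncard = N := by
    rw [Set.ncard_image_of_injective _ hfinj]
    rw [show {k : ℕ | k < N} = ↑(Finset.range N) by ext; simp]
    rw [Set.ncard_coe_finset, Finset.card_range]
  calc N = (f '' {k : ℕ | k < N}).ncard := hcard.symm
    _ ≤ impCnt gammaEx s (s + T) :=
        Set.ncard_le_ncard hsub ((gammaEx_finite_Iic (s+T)).subset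
          (Set.inter_subset_inter_right _ Set.Ioc_subset_Iic_self))


lemma limsup_lemma :
    Filter.limsup (fun t : ℝ => (impCnt gammaEx 0 t : ℝ≥0∞) / ENNReal.ofReal t)
        Filter.atTop ≤ (3 / 2 : ℝ≥0∞) := by
  apply ENNReal.le_of_forall_pos_le_add
  intro ε hε _
  have hεR : (0:ℝ) < (ε:ℝ) := hε
  have key : ∀ᶠ t : ℝ in atTop,
      (impCnt gammaEx 0 t : ℝ≥0∞) / ENNReal.ofReal t ≤ ENNReal.ofReal (3/2 + (ε:ℝ)) := by
    filter_upwards [eventually_ge_atTop (max 1 (3/(2*(ε:ℝ))))] with t ht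
    have ht1 : (1:ℝ) ≤ t := le_trans (le_max_left _ _) ht
    have ht2 : 3/(2*(ε:ℝ)) ≤ t := le_trans (le_max_right _ _) ht
    have hteps : (3:ℝ)/2 ≤ (ε:ℝ) * t := by
      rw [div_le_iff₀ (by positivity)] at ht2
      linarith
    have hreal : (impCnt gammaEx 0 t : ℝ) ≤ (3/2 + (ε:ℝ)) * t := by
      have := impCnt_zero_le ht1
      nlinarith
    apply ENNReal.div_le_of_le_mul
    calc (impCnt gammaEx 0 t : ℝ≥0∞) = ENNReal.ofReal ((impCnt gammaEx 0 t : ℕ):ℝ) := by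
          rw [ENNReal.ofReal_natCast]
      _ ≤ ENNReal.ofReal ((3/2 + (ε:ℝ)) * t) := ENNReal.ofReal_le_ofReal hreal
      _ = ENNReal.ofReal (3/2 + (ε:ℝ)) * ENNReal.ofReal t := ENNReal.ofReal_mul (by positivity)
  have hlim := Filter.limsup_le_of_le (by isBoundedDefault) key
  have heq : ENNReal.ofReal (3/2 + (ε:ℝ)) = (3/2 : ℝ≥0∞) + (ε : ℝ≥0∞) := by
    rw [ENNReal.ofReal_add (by norm_num) ε.coe_nonneg, ENNReal.ofReal_coe_nnreal]
    congr 1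
    rw [ENNReal.ofReal_div_of_pos (by norm_num)]
    norm_num
  rw [heq] at hlim
  exact hlim


/-- Example 1: `gammaEx` is an impulse-time sequence whose upper asymptotic impulse
frequency from time `0` is at most `3/2`, yet in every window of any fixed length `T > 0`
the number of impulses is unbounded over the window position; consequently
`gammaEx ∉ Sup(ρ)` for every `ρ > 0`. -/
theorem gammaEx_limsup_le_but_not_sup :
    IsImpulseSeq gammaEx ∧
    Filter.limsup (fun t : ℝ => (impCnt gammaEx 0 t : ℝ≥0∞) / ENNReal.ofReal t)
        Filter.atTop ≤ (3 / 2 : ℝ≥0∞) ∧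
    (∀ T : ℝ, 0 < T → ∀ N : ℕ, ∃ s : ℝ, 0 ≤ s ∧ N ≤ impCnt gammaEx s (s + T)) ∧
    (∀ ρ : ℝ, 0 < ρ → ¬ MemSup ρ gammaEx) := by
  refine ⟨isImpulseSeq_gammaEx, limsup_lemma, window_lemma, ?_⟩
  intro ρ hρ h
  obtain ⟨T, hT, hbound⟩ := h.2 1 one_pos
  obtain ⟨s, hs, hcnt⟩ := window_lemma T hT (⌈(ρ+1)*T⌉₊ + 1)
  have h3 := hbound T le_rfl s hs
  rw [div_le_iff₀ hT] at h3
  have h4 : ((⌈(ρ+1)*T⌉₊ + 1 : ℕ):ℝ) ≤ (impCnt gammaEx s (s+T) : ℝ) := by exact_mod_cast hcnt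
  have h5 : (ρ+1)*T ≤ (⌈(ρ+1)*T⌉₊:ℝ) := Nat.le_ceil _
  push_cast at h4
  linarith
end
end

section
/- Let φ be of class P and let p : ℝ≥0 → ℝ≥0 be locally integrable, and suppose there exists θ > 0 such that N := inf_{t≥0} ∫_t^{t+θ} p(s) ds > 0. Then for every t0 ≥ 0 and w0 ≥ 0 there exists a unique forward-in-time solution w : [t0,∞) → ℝ≥0 of the scalar ODE ẇ = −p(t)φ(w) with w(t0) = w0; i.e., there exists a nonnegative locally absolutely continuous function w on [t0,∞) with w(t0) = w0 satisfying w'(t) = −p(t)φ(w(t)) for almost all t ≥ t0, and any two such functions coincide on [t0,∞). -/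
open Set Filter MeasureTheory Topology
open scoped ENNReal NNReal

noncomputable section



lemma key_subst {t0 t : ℝ} (ht : t0 ≤ t) {q g Q : ℝ → ℝ}
    (hq : IntervalIntegrable q volume t0 t)
    (hq0 : ∀ s ∈ Set.Icc t0 t, 0 ≤ q s)
    (hQ : ∀ s ∈ Set.Icc t0 t, Q s = ∫ x in t0..s, q x)
    (hg : ContinuousOn g (Set.Icc 0 (Q t))) :
    ∫ s in t0..t, q s * g (Q s) = ∫ u in (0:ℝ)..(Q t), g u := by
  -- clamp
  set c : ℝ → ℝ := fun s => min (max s t0) t with hc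
  have hcmem : ∀ s, c s ∈ Icc t0 t := fun s => ⟨le_min (le_max_right _ _) ht, min_le_right _ _⟩
  have hcid : ∀ s ∈ Icc t0 t, c s = s := by
    intro s hs; simp only [hc]; rw [max_eq_left hs.1, min_eq_left hs.2]
  set R : ℝ → ℝ := fun s => ∫ x in t0..(c s), q x with hR
  have hqsub : ∀ a b : ℝ, a ∈ Icc t0 t → b ∈ Icc t0 t → IntervalIntegrable q volume a b := by
    intro a b ha hb
    exact hq.mono_set (uIcc_subset_uIcc (by rw [uIcc_of_le ht]; exact ha)
      (by rw [uIcc_of_le ht]; exact hb))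
  have hRQ : ∀ s ∈ Icc t0 t, R s = Q s := by
    intro s hs; rw [hQ s hs]; simp only [hR]; rw [hcid s hs]
  have hRdiff : ∀ a b : ℝ, a ≤ b → R b - R a = ∫ x in (c a)..(c b), q x := by
    intro a b hab
    have : (∫ x in t0..(c a), q x) + ∫ x in (c a)..(c b), q x = ∫ x in t0..(c b), q x :=
      intervalIntegral.integral_add_adjacent_intervals
        (hqsub _ _ (left_mem_Icc.2 ht) (hcmem a)) (hqsub _ _ (hcmem a) (hcmem b))
    simp only [hR]; linarith
  have hcmono : Monotone c := fun a b hab => min_le_min (max_le_max hab le_rfl) le_rfl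
  have hRmono : Monotone R := by
    intro a b hab
    have h1 := hRdiff a b hab
    have h2 : 0 ≤ ∫ x in (c a)..(c b), q x :=
      intervalIntegral.integral_nonneg (hcmono hab)
        (fun u hu => hq0 u ⟨(hcmem a).1.trans hu.1, hu.2.trans (hcmem b).2⟩)
    linarith
  have hqIcc : IntegrableOn q (Icc t0 t) volume := by
    rw [← uIcc_of_le ht]
    exact (intervalIntegrable_iff_integrableOn_Icc_of_le ht).mp hq |>.mono_set
      (by rw [uIcc_of_le ht])
  have hRcont : Continuous R := by
    have hprim : ContinuousOn (fun x => ∫ u in t0..x, q u) (Icc t0 t) := by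
      have := intervalIntegral.continuousOn_primitive_interval
        (f := q) (a := t0) (b := t) (μ := volume) (by rw [uIcc_of_le ht]; exact hqIcc)
      rwa [uIcc_of_le ht] at this
    have hcc : Continuous c := (continuous_id.max continuous_const).min continuous_const
    exact hprim.comp_continuous hcc hcmem
  have hR0 : R t0 = 0 := by
    simp only [hR]; rw [hcid t0 (left_mem_Icc.2 ht)]; exact intervalIntegral.integral_same
  have hRnn : ∀ s, 0 ≤ R s := by
    intro s
    exact intervalIntegral.integral_nonneg (hcmem s).1
      (fun u hu => hq0 u ⟨hu.1, hu.2.trans (hcmem s).2⟩)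
  have hRt : Q t = R t := (hRQ t (right_mem_Icc.2 ht)).symm
  -- the measure
  set μ : Measure ℝ :=
    (volume.restrict (Ioc t0 t)).withDensity (fun s => ((q s).toNNReal : ℝ≥0∞)) with hμ
  have hofReal : ∀ r : ℝ, ((r.toNNReal : ℝ≥0∞)) = ENNReal.ofReal r := fun _ => rfl
  have hqm : AEMeasurable (fun s => (q s).toNNReal) (volume.restrict (Ioc t0 t)) :=
    measurable_real_toNNReal.comp_aemeasurable hq.1.aestronglyMeasurable.aemeasurable
  have hq0ae : ∀ᵐ s ∂(volume.restrict (Ioc t0 t)), 0 ≤ q s := by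
    filter_upwards [ae_restrict_mem measurableSet_Ioc] with s hs
    exact hq0 s ⟨hs.1.le, hs.2⟩
  have hlint : ∀ a b : ℝ, a ∈ Icc t0 t → b ∈ Icc t0 t → a ≤ b →
      ∫⁻ s in Ioc a b, ((q s).toNNReal : ℝ≥0∞) ∂volume = ENNReal.ofReal (∫ s in Ioc a b, q s) := by
    intro a b ha hb hab
    have hint : IntegrableOn q (Ioc a b) volume := by
      exact (hqsub a b ha hb).1
    simp only [hofReal]
    refine (ofReal_integral_eq_lintegral_ofReal hint ?_).symm
    filter_upwards [ae_restrict_mem measurableSet_Ioc] with s hs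
    exact hq0 s ⟨ha.1.trans hs.1.le, hs.2.trans hb.2⟩
  have hfin : IsFiniteMeasure μ := by
    constructor
    rw [hμ, withDensity_apply _ MeasurableSet.univ, Measure.restrict_univ,
      hlint t0 t (left_mem_Icc.2 ht) (right_mem_Icc.2 ht) ht]
    exact ENNReal.ofReal_lt_top
  haveI := hfin
  have hRmeas : Measurable R := hRcont.measurable
  have hmap : Measure.map R μ = volume.restrict (Ioc 0 (R t)) := by
    refine MeasureTheory.Measure.ext_of_Iic _ _ (fun b => ?_)
    rw [Measure.map_apply hRmeas measurableSet_Iic,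
        Measure.restrict_apply measurableSet_Iic]
    rcases lt_or_ge b 0 with hb | hb
    · have h1 : R ⁻¹' (Iic b) = ∅ := by
        ext s; simp only [mem_preimage, mem_Iic, mem_empty_iff_false, iff_false, not_le]
        exact hb.trans_le (hRnn s)
      have h2 : Iic b ∩ Ioc 0 (R t) = ∅ := by
        ext x; simp only [mem_inter_iff, mem_Iic, mem_Ioc, mem_empty_iff_false, iff_false]
        rintro ⟨h1', h2', _⟩; linarith
      rw [h1, h2]; simp
    · set K := Icc t0 t ∩ R ⁻¹' (Iic b) with hK
      have hKcompact : IsCompact K := isCompact_Icc.inter_right (isClosed_Iic.preimage hRcont)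
      have hKne : K.Nonempty := ⟨t0, left_mem_Icc.2 ht, by rw [mem_preimage, mem_Iic, hR0]; exact hb⟩
      set τ := sSup K with hτ
      have hτK : τ ∈ K := hKcompact.sSup_mem hKne
      obtain ⟨hτIcc, hτb'⟩ := hτK
      have hτb : R τ ≤ b := hτb'
      have hpre : R ⁻¹' (Iic b) ∩ Ioc t0 t = Ioc t0 τ := by
        ext s
        constructor
        · rintro ⟨hs1, hs2⟩
          exact ⟨hs2.1, le_csSup hKcompact.bddAbove ⟨⟨hs2.1.le, hs2.2⟩, hs1⟩⟩
        · rintro ⟨hs1, hs2⟩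
          exact ⟨mem_Iic.2 ((hRmono hs2).trans hτb), hs1, hs2.trans hτIcc.2⟩
      have hσ : min b (R t) ∈ R '' Icc t0 t := by
        apply intermediate_value_Icc ht hRcont.continuousOn
        rw [hR0]
        exact ⟨le_min hb (hRnn t), min_le_right _ _⟩
      obtain ⟨σ, hσIcc, hσval⟩ := hσ
      have hστ : σ ≤ τ := le_csSup hKcompact.bddAbove
        ⟨hσIcc, mem_Iic.2 (hσval.le.trans (min_le_left _ _))⟩
      have hRτ : R τ = min b (R t) := le_antisymm (le_min hτb (hRmono hτIcc.2))
        (le_trans (le_of_eq hσval.symm) (hRmono hστ))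
      rw [hμ, withDensity_apply _ (hRmeas measurableSet_Iic),
          Measure.restrict_restrict (hRmeas measurableSet_Iic), hpre,
          hlint t0 τ (left_mem_Icc.2 ht) hτIcc hτIcc.1]
      have hIocτ : (∫ s in Ioc t0 τ, q s) = R τ := by
        have h' : R τ = ∫ x in t0..τ, q x := by simp only [hR]; rw [hcid τ hτIcc]
        rw [h', intervalIntegral.integral_of_le hτIcc.1]
      have hset : Iic b ∩ Ioc 0 (R t) = Ioc 0 (min b (R t)) := by
        ext x
        simp only [mem_inter_iff, mem_Iic, mem_Ioc, le_min_iff]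
        constructor
        · rintro ⟨h1, h2, h3⟩; exact ⟨h2, h1, h3⟩
        · rintro ⟨h1, h2, h3⟩; exact ⟨h2, h1, h3⟩
      rw [hIocτ, hset, Real.volume_Ioc, hRτ, sub_zero]
  have hgR : AEStronglyMeasurable g (Measure.map R μ) := by
    rw [hmap]
    exact (hg.mono (by rw [hRt]; exact Ioc_subset_Icc_self)).aestronglyMeasurable measurableSet_Ioc
  rw [hRt, intervalIntegral.integral_of_le ht, intervalIntegral.integral_of_le (hRnn t)]
  have step1 : ∫ s in Ioc t0 t, q s * g (Q s) = ∫ s, g (R s) ∂μ := by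
    rw [hμ, integral_withDensity_eq_integral_smul₀ hqm (fun s => g (R s))]
    refine (integral_congr_ae ?_).symm
    filter_upwards [ae_restrict_mem measurableSet_Ioc] with s hs
    have hsI : s ∈ Icc t0 t := ⟨hs.1.le, hs.2⟩
    rw [NNReal.smul_def, smul_eq_mul, Real.coe_toNNReal _ (hq0 s hsI), hRQ s hsI]
  rw [step1, show (volume.restrict (Ioc 0 (R t))) = Measure.map R μ from hmap.symm]
  exact (integral_map hRmeas.aemeasurable hgR).symm



structure PsiHyp (ψ : ℝ → ℝ) (w0 : ℝ) : Prop where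
  cont : Continuous ψ
  nn : ∀ r, 0 ≤ ψ r
  pos : ∀ r, 0 < r → 0 < ψ r
  zero : ψ 0 = 0
  w0pos : 0 < w0

namespace PsiHyp

variable {ψ : ℝ → ℝ} {w0 : ℝ}

def G (_ : PsiHyp ψ w0) (r : ℝ) : ℝ := ∫ u in r..w0, (ψ u)⁻¹

def S (h : PsiHyp ψ w0) (x : ℝ) : Set ℝ := {r | r ∈ Ioc 0 w0 ∧ h.G r ≤ x}

def v (h : PsiHyp ψ w0) (x : ℝ) : ℝ := sInf (h.S x)

lemma inv_contOn (h : PsiHyp ψ w0) : ContinuousOn (fun u => (ψ u)⁻¹) (Ioi 0) :=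
  h.cont.continuousOn.inv₀ fun u hu => (h.pos u hu).ne'

lemma inv_integrable (h : PsiHyp ψ w0) {a b : ℝ} (ha : 0 < a) (hb : 0 < b) :
    IntervalIntegrable (fun u => (ψ u)⁻¹) volume a b :=
  (h.inv_contOn.mono (fun x hx => lt_of_lt_of_le (lt_min ha hb) ((mem_uIcc.mp hx).elim
    (fun h' => (min_le_left a b).trans h'.1) (fun h' => (min_le_right a b).trans h'.1))
    )).intervalIntegrable

lemma G_w0 (h : PsiHyp ψ w0) : h.G w0 = 0 := intervalIntegral.integral_same

lemma G_nonneg (h : PsiHyp ψ w0) {r : ℝ} (hr : 0 < r) (hrw : r ≤ w0) : 0 ≤ h.G r :=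
  intervalIntegral.integral_nonneg hrw (fun u hu => inv_nonneg.2 (h.nn u))

lemma G_add (h : PsiHyp ψ w0) {a b : ℝ} (ha : 0 < a) (hab : a ≤ b) (hb : b ≤ w0) :
    h.G a = (∫ u in a..b, (ψ u)⁻¹) + h.G b :=
  (intervalIntegral.integral_add_adjacent_intervals
    (h.inv_integrable ha (ha.trans_le hab)) (h.inv_integrable (ha.trans_le hab) h.w0pos)).symm

lemma G_strictAnti (h : PsiHyp ψ w0) {a b : ℝ} (ha : 0 < a) (hab : a < b) (hb : b ≤ w0) : h.G b < h.G a := by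
  have hpos : 0 < ∫ u in a..b, (ψ u)⁻¹ :=
    intervalIntegral.intervalIntegral_pos_of_pos_on (h.inv_integrable ha (ha.trans hab))
      (fun u hu => inv_pos.2 (h.pos u (ha.trans hu.1))) hab
  have := h.G_add ha hab.le hb
  linarith

lemma G_anti (h : PsiHyp ψ w0) {a b : ℝ} (ha : 0 < a) (hab : a ≤ b) (hb : b ≤ w0) : h.G b ≤ h.G a := by
  rcases eq_or_lt_of_le hab with rfl | hlt
  · exact le_rfl
  · exact (h.G_strictAnti ha hlt hb).le

lemma S_nonempty (h : PsiHyp ψ w0) {x : ℝ} (hx : 0 ≤ x) : (h.S x).Nonempty :=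
  ⟨w0, ⟨h.w0pos, le_rfl⟩, by rw [h.G_w0]; exact hx⟩

lemma S_bddBelow (h : PsiHyp ψ w0) (x : ℝ) : BddBelow (h.S x) := ⟨0, fun r hr => hr.1.1.le⟩

lemma v_nonneg (h : PsiHyp ψ w0) (x : ℝ) : 0 ≤ h.v x := Real.sInf_nonneg (fun r hr => hr.1.1.le)

lemma v_le_w0 (h : PsiHyp ψ w0) {x : ℝ} (hx : 0 ≤ x) : h.v x ≤ w0 :=
  csInf_le (h.S_bddBelow x) ⟨⟨h.w0pos, le_rfl⟩, by rw [h.G_w0]; exact hx⟩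

lemma v_anti (h : PsiHyp ψ w0) {x y : ℝ} (hx : 0 ≤ x) (hxy : x ≤ y) : h.v y ≤ h.v x :=
  csInf_le_csInf (h.S_bddBelow y) (h.S_nonempty hx)
    (fun r hr => ⟨hr.1, hr.2.trans hxy⟩)

lemma G_lt_of_v_lt (h : PsiHyp ψ w0) {x r : ℝ} (hx : 0 ≤ x) (hvr : h.v x < r) (hrw : r ≤ w0) : h.G r < x := by
  obtain ⟨s, hs, hsr⟩ := exists_lt_of_csInf_lt (h.S_nonempty hx) hvr
  exact lt_of_lt_of_le (h.G_strictAnti hs.1.1 hsr hrw) hs.2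

lemma v_mem_le (h : PsiHyp ψ w0) : ∀ {x r : ℝ}, r ∈ h.S x → h.v x ≤ r := fun hr => csInf_le (h.S_bddBelow _) hr

lemma G_v_eq (h : PsiHyp ψ w0) {x : ℝ} (hx : 0 ≤ x) (hvx : 0 < h.v x) : h.G (h.v x) = x := by
  have hvw : h.v x ≤ w0 := h.v_le_w0 hx
  refine le_antisymm ?_ ?_
  · -- G (v x) ≤ x
    rcases eq_or_lt_of_le hvw with heq | hlt
    · rw [heq, h.G_w0]; exact hx
    · by_contra hgt
      push_neg at hgt
      obtain ⟨M, hM⟩ := isCompact_Icc.exists_bound_of_continuousOn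
        (h.inv_contOn.mono (fun y hy => hvx.trans_le hy.1 : Icc (h.v x) w0 ⊆ Ioi 0))
      have hM1 : 0 < M + 1 := by
        have := hM (h.v x) (left_mem_Icc.2 hvw)
        have := abs_nonneg ((ψ (h.v x))⁻¹)
        simp only [Real.norm_eq_abs] at hM ⊢
        nlinarith [hM (h.v x) (left_mem_Icc.2 hvw), abs_nonneg ((ψ (h.v x))⁻¹)]
      set η := (h.G (h.v x) - x) / 2 with hη
      have hηpos : 0 < η := by simp only [hη]; linarith
      set r := min w0 (h.v x + η / (M + 1)) with hr
      have hrv : h.v x < r := lt_min hlt (by have : 0 < η / (M+1) := div_pos hηpos hM1; linarith)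
      have hrw : r ≤ w0 := min_le_left _ _
      have hGr : h.G r < x := h.G_lt_of_v_lt hx hrv hrw
      have hadd := h.G_add hvx hrv.le hrw
      have hbound : ‖∫ u in (h.v x)..r, (ψ u)⁻¹‖ ≤ (M + 1) * |r - h.v x| := by
        apply intervalIntegral.norm_integral_le_of_norm_le_const
        intro y hy
        rw [uIoc_of_le hrv.le] at hy
        exact (hM y ⟨hy.1.le, hy.2.trans hrw⟩).trans (by linarith)
      have hsmall : |r - h.v x| ≤ η / (M + 1) := by
        rw [abs_of_nonneg (by linarith)]
        have : r ≤ h.v x + η / (M + 1) := min_le_right _ _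
        linarith
      have : (∫ u in (h.v x)..r, (ψ u)⁻¹) ≤ η := by
        calc (∫ u in (h.v x)..r, (ψ u)⁻¹) ≤ ‖∫ u in (h.v x)..r, (ψ u)⁻¹‖ := le_abs_self _
          _ ≤ (M + 1) * |r - h.v x| := hbound
          _ ≤ (M + 1) * (η / (M + 1)) := by
              apply mul_le_mul_of_nonneg_left hsmall hM1.le
          _ = η := by field_simp
      simp only [hη] at this hGr hadd ⊢
      linarith
  · -- x ≤ G (v x)
    by_contra hgt
    push_neg at hgt
    obtain ⟨M, hM⟩ := isCompact_Icc.exists_bound_of_continuousOn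
      (h.inv_contOn.mono (fun y hy => lt_of_lt_of_le (by linarith : (0:ℝ) < h.v x / 2) hy.1 :
        Icc (h.v x / 2) w0 ⊆ Ioi 0))
    have hM1 : 0 < M + 1 := by
      nlinarith [hM (h.v x / 2) (left_mem_Icc.2 (by linarith)), abs_nonneg ((ψ (h.v x / 2))⁻¹),
        (abs_nonneg ((ψ (h.v x / 2))⁻¹)).trans (hM (h.v x / 2) (left_mem_Icc.2 (by linarith)))]
    set η := x - h.G (h.v x) with hη
    have hηpos : 0 < η := by simp only [hη]; linarith
    set r := max (h.v x / 2) (h.v x - η / (M + 1)) with hr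
    have hr0 : 0 < r := lt_max_of_lt_left (by linarith)
    have hrv : r < h.v x := max_lt (by linarith) (by have h5 : 0 < η / (M+1) := div_pos hηpos hM1; linarith)
    have hrw : r ≤ w0 := hrv.le.trans hvw
    have hadd := h.G_add hr0 hrv.le hvw
    have hbound : ‖∫ u in r..(h.v x), (ψ u)⁻¹‖ ≤ (M + 1) * |h.v x - r| := by
      apply intervalIntegral.norm_integral_le_of_norm_le_const
      intro y hy
      rw [uIoc_of_le hrv.le] at hy
      refine (hM y ⟨(le_max_left _ _).trans hy.1.le, hy.2.trans hvw⟩).trans (by linarith)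
    have hsmall : |h.v x - r| ≤ η / (M + 1) := by
      rw [abs_of_nonneg (by linarith)]
      have : h.v x - η / (M + 1) ≤ r := le_max_right _ _
      linarith
    have hint : (∫ u in r..(h.v x), (ψ u)⁻¹) ≤ η := by
      calc (∫ u in r..(h.v x), (ψ u)⁻¹) ≤ ‖∫ u in r..(h.v x), (ψ u)⁻¹‖ := le_abs_self _
        _ ≤ (M + 1) * |h.v x - r| := hbound
        _ ≤ (M + 1) * (η / (M + 1)) := mul_le_mul_of_nonneg_left hsmall hM1.le
        _ = η := by field_simp
    have hrS : r ∈ h.S x := ⟨⟨hr0, hrw⟩, by simp only [hη] at hint ⊢; linarith⟩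
    exact absurd (h.v_mem_le hrS) (not_le.2 hrv)

lemma v_G (h : PsiHyp ψ w0) {r : ℝ} (hr : 0 < r) (hrw : r ≤ w0) : h.v (h.G r) = r := by
  have hSeq : h.S (h.G r) = Icc r w0 := by
    ext s
    constructor
    · rintro ⟨⟨hs0, hsw⟩, hGs⟩
      refine ⟨?_, hsw⟩
      by_contra hlt
      push_neg at hlt
      exact absurd hGs (not_le.2 (h.G_strictAnti hs0 hlt hrw))
    · rintro ⟨hrs, hsw⟩
      exact ⟨⟨hr.trans_le hrs, hsw⟩, h.G_anti hr hrs hsw⟩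
  rw [v, hSeq, csInf_Icc hrw]

lemma v_zero (h : PsiHyp ψ w0) : h.v 0 = w0 := by
  have hSeq : h.S 0 = {w0} := by
    ext s
    constructor
    · rintro ⟨⟨hs0, hsw⟩, hGs⟩
      rcases eq_or_lt_of_le hsw with rfl | hlt
      · rfl
      · exact absurd ((h.G_strictAnti hs0 hlt le_rfl).trans_le hGs)
          (not_lt.2 (by rw [h.G_w0]))
    · rintro rfl
      exact ⟨⟨h.w0pos, le_rfl⟩, by rw [h.G_w0]⟩
  rw [v, hSeq, csInf_singleton]


lemma v_cont_eps (h : PsiHyp ψ w0) {x : ℝ} (hx : 0 ≤ x) {ε : ℝ} (hε : 0 < ε) :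
    ∃ δ > 0, ∀ y, 0 ≤ y → |y - x| < δ → |h.v y - h.v x| ≤ ε := by
  have upper : ∃ δ₁ > 0, ∀ y, 0 ≤ y → x - δ₁ < y → h.v y ≤ h.v x + ε := by
    rcases lt_or_ge w0 (h.v x + ε) with hcase | hcase
    · exact ⟨1, one_pos, fun y hy _ => (h.v_le_w0 hy).trans hcase.le⟩
    · have hr0 : 0 < h.v x + ε := by linarith [h.v_nonneg x]
      have hGr : h.G (h.v x + ε) < x := h.G_lt_of_v_lt hx (by linarith) hcase
      refine ⟨x - h.G (h.v x + ε), by linarith, fun y hy hyg => ?_⟩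
      exact h.v_mem_le ⟨⟨hr0, hcase⟩, by linarith⟩
  have lower : ∃ δ₂ > 0, ∀ y, 0 ≤ y → y < x + δ₂ → h.v x - ε ≤ h.v y := by
    rcases le_or_gt (h.v x - ε) 0 with hcase | hcase
    · exact ⟨1, one_pos, fun y hy _ => hcase.trans (h.v_nonneg y)⟩
    · have hvx : 0 < h.v x := by linarith
      have hGvx := h.G_v_eq hx hvx
      have hGr : x < h.G (h.v x - ε) := by
        have := h.G_strictAnti hcase (by linarith) (h.v_le_w0 hx)
        linarith
      refine ⟨h.G (h.v x - ε) - x, by linarith, fun y hy hyl => ?_⟩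
      refine le_csInf (h.S_nonempty hy) (fun s hs => ?_)
      by_contra hslt
      push_neg at hslt
      have : h.G (h.v x - ε) ≤ h.G s := h.G_anti hs.1.1 hslt.le (by linarith [h.v_le_w0 hx])
      linarith [hs.2]
  obtain ⟨δ₁, hδ₁, hup⟩ := upper
  obtain ⟨δ₂, hδ₂, hlo⟩ := lower
  refine ⟨min δ₁ δ₂, lt_min hδ₁ hδ₂, fun y hy hyd => ?_⟩
  rw [abs_lt] at hyd
  have hmin1 : min δ₁ δ₂ ≤ δ₁ := min_le_left _ _
  have hmin2 : min δ₁ δ₂ ≤ δ₂ := min_le_right _ _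
  have h1 := hup y hy (by linarith [hyd.1])
  have h2 := hlo y hy (by linarith [hyd.2])
  rw [abs_le]
  constructor <;> linarith

lemma v_contOn (h : PsiHyp ψ w0) : ContinuousOn h.v (Ici 0) := by
  intro x hx
  rw [Metric.continuousWithinAt_iff]
  intro ε hε
  obtain ⟨δ, hδ, hp⟩ := h.v_cont_eps hx (half_pos hε)
  refine ⟨δ, hδ, fun y hy hyd => ?_⟩
  rw [Real.dist_eq] at hyd ⊢
  exact lt_of_le_of_lt (hp y hy hyd) (half_lt_self hε)

lemma v_contAt (h : PsiHyp ψ w0) {u : ℝ} (hu : 0 < u) : ContinuousAt h.v u := by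
  rw [Metric.continuousAt_iff]
  intro ε hε
  obtain ⟨δ, hδ, hp⟩ := h.v_cont_eps hu.le (half_pos hε)
  refine ⟨min δ u, lt_min hδ hu, fun {y} hyd => ?_⟩
  rw [Real.dist_eq] at hyd ⊢
  have hy0 : 0 ≤ y := by
    have := (abs_lt.1 (hyd.trans_le (min_le_right _ _))).1
    linarith
  exact lt_of_le_of_lt (hp y hy0 (hyd.trans_le (min_le_left _ _))) (half_lt_self hε)

lemma v_hasDeriv_pos (h : PsiHyp ψ w0) {u : ℝ} (hu : 0 < u) (hvu : 0 < h.v u) :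
    HasDerivAt h.v (-ψ (h.v u)) u := by
  have hψv : 0 < ψ (h.v u) := h.pos _ hvu
  have hG' : HasDerivAt h.G (-(ψ (h.v u))⁻¹) (h.v u) := by
    have hint : IntervalIntegrable (fun z => (ψ z)⁻¹) volume (h.v u) w0 :=
      h.inv_integrable hvu h.w0pos
    have hmeas : StronglyMeasurableAtFilter (fun z => (ψ z)⁻¹) (𝓝 (h.v u)) :=
      ⟨univ, univ_mem, (h.cont.measurable.inv).aestronglyMeasurable⟩
    have hca : ContinuousAt (fun z => (ψ z)⁻¹) (h.v u) := h.cont.continuousAt.inv₀ hψv.ne'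
    exact intervalIntegral.integral_hasDerivAt_left hint hmeas hca
  have hcv : ContinuousAt h.v u := h.v_contAt hu
  have hev : ∀ᶠ y in 𝓝 u, h.G (h.v y) = y := by
    have h1 : ∀ᶠ y in 𝓝 u, 0 < h.v y := hcv (Ioi_mem_nhds hvu)
    have h2 : ∀ᶠ y in 𝓝 u, 0 < y := eventually_gt_nhds hu
    filter_upwards [h1, h2] with y hy1 hy2
    exact h.G_v_eq hy2.le hy1
  have hder := HasDerivAt.of_local_left_inverse hcv hG'
    (by simp [hψv.ne']) hev
  have heq : (-(ψ (h.v u))⁻¹)⁻¹ = -ψ (h.v u) := by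
    rw [inv_neg, inv_inv]
  rwa [heq] at hder

lemma v_integral_eq (h : PsiHyp ψ w0) {x : ℝ} (hx : 0 ≤ x) :
    (∫ u in (0:ℝ)..x, ψ (h.v u)) = w0 - h.v x := by
  have hvc : ContinuousOn h.v (uIcc 0 x) :=
    h.v_contOn.mono (by rw [uIcc_of_le hx]; exact fun y hy => hy.1)
  have hderiv : ∀ u ∈ Ioo (min 0 x) (max 0 x),
      HasDerivWithinAt h.v (-ψ (h.v u)) (Ioi u) u := by
    rw [min_eq_left hx, max_eq_right hx]
    intro u hu
    rcases (h.v_nonneg u).eq_or_lt with heq | hvu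
    · have hzero : ∀ y ∈ Ioi u, h.v y = 0 := fun y hy =>
        le_antisymm (heq ▸ h.v_anti hu.1.le (le_of_lt hy)) (h.v_nonneg y)
      have hval : -ψ (h.v u) = 0 := by rw [← heq, h.zero, neg_zero]
      rw [hval]
      exact (hasDerivWithinAt_const u (Ioi u) (0:ℝ)).congr
        (fun y hy => hzero y hy) (heq.symm)
    · exact (h.v_hasDeriv_pos hu.1 hvu).hasDerivWithinAt
  have hint : IntervalIntegrable (fun u => -ψ (h.v u)) volume 0 x :=
    ((h.cont.comp_continuousOn hvc).neg).intervalIntegrable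
  have hres := intervalIntegral.integral_eq_sub_of_hasDeriv_right hvc hderiv hint
  rw [h.v_zero] at hres
  rw [intervalIntegral.integral_neg] at hres
  linarith

end PsiHyp


/-- A function of class `P`: continuous on `[0,∞)`, zero at zero, and positive on `(0,∞)`. -/
def ClassP (α : ℝ → ℝ) : Prop :=
  ContinuousOn α (Set.Ici 0) ∧ α 0 = 0 ∧ ∀ s : ℝ, 0 < s → 0 < α s

/-- `p : [0,∞) → [0,∞)` is nonnegative and locally (Lebesgue) integrable. -/
def LocIntNN (p : ℝ → ℝ) : Prop :=
  (∀ s : ℝ, 0 ≤ p s) ∧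
    ∀ a b : ℝ, 0 ≤ a → a ≤ b → IntervalIntegrable p MeasureTheory.volume a b

/-- `N = inf_{t ≥ 0} ∫_t^{t+θ} p(s) ds`. -/
def Nval (p : ℝ → ℝ) (θ : ℝ) : ℝ :=
  sInf {y : ℝ | ∃ t : ℝ, 0 ≤ t ∧ y = ∫ s in t..(t + θ), p s}

/-- `w : [t0,∞) → [0,∞)` is a (forward-in-time, globally defined) solution of the scalar
ODE `ẇ = −p(t)·φ(w)` with `w(t0) = w0`: it is nonnegative and locally absolutely
continuous with `w'(t) = −p(t)φ(w(t))` for a.e. `t ≥ t0`, encoded by the equivalent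
integral equation `w(t) = w0 − ∫_{t0}^t p(s)φ(w(s)) ds`. -/
def IsODESol (p φ : ℝ → ℝ) (t0 w0 : ℝ) (w : ℝ → ℝ) : Prop :=
  w t0 = w0 ∧ (∀ t : ℝ, t0 ≤ t → 0 ≤ w t) ∧
    ∀ t : ℝ, t0 ≤ t →
      IntervalIntegrable (fun s => p s * φ (w s)) MeasureTheory.volume t0 t ∧
      w t = w0 - ∫ s in t0..t, p s * φ (w s)

/-- Lemma 3 a): if `φ` is of class `P`, `p` is nonnegative and locally integrable, and
`N = inf_{t≥0} ∫_t^{t+θ} p > 0` for some `θ > 0`, then for every `t0 ≥ 0` and `w0 ≥ 0`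
there exists a unique forward-in-time solution `w : [t0,∞) → [0,∞)` of
`ẇ = −p(t)φ(w)`, `w(t0) = w0`. -/
theorem ode_exists_unique (φ p : ℝ → ℝ) (hφ : ClassP φ) (hp : LocIntNN p)
    (θ : ℝ) (hθ : 0 < θ) (hN : 0 < Nval p θ) :
    ∀ t0 : ℝ, 0 ≤ t0 → ∀ w0 : ℝ, 0 ≤ w0 →
      (∃ w : ℝ → ℝ, IsODESol p φ t0 w0 w) ∧
      (∀ w1 w2 : ℝ → ℝ, IsODESol p φ t0 w0 w1 → IsODESol p φ t0 w0 w2 →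
        ∀ t : ℝ, t0 ≤ t → w1 t = w2 t) := by
  intro t0 ht0 w0 hw0
  -- basic facts about φ
  have hφnn : ∀ r : ℝ, 0 ≤ r → 0 ≤ φ r := by
    intro r hr
    rcases hr.eq_or_lt with rfl | hr'
    · rw [hφ.2.1]
    · exact (hφ.2.2 r hr').le
  rcases hw0.eq_or_lt with rfl | hw0pos
  · -- trivial case w0 = 0
    constructor
    · refine ⟨fun _ => 0, rfl, fun t _ => le_rfl, fun t ht => ?_⟩
      have hz : (fun s => p s * φ (0:ℝ)) = fun _ => (0:ℝ) := by
        funext s; rw [hφ.2.1, mul_zero]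
      constructor
      · rw [hz]; exact intervalIntegrable_const
      · rw [hz]; simp
    · -- uniqueness: every solution is 0
      have hzero : ∀ w : ℝ → ℝ, IsODESol p φ t0 0 w → ∀ t, t0 ≤ t → w t = 0 := by
        intro w hw t ht
        obtain ⟨hw0', hwnn, hwint⟩ := hw
        obtain ⟨hint, heq⟩ := hwint t ht
        have hnn : 0 ≤ ∫ s in t0..t, p s * φ (w s) :=
          intervalIntegral.integral_nonneg ht
            (fun s hs => mul_nonneg (hp.1 s) (hφnn _ (hwnn s hs.1)))
        have := hwnn t ht
        linarith [heq]
      intro w1 w2 h1 h2 t ht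
      rw [hzero w1 h1 t ht, hzero w2 h2 t ht]
  -- main case w0 > 0
  set ψ : ℝ → ℝ := fun r => φ (max r 0) with hψdef
  have hψc : Continuous ψ :=
    hφ.1.comp_continuous (continuous_id.max continuous_const)
      (fun x => mem_Ici.2 (le_max_right x 0))
  have hψ0 : ψ 0 = 0 := by simp only [hψdef, max_self]; exact hφ.2.1
  have hψpos : ∀ r, 0 < r → 0 < ψ r := by
    intro r hr; simp only [hψdef]; rw [max_eq_left hr.le]; exact hφ.2.2 r hr
  have hψnn : ∀ r, 0 ≤ ψ r := by
    intro r; simp only [hψdef]; exact hφnn _ (le_max_right r 0)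
  have hφψ : ∀ r, 0 ≤ r → φ r = ψ r := by
    intro r hr; simp only [hψdef]; rw [max_eq_left hr]
  set h : PsiHyp ψ w0 := ⟨hψc, hψnn, hψpos, hψ0, hw0pos⟩ with hhdef
  -- the primitive of p
  set P : ℝ → ℝ := fun t => ∫ s in t0..(max t t0), p s with hPdef
  have hPeq : ∀ s, t0 ≤ s → P s = ∫ x in t0..s, p x := by
    intro s hs; simp only [hPdef]; rw [max_eq_left hs]
  have hP0 : P t0 = 0 := by
    simp only [hPdef]; rw [max_self]; exact intervalIntegral.integral_same
  have hPnn : ∀ t, 0 ≤ P t := by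
    intro t
    exact intervalIntegral.integral_nonneg (le_max_right t t0) (fun s _ => hp.1 s)
  have hpInt : ∀ a b : ℝ, t0 ≤ a → t0 ≤ b → IntervalIntegrable p volume a b := by
    intro a b ha hb
    have h1 := hp.2 t0 a ht0 ha
    have h2 := hp.2 t0 b ht0 hb
    exact (h1.symm.trans h2)
  have hPmono : Monotone P := by
    intro a b hab
    have hadd : P a + (∫ s in (max a t0)..(max b t0), p s) = P b := by
      simp only [hPdef]
      exact intervalIntegral.integral_add_adjacent_intervals
        (hpInt t0 (max a t0) le_rfl (le_max_right _ _))
        (hpInt (max a t0) (max b t0) (le_max_right _ _) (le_max_right _ _))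
    have hnn : 0 ≤ ∫ s in (max a t0)..(max b t0), p s :=
      intervalIntegral.integral_nonneg (max_le_max hab le_rfl) (fun s _ => hp.1 s)
    linarith
  have hPcont : Continuous P := by
    rw [continuous_iff_continuousAt]
    intro t1
    set T := max t1 t0 + 1 with hT
    have ht0T : t0 ≤ T := by
      have := le_max_right t1 t0; simp only [hT]; linarith
    have hPT : ContinuousOn (fun x => ∫ s in t0..x, p s) (Icc t0 T) := by
      have hint : IntegrableOn p (Icc t0 T) volume := by
        rw [← uIcc_of_le ht0T]
        exact (intervalIntegrable_iff_integrableOn_Icc_of_le ht0T).mp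
          (hpInt t0 T le_rfl ht0T) |>.mono_set (by rw [uIcc_of_le ht0T])
      have := intervalIntegral.continuousOn_primitive_interval
        (f := p) (a := t0) (b := T) (μ := volume) (by rw [uIcc_of_le ht0T]; exact hint)
      rwa [uIcc_of_le ht0T] at this
    have hclamp : Continuous (fun t : ℝ => min (max t t0) T) :=
      (continuous_id.max continuous_const).min continuous_const
    have hPT2 : Continuous (fun t : ℝ => ∫ s in t0..(min (max t t0) T), p s) :=
      hPT.comp_continuous hclamp
        (fun x => ⟨le_min (le_max_right _ _) ht0T, min_le_right _ _⟩)
    refine (hPT2.continuousAt).congr ?_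
    have hmem : Iio T ∈ 𝓝 t1 := Iio_mem_nhds (by simp only [hT]; linarith [le_max_left t1 t0])
    filter_upwards [hmem] with y hy
    simp only [hPdef]
    rw [min_eq_left (max_le hy.le ht0T)]
  -- the candidate solution
  set w : ℝ → ℝ := fun t => h.v (P t) with hwdef
  have hwcont : Continuous w :=
    h.v_contOn.comp_continuous hPcont (fun x => hPnn x)
  have hveq : ∀ t, φ (w t) = ψ (w t) := fun t => hφψ _ (h.v_nonneg _)
  have hsol : IsODESol p φ t0 w0 w := by
    refine ⟨?_, fun t _ => h.v_nonneg _, ?_⟩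
    · simp only [hwdef]; rw [hP0]; exact h.v_zero
    · intro t ht
      have hfun : (fun s => p s * φ (w s)) = fun s => p s * ψ (h.v (P s)) := by
        funext s; rw [hveq s]
      have hint : IntervalIntegrable (fun s => p s * φ (w s)) volume t0 t := by
        rw [hfun]
        exact (hpInt t0 t le_rfl ht).mul_continuousOn
          ((hψc.comp (h.v_contOn.comp_continuous hPcont (fun x => hPnn x))).continuousOn)
      refine ⟨hint, ?_⟩
      have hgc : ContinuousOn (fun u => ψ (h.v u)) (Icc (0:ℝ) (P t)) :=
        hψc.comp_continuousOn
          (h.v_contOn.mono (fun y (hy : y ∈ Icc (0:ℝ) (P t)) => hy.1))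
      have hsub := key_subst ht (hpInt t0 t le_rfl ht) (fun s _ => hp.1 s)
        (fun s hs => hPeq s hs.1) hgc
      have hw' : w t = w0 - ∫ u in (0:ℝ)..(P t), ψ (h.v u) := by
        rw [h.v_integral_eq (hPnn t)]
        simp only [hwdef]
        ring
      rw [hfun, hw']
      congr 1
      exact hsub.symm
  -- every solution agrees with w
  have huniq : ∀ w1 : ℝ → ℝ, IsODESol p φ t0 w0 w1 → ∀ t, t0 ≤ t → w1 t = w t := by
    intro w1 hw1 t ht
    obtain ⟨hw10, hw1nn, hw1int⟩ := hw1
    -- antitonicity of w1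
    have hw1anti : ∀ a b : ℝ, t0 ≤ a → a ≤ b → w1 b ≤ w1 a := by
      intro a b ha hab
      have hFa := (hw1int a ha).1
      have hFb := (hw1int b (ha.trans hab)).1
      have hFab : IntervalIntegrable (fun s => p s * φ (w1 s)) volume a b :=
        hFb.mono_set (uIcc_subset_uIcc (by rw [uIcc_of_le (ha.trans hab)]; exact ⟨ha, hab⟩)
          (by rw [uIcc_of_le (ha.trans hab)]; exact ⟨ha.trans hab, le_rfl⟩))
      have hadd := intervalIntegral.integral_add_adjacent_intervals hFa hFab
      have hnn : 0 ≤ ∫ s in a..b, p s * φ (w1 s) :=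
        intervalIntegral.integral_nonneg hab
          (fun s hs => mul_nonneg (hp.1 s) (hφnn _ (hw1nn s (ha.trans hs.1))))
      have hea := (hw1int a ha).2
      have heb := (hw1int b (ha.trans hab)).2
      rw [hea, heb, ← hadd]
      linarith
    have hw1le : ∀ s, t0 ≤ s → w1 s ≤ w0 := by
      intro s hs
      have := hw1anti t0 s le_rfl hs
      rwa [hw10] at this
    -- the separation identity at times where w1 > 0
    have hGw : ∀ τ, t0 ≤ τ → 0 < w1 τ → h.G (w1 τ) = P τ := by
      intro τ hτ hwτ
      have hq : IntervalIntegrable (fun s => p s * φ (w1 s)) volume t0 τ := (hw1int τ hτ).1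
      have hq0 : ∀ s ∈ Icc t0 τ, 0 ≤ p s * φ (w1 s) :=
        fun s hs => mul_nonneg (hp.1 s) (hφnn _ (hw1nn s hs.1))
      have hQ : ∀ s ∈ Icc t0 τ, w0 - w1 s = ∫ x in t0..s, p x * φ (w1 x) := by
        intro s hs
        have := (hw1int s hs.1).2
        linarith
      have hg : ContinuousOn (fun x => (ψ (w0 - x))⁻¹) (Icc 0 (w0 - w1 τ)) := by
        apply ContinuousOn.inv₀
        · exact (hψc.comp (continuous_const.sub continuous_id)).continuousOn
        · intro x hx
          exact (hψpos _ (by have := hx.2; linarith)).ne'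
      have hsub := key_subst hτ hq hq0 hQ hg
      -- left side equals P τ
      have hLHS : (∫ s in t0..τ, (p s * φ (w1 s)) * (ψ (w0 - (w0 - w1 s)))⁻¹)
          = ∫ s in t0..τ, p s := by
        apply intervalIntegral.integral_congr
        intro s hs
        rw [uIcc_of_le hτ] at hs
        have hw1s : w1 τ ≤ w1 s := hw1anti s τ hs.1 hs.2
        have hψw : 0 < ψ (w1 s) := hψpos _ (lt_of_lt_of_le hwτ hw1s)
        show (p s * φ (w1 s)) * (ψ (w0 - (w0 - w1 s)))⁻¹ = p s
        have he1 : w0 - (w0 - w1 s) = w1 s := by ring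
        rw [he1, hφψ _ (hw1nn s hs.1), mul_assoc, mul_inv_cancel₀ hψw.ne', mul_one]
      have hRHS : (∫ x in (0:ℝ)..(w0 - w1 τ), (ψ (w0 - x))⁻¹) = h.G (w1 τ) := by
        have := intervalIntegral.integral_comp_sub_left
          (a := (0:ℝ)) (b := w0 - w1 τ) (fun u => (ψ u)⁻¹) w0
        rw [this]
        have h1 : w0 - (w0 - w1 τ) = w1 τ := by ring
        have h2 : w0 - (0:ℝ) = w0 := by ring
        rw [h1, h2]
        rfl
      rw [hPeq τ hτ]
      calc h.G (w1 τ) = ∫ x in (0:ℝ)..(w0 - w1 τ), (ψ (w0 - x))⁻¹ := hRHS.symm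
        _ = ∫ s in t0..τ, (p s * φ (w1 s)) * (ψ (w0 - (w0 - w1 s)))⁻¹ := hsub.symm
        _ = ∫ s in t0..τ, p s := hLHS
    rcases (hw1nn t ht).eq_or_lt with heq | hpos
    · -- w1 t = 0 : show v (P t) = 0 as well
      have hw1c : ContinuousOn w1 (Icc t0 t) := by
        have hF : IntegrableOn (fun s => p s * φ (w1 s)) (Icc t0 t) volume := by
          rw [integrableOn_Icc_iff_integrableOn_Ioc]
          exact ((hw1int t ht).1).1
        have hprim : ContinuousOn (fun x => ∫ s in t0..x, p s * φ (w1 s)) (Icc t0 t) := by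
          have := intervalIntegral.continuousOn_primitive_interval
            (f := fun s => p s * φ (w1 s)) (a := t0) (b := t) (μ := volume)
            (by rw [uIcc_of_le ht]; exact hF)
          rwa [uIcc_of_le ht] at this
        exact (continuousOn_const.sub hprim).congr (fun s hs => (hw1int s hs.1).2)
      set K := Icc t0 t ∩ w1 ⁻¹' {0} with hKdef
      have hKclosed : IsClosed K :=
        hw1c.preimage_isClosed_of_isClosed isClosed_Icc isClosed_singleton
      have hKne : K.Nonempty := ⟨t, ⟨ht, le_rfl⟩, heq.symm⟩
      have hKbdd : BddBelow K := ⟨t0, fun s hs => hs.1.1⟩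
      set ts := sInf K with htsdef
      have htsK : ts ∈ K := hKclosed.csInf_mem hKne hKbdd
      have hts0 : w1 ts = 0 := htsK.2
      have htsIcc : ts ∈ Icc t0 t := htsK.1
      have htspos : t0 < ts := by
        rcases htsIcc.1.eq_or_lt with heq' | h'
        · exfalso; rw [← heq'] at hts0; rw [hw10] at hts0; linarith
        · exact h'
      -- v (P t) ≤ ε for every ε > 0
      have hveps : ∀ ε : ℝ, 0 < ε → h.v (P t) ≤ ε := by
        intro ε hε
        have hcw : ContinuousWithinAt w1 (Icc t0 t) ts := hw1c ts htsIcc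
        rw [Metric.continuousWithinAt_iff] at hcw
        obtain ⟨δ, hδ, hcw⟩ := hcw ε hε
        set s := max t0 (ts - δ / 2) with hsdef
        have hst0 : t0 ≤ s := le_max_left _ _
        have hsts : s < ts := max_lt htspos (by linarith)
        have hsIcc : s ∈ Icc t0 t := ⟨hst0, hsts.le.trans htsIcc.2⟩
        have hdist : dist s ts < δ := by
          rw [Real.dist_eq, abs_of_nonpos (by linarith)]
          have : ts - δ / 2 ≤ s := le_max_right _ _
          linarith
        have hws : |w1 s| < ε := by
          have := hcw hsIcc hdist
          rwa [Real.dist_eq, hts0, sub_zero] at this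
        have hwspos : 0 < w1 s := by
          rcases (hw1nn s hst0).eq_or_lt with heq'' | h''
          · exfalso
            have : s ∈ K := ⟨hsIcc, heq''.symm⟩
            have := csInf_le hKbdd this
            simp only [htsdef] at hsts
            linarith
          · exact h''
        have hGs : h.G (w1 s) = P s := hGw s hst0 hwspos
        have hmem : w1 s ∈ h.S (P t) :=
          ⟨⟨hwspos, hw1le s hst0⟩, by rw [hGs]; exact hPmono (hsIcc.2)⟩
        have := h.v_mem_le hmem
        have habs := abs_lt.1 hws
        linarith [habs.1, habs.2]
      have hv0 : h.v (P t) = 0 := by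
        by_contra hne
        have hvpos : 0 < h.v (P t) := (h.v_nonneg _).lt_of_ne (Ne.symm hne)
        have := hveps (h.v (P t) / 2) (by linarith)
        linarith
      simp only [hwdef]
      rw [hv0, ← heq]
    · -- w1 t > 0
      have hGt := hGw t ht hpos
      have := h.v_G hpos (hw1le t ht)
      simp only [hwdef]
      rw [← hGt, this]
  constructor
  · exact ⟨w, hsol⟩
  · intro w1 w2 h1 h2 t ht
    rw [huniq w1 h1 t ht, huniq w2 h2 t ht]
end
end

section
/- Let φ be of class P and let p : ℝ≥0 → ℝ≥0 be locally integrable, and suppose there exists θ > 0 such that N := inf_{t≥0} ∫_t^{t+θ} p(s) ds > 0. Then there exists β of class KL such that for every t0 ≥ 0 and w0 ≥ 0, every nonnegative locally absolutely continuous function w : [t0,∞) → ℝ≥0 with w(t0) = w0 and w'(t) = −p(t)φ(w(t)) for almost all t ≥ t0 satisfies w(t) ≤ β(w0, t − t0) for all t ≥ t0. -/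
open Set Filter MeasureTheory

noncomputable section

/-- A function of class `KL`: continuous on `[0,∞)×[0,∞)`, nonnegative there, for each fixed
`t ≥ 0` strictly increasing in the first argument with value `0` at `0`, for each fixed
`r ≥ 0` strictly decreasing in the second argument whenever positive, and tending to `0` as
the second argument tends to `∞`. -/
def ClassKL (β : ℝ → ℝ → ℝ) : Prop :=
  ContinuousOn (fun q : ℝ × ℝ => β q.1 q.2) (Set.Ici 0 ×ˢ Set.Ici 0) ∧
  (∀ r t : ℝ, 0 ≤ r → 0 ≤ t → 0 ≤ β r t) ∧
  (∀ t : ℝ, 0 ≤ t → StrictMonoOn (fun r => β r t) (Set.Ici 0) ∧ β 0 t = 0) ∧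
  (∀ r : ℝ, 0 ≤ r → ∀ t1 t2 : ℝ, 0 ≤ t1 → t1 < t2 → 0 < β r t1 → β r t2 < β r t1) ∧
  (∀ r : ℝ, 0 ≤ r → Filter.Tendsto (fun t => β r t) Filter.atTop (nhds 0))

set_option maxHeartbeats 1600000



def eta (φ : ℝ → ℝ) (s : ℝ) : ℝ := ∫ u in (1:ℝ)..s, (φ u)⁻¹

section etaLemmas
variable {φ : ℝ → ℝ} (hφ : ClassP φ)

lemma phi_contAt (hφ : ClassP φ) {s : ℝ} (hs : 0 < s) : ContinuousAt φ s :=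
  hφ.1.continuousAt (Ici_mem_nhds hs)

lemma psi_contOn (hφ : ClassP φ) : ContinuousOn (fun u => (φ u)⁻¹) (Ioi 0) := by
  intro s hs
  exact ((phi_contAt hφ hs).continuousWithinAt.inv₀ (hφ.2.2 s hs).ne')

lemma psi_intble (hφ : ClassP φ) {a b : ℝ} (ha : 0 < a) (hb : 0 < b) :
    IntervalIntegrable (fun u => (φ u)⁻¹) volume a b := by
  apply ContinuousOn.intervalIntegrable
  apply (psi_contOn hφ).mono
  intro x hx
  rcases le_total a b with h | h
  · rw [uIcc_of_le h] at hx; exact lt_of_lt_of_le ha hx.1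
  · rw [uIcc_of_ge h] at hx; exact lt_of_lt_of_le hb hx.1

lemma eta_sub (hφ : ClassP φ) {a b : ℝ} (ha : 0 < a) (hb : 0 < b) :
    eta φ b - eta φ a = ∫ u in a..b, (φ u)⁻¹ := by
  have h1 : IntervalIntegrable (fun u => (φ u)⁻¹) volume 1 a := psi_intble hφ one_pos ha
  have h2 : IntervalIntegrable (fun u => (φ u)⁻¹) volume a b := psi_intble hφ ha hb
  have := intervalIntegral.integral_add_adjacent_intervals h1 h2
  unfold eta; linarith [this]

lemma eta_strictMonoOn (hφ : ClassP φ) : StrictMonoOn (eta φ) (Ioi 0) := by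
  intro a ha b hb hab
  have : 0 < ∫ u in a..b, (φ u)⁻¹ := by
    apply intervalIntegral.intervalIntegral_pos_of_pos_on (psi_intble hφ ha hb)
    · intro x hx
      exact inv_pos.2 (hφ.2.2 x (lt_trans ha hx.1))
    · exact hab
  have := eta_sub hφ (mem_Ioi.1 ha) (mem_Ioi.1 hb)
  linarith

lemma eta_le_eta (hφ : ClassP φ) {a b : ℝ} (ha : 0 < a) (hab : a ≤ b) :
    eta φ a ≤ eta φ b := by
  rcases eq_or_lt_of_le hab with rfl | h
  · exact le_refl _
  · exact (eta_strictMonoOn hφ ha (lt_trans ha h) h).le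

lemma lt_of_eta_lt (hφ : ClassP φ) {a b : ℝ} (ha : 0 < a) (hb : 0 < b)
    (h : eta φ a < eta φ b) : a < b := by
  by_contra hc
  push_neg at hc
  exact absurd (eta_le_eta hφ hb hc) (not_le.2 h)

lemma le_of_eta_le (hφ : ClassP φ) {a b : ℝ} (ha : 0 < a) (hb : 0 < b)
    (h : eta φ a ≤ eta φ b) : a ≤ b := by
  by_contra hc
  push_neg at hc
  exact absurd (eta_strictMonoOn hφ (mem_Ioi.2 hb) (mem_Ioi.2 ha) hc) (not_lt.2 h)

lemma eta_contAt (hφ : ClassP φ) {s : ℝ} (hs : 0 < s) : ContinuousAt (eta φ) s := by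
  have h : HasDerivAt (eta φ) (φ s)⁻¹ s := by
    apply intervalIntegral.integral_hasDerivAt_right (psi_intble hφ one_pos hs)
    · have := (psi_contOn hφ).stronglyMeasurableAtFilter_nhdsWithin (μ := volume) measurableSet_Ioi s
      rwa [nhdsWithin_eq_nhds.2 (Ioi_mem_nhds hs)] at this
    · exact ((phi_contAt hφ hs).inv₀ (hφ.2.2 s hs).ne')
  exact h.continuousAt
end etaLemmas

def Gfun (φ : ℝ → ℝ) (x : ℝ) : ℝ := sSup (insert 0 {s : ℝ | 0 < s ∧ eta φ s ≤ x})

section Glemmas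
variable {φ : ℝ → ℝ}

lemma Gset_subset (hφ : ClassP φ) {x R : ℝ} (hR : 0 < R) (hx : x ≤ eta φ R) :
    {s : ℝ | 0 < s ∧ eta φ s ≤ x} ⊆ Ioc 0 R := by
  intro s hs
  exact ⟨hs.1, le_of_eta_le hφ hs.1 hR (le_trans hs.2 hx)⟩

lemma Gfun_nonneg (φ : ℝ → ℝ) (x : ℝ) (hbdd : BddAbove (insert 0 {s : ℝ | 0 < s ∧ eta φ s ≤ x})) :
    0 ≤ Gfun φ x := le_csSup hbdd (mem_insert _ _)

lemma Gfun_le (hφ : ClassP φ) {x R : ℝ} (hR : 0 < R) (hx : x ≤ eta φ R) :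
    Gfun φ x ≤ R := by
  apply csSup_le (insert_nonempty _ _)
  rintro s (rfl | hs)
  · exact hR.le
  · exact (Gset_subset hφ hR hx hs).2

lemma Gfun_bddAbove (hφ : ClassP φ) {x R : ℝ} (hR : 0 < R) (hx : x ≤ eta φ R) :
    BddAbove (insert 0 {s : ℝ | 0 < s ∧ eta φ s ≤ x}) := by
  refine ⟨R, ?_⟩
  rintro s (rfl | hs)
  · exact hR.le
  · exact (Gset_subset hφ hR hx hs).2

lemma le_Gfun (hφ : ClassP φ) {x s R : ℝ} (hs : 0 < s) (hsx : eta φ s ≤ x)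
    (hR : 0 < R) (hx : x ≤ eta φ R) : s ≤ Gfun φ x :=
  le_csSup (Gfun_bddAbove hφ hR hx) (mem_insert_of_mem _ ⟨hs, hsx⟩)

/-- if `b := Gfun φ x > 0` then `eta φ b ≤ x`. -/
lemma eta_Gfun_le (hφ : ClassP φ) {x R : ℝ} (hR : 0 < R) (hx : x ≤ eta φ R)
    (hb : 0 < Gfun φ x) : eta φ (Gfun φ x) ≤ x := by
  set b := Gfun φ x with hbdef
  by_contra hc
  push_neg at hc
  -- continuity of eta at b gives a nbhd where eta > x
  have hcont : ContinuousAt (eta φ) b := eta_contAt hφ hb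
  have hnb : (eta φ) ⁻¹' (Ioi x) ∈ nhds b := hcont.preimage_mem_nhds (Ioi_mem_nhds hc)
  rcases Metric.mem_nhds_iff.1 hnb with ⟨δ, hδ, hball⟩
  set δ' := min (δ / 2) (b / 2) with hδ'def
  have hδ' : 0 < δ' := lt_min (by linarith) (by linarith)
  have hlt : b - δ' < sSup (insert 0 {s : ℝ | 0 < s ∧ eta φ s ≤ x}) := by
    show b - δ' < Gfun φ x
    rw [← hbdef]; linarith
  obtain ⟨s, hsmem, hslt⟩ := exists_lt_of_lt_csSup (insert_nonempty _ _) hlt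
  have hsb : s ≤ b := le_csSup (Gfun_bddAbove hφ hR hx) hsmem
  rcases hsmem with rfl | hsmem
  · have : b ≤ δ' := by linarith
    have : b / 2 < b := by linarith
    have hd2 : δ' ≤ b / 2 := min_le_right _ _
    linarith
  · have hsball : s ∈ Metric.ball b δ := by
      rw [Metric.mem_ball, Real.dist_eq, abs_sub_lt_iff]
      constructor
      · linarith
      · have : δ' ≤ δ / 2 := min_le_left _ _; linarith [hδ.lt]
    have := hball hsball
    rw [mem_preimage, mem_Ioi] at this
    exact absurd hsmem.2 (not_le.2 this)

lemma Gfun_continuousAt (hφ : ClassP φ) {x₀ R : ℝ} (hR : 0 < R) (hx : x₀ < eta φ R) :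
    ContinuousAt (Gfun φ) x₀ := by
  rw [Metric.continuousAt_iff]
  intro ε hε
  set b := Gfun φ x₀ with hbdef
  have hb0 : 0 ≤ b := Gfun_nonneg φ x₀ (Gfun_bddAbove hφ hR hx.le)
  -- upper bound machinery: η(b+e) > x₀ for any e > 0
  have hup : ∀ e : ℝ, 0 < e → x₀ < eta φ (b + e) := by
    intro e he
    by_contra hc
    push_neg at hc
    have := le_Gfun hφ (by linarith : (0:ℝ) < b + e) hc hR hx.le
    rw [← hbdef] at this; linarith
  -- for x < η(b+e): G x ≤ b + e
  have hGle : ∀ e x : ℝ, 0 < e → x < eta φ (b + e) → Gfun φ x ≤ b + e := by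
    intro e x he hxe
    apply csSup_le (insert_nonempty _ _)
    rintro s (rfl | hs)
    · linarith
    · by_contra hc
      push_neg at hc
      have : eta φ (b + e) ≤ eta φ s := eta_le_eta hφ (by linarith) hc.le
      linarith [hs.2]
  by_cases hbpos : 0 < b
  · -- main case
    set e := min (ε / 2) (b / 2) with hedef
    have he : 0 < e := lt_min (by linarith) (by linarith)
    have heb : e < b := lt_of_le_of_lt (min_le_right _ _) (by linarith)
    have hetalt : eta φ (b - e) < eta φ b :=
      eta_strictMonoOn hφ (by simp; linarith) (mem_Ioi.2 hbpos) (by linarith)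
    have hetable : eta φ b ≤ x₀ := eta_Gfun_le hφ hR hx.le hbpos
    refine ⟨min (eta φ (b + e) - x₀) (x₀ - eta φ (b - e)), lt_min (by linarith [hup e he]) (by linarith), ?_⟩
    intro x hdx
    rw [Real.dist_eq, abs_sub_lt_iff] at hdx
    have hx1 : x < eta φ (b + e) := by
      have := hdx.1; have h1 : min (eta φ (b + e) - x₀) (x₀ - eta φ (b - e)) ≤ eta φ (b + e) - x₀ := min_le_left _ _
      linarith
    have hx2 : eta φ (b - e) < x := by
      have := hdx.2; have h2 : min (eta φ (b + e) - x₀) (x₀ - eta φ (b - e)) ≤ x₀ - eta φ (b - e) := min_le_right _ _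
      linarith
    have hGxle : Gfun φ x ≤ b + e := hGle e x he hx1
    have hGxge : b - e ≤ Gfun φ x := by
      apply le_Gfun hφ (by linarith : (0:ℝ) < b - e) hx2.le (by linarith : (0:ℝ) < b + e)
      exact hx1.le
    rw [Real.dist_eq, abs_sub_lt_iff]
    constructor <;> [skip; skip] <;>
      · have : e ≤ ε / 2 := min_le_left _ _
        rw [← hbdef] at *
        linarith
  · -- b = 0
    have hb : b = 0 := le_antisymm (not_lt.1 hbpos) hb0
    refine ⟨eta φ (b + ε / 2) - x₀, by linarith [hup (ε/2) (by linarith : (0:ℝ) < ε/2)], ?_⟩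
    intro x hdx
    rw [Real.dist_eq, abs_sub_lt_iff] at hdx
    have hx1 : x < eta φ (b + ε / 2) := by linarith [hdx.1]
    have hGxle : Gfun φ x ≤ b + ε / 2 := hGle (ε/2) x (by linarith) hx1
    have hGxge : 0 ≤ Gfun φ x := by
      apply Gfun_nonneg
      refine ⟨b + ε/2, ?_⟩
      rintro s (rfl | hs)
      · linarith
      · by_contra hc
        push_neg at hc
        have : eta φ (b + ε/2) ≤ eta φ s := eta_le_eta hφ (by linarith) hc.le
        linarith [hs.2]
    rw [Real.dist_eq, abs_sub_lt_iff, hb]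
    rw [hb] at hGxle
    constructor <;> [linarith; linarith]
end Glemmas

def Bfun (φ : ℝ → ℝ) (ν θ r t : ℝ) : ℝ :=
  sSup (insert 0 {s : ℝ | 0 < s ∧ s ≤ r ∧ eta φ s ≤ eta φ r - ν * max (t - θ) 0})

section Blemmas
variable {φ : ℝ → ℝ} {ν θ : ℝ}

lemma gd_nonneg (hν : 0 < ν) (t : ℝ) : 0 ≤ ν * max (t - θ) 0 :=
  mul_nonneg hν.le (le_max_right _ _)

lemma gd_mono (hν : 0 < ν) {t1 t2 : ℝ} (h : t1 ≤ t2) :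
    ν * max (t1 - θ) 0 ≤ ν * max (t2 - θ) 0 :=
  mul_le_mul_of_nonneg_left (max_le_max (by linarith) le_rfl) hν.le

lemma Bfun_bddAbove (r t : ℝ) :
    BddAbove (insert 0 {s : ℝ | 0 < s ∧ s ≤ r ∧ eta φ s ≤ eta φ r - ν * max (t - θ) 0}) := by
  refine ⟨max r 0, ?_⟩
  rintro s (rfl | hs)
  · exact le_max_right _ _
  · exact le_trans hs.2.1 (le_max_left _ _)

lemma Bfun_nonneg (r t : ℝ) : 0 ≤ Bfun φ ν θ r t :=
  le_csSup (Bfun_bddAbove r t) (mem_insert _ _)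

lemma Bfun_le (r t : ℝ) (hr : 0 ≤ r) : Bfun φ ν θ r t ≤ r := by
  apply csSup_le (insert_nonempty _ _)
  rintro s (rfl | hs)
  · exact hr
  · exact hs.2.1

lemma Bfun_zero (t : ℝ) : Bfun φ ν θ 0 t = 0 := by
  have : {s : ℝ | 0 < s ∧ s ≤ 0 ∧ eta φ s ≤ eta φ 0 - ν * max (t - θ) 0} = ∅ := by
    ext s; simp only [mem_setOf_eq, mem_empty_iff_false, iff_false]
    rintro ⟨h1, h2, -⟩; linarith
  rw [Bfun, this, LawfulSingleton.insert_empty_eq, csSup_singleton]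

lemma le_Bfun {r t s : ℝ} (hs : 0 < s) (hsr : s ≤ r)
    (h : eta φ s ≤ eta φ r - ν * max (t - θ) 0) : s ≤ Bfun φ ν θ r t :=
  le_csSup (Bfun_bddAbove r t) (mem_insert_of_mem _ ⟨hs, hsr, h⟩)

lemma Bfun_eq_Gfun (hφ : ClassP φ) (hν : 0 < ν) {r t : ℝ} (hr : 0 < r) :
    Bfun φ ν θ r t = Gfun φ (eta φ r - ν * max (t - θ) 0) := by
  unfold Bfun Gfun
  congr 2
  ext s
  simp only [mem_setOf_eq]
  constructor
  · rintro ⟨h1, h2, h3⟩; exact ⟨h1, h3⟩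
  · rintro ⟨h1, h3⟩
    refine ⟨h1, ?_, h3⟩
    apply le_of_eta_le hφ h1 hr
    linarith [gd_nonneg (θ := θ) hν t]

lemma Bfun_mono_r (hφ : ClassP φ) {r1 r2 t : ℝ} (h12 : r1 ≤ r2) :
    Bfun φ ν θ r1 t ≤ Bfun φ ν θ r2 t := by
  apply csSup_le_csSup (Bfun_bddAbove r2 t) (insert_nonempty _ _)
  rintro s (rfl | hs)
  · exact mem_insert _ _
  · refine mem_insert_of_mem _ ⟨hs.1, le_trans hs.2.1 h12, ?_⟩
    have h1 : 0 < r1 := lt_of_lt_of_le hs.1 hs.2.1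
    have := eta_le_eta hφ h1 h12
    linarith [hs.2.2]

lemma Bfun_anti_t (hν : 0 < ν) {r t1 t2 : ℝ} (h12 : t1 ≤ t2) :
    Bfun φ ν θ r t2 ≤ Bfun φ ν θ r t1 := by
  apply csSup_le_csSup (Bfun_bddAbove r t1) (insert_nonempty _ _)
  rintro s (rfl | hs)
  · exact mem_insert _ _
  · refine mem_insert_of_mem _ ⟨hs.1, hs.2.1, ?_⟩
    have := gd_mono (θ := θ) hν h12
    linarith [hs.2.2]

lemma Bfun_tendsto (hφ : ClassP φ) (hν : 0 < ν) (hθ : 0 < θ) {r : ℝ} (hr : 0 ≤ r) :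
    Tendsto (fun t => Bfun φ ν θ r t) atTop (nhds 0) := by
  rcases eq_or_lt_of_le hr with rfl | hrpos
  · simp only [Bfun_zero]; exact tendsto_const_nhds
  rw [Metric.tendsto_atTop]
  intro ε hε
  set e := min (ε / 2) (r / 2) with hedef
  have he : 0 < e := lt_min (by linarith) (by linarith)
  have her : e ≤ r := le_trans (min_le_right _ _) (by linarith)
  -- choose T with ν * (T - θ) > eta r - eta e
  set T := θ + (max (eta φ r - eta φ e) 0 + 1) / ν with hTdef
  refine ⟨T, fun t ht => ?_⟩
  have hgd : eta φ r - eta φ e < ν * max (t - θ) 0 := by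
    have h1 : ν * ((max (eta φ r - eta φ e) 0 + 1) / ν) = max (eta φ r - eta φ e) 0 + 1 := by
      field_simp
    have h2 : T - θ ≤ max (t - θ) 0 := le_trans (by linarith) (le_max_left _ _)
    have h3 : ν * (T - θ) ≤ ν * max (t - θ) 0 := mul_le_mul_of_nonneg_left h2 hν.le
    have h4 : T - θ = (max (eta φ r - eta φ e) 0 + 1) / ν := by rw [hTdef]; ring
    rw [h4, h1] at h3
    have := le_max_left (eta φ r - eta φ e) 0
    linarith
  have hBle : Bfun φ ν θ r t ≤ e := by
    apply csSup_le (insert_nonempty _ _)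
    rintro s (rfl | hs)
    · exact he.le
    · apply le_of_eta_le hφ hs.1 he
      have := hs.2.2
      linarith
  rw [Real.dist_eq, abs_sub_lt_iff]
  have := Bfun_nonneg (φ := φ) (ν := ν) (θ := θ) r t
  constructor <;> [skip; skip] <;>
    · have : e ≤ ε / 2 := min_le_left _ _
      linarith [Bfun_nonneg (φ := φ) (ν := ν) (θ := θ) r t, hBle]

lemma Bfun_continuousOn (hφ : ClassP φ) (hν : 0 < ν) (hθ : 0 < θ) :
    ContinuousOn (fun q : ℝ × ℝ => Bfun φ ν θ q.1 q.2) (Ici 0 ×ˢ Ici 0) := by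
  rintro ⟨r, t⟩ ⟨hr, ht⟩
  simp only [mem_Ici] at hr ht
  rcases eq_or_lt_of_le hr with rfl | hrpos
  · -- r = 0 : squeeze
    rw [Metric.continuousWithinAt_iff]
    intro ε hε
    refine ⟨ε / 2, by linarith, ?_⟩
    rintro ⟨r', t'⟩ ⟨hr', ht'⟩ hd
    simp only [mem_Ici] at hr' ht'
    have hdr : |r' - 0| ≤ dist ((r', t')) ((0:ℝ), t) := by
      rw [Prod.dist_eq]
      exact le_trans (le_of_eq (Real.dist_eq _ _).symm) (le_max_left _ _)
    have h1 : Bfun φ ν θ r' t' ≤ r' := Bfun_le _ _ hr'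
    have h2 : 0 ≤ Bfun φ ν θ r' t' := Bfun_nonneg _ _
    simp only [abs_sub_comm, sub_zero] at hdr
    have hr'le : r' ≤ dist ((r', t')) ((0:ℝ), t) := le_trans (le_abs_self r') hdr
    show dist (Bfun φ ν θ r' t') (Bfun φ ν θ 0 t) < ε
    rw [Bfun_zero, Real.dist_eq, abs_sub_lt_iff]
    constructor <;> [linarith; linarith]
  · -- r > 0
    have hnb : (Ioi (0:ℝ) ×ˢ (univ : Set ℝ)) ∈ nhds ((r, t) : ℝ × ℝ) :=
      prod_mem_nhds (Ioi_mem_nhds hrpos) univ_mem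
    rw [← continuousWithinAt_inter' (mem_nhdsWithin_of_mem_nhds hnb)]
    have hkey : ContinuousAt (fun q : ℝ × ℝ => Gfun φ (eta φ q.1 - ν * max (q.2 - θ) 0)) (r, t) := by
      have hinner : ContinuousAt (fun q : ℝ × ℝ => eta φ q.1 - ν * max (q.2 - θ) 0) (r, t) := by
        apply ContinuousAt.sub
        · exact ContinuousAt.comp (g := eta φ) (f := Prod.fst) (x := (r, t)) (eta_contAt hφ hrpos) continuousAt_fst
        · exact ((continuous_const.mul ((continuous_snd.sub continuous_const).max
            continuous_const)).continuousAt)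
      have hG : ContinuousAt (Gfun φ) (eta φ r - ν * max (t - θ) 0) := by
        apply Gfun_continuousAt hφ (R := r + 1) (by linarith)
        have h1 : eta φ r < eta φ (r + 1) :=
          eta_strictMonoOn hφ (mem_Ioi.2 hrpos) (mem_Ioi.2 (by linarith)) (by linarith)
        have := gd_nonneg (θ := θ) hν t
        linarith
      exact ContinuousAt.comp (g := Gfun φ) (f := fun q : ℝ × ℝ => eta φ q.1 - ν * max (q.2 - θ) 0) hG hinner
    apply hkey.continuousWithinAt.congr
    · rintro ⟨r', t'⟩ ⟨⟨hr', ht'⟩, hr'', -⟩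
      exact Bfun_eq_Gfun hφ hν (mem_Ioi.1 hr'')
    · exact Bfun_eq_Gfun hφ hν hrpos
end Blemmas

def betaFn (φ : ℝ → ℝ) (ν θ r t : ℝ) : ℝ := Bfun φ ν θ r t + r * Real.exp (-t)

lemma betaFn_classKL {φ : ℝ → ℝ} {ν θ : ℝ} (hφ : ClassP φ) (hν : 0 < ν) (hθ : 0 < θ) :
    ClassKL (betaFn φ ν θ) := by
  refine ⟨?_, ?_, ?_, ?_, ?_⟩
  · exact (Bfun_continuousOn hφ hν hθ).add
      ((continuous_fst.mul (Real.continuous_exp.comp continuous_snd.neg)).continuousOn)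
  · intro r t hr ht
    exact add_nonneg (Bfun_nonneg _ _) (mul_nonneg hr (Real.exp_pos _).le)
  · intro t ht
    constructor
    · intro r1 h1 r2 h2 h12
      have hB := Bfun_mono_r (ν := ν) (θ := θ) (t := t) hφ h12.le
      have hx : r1 * Real.exp (-t) < r2 * Real.exp (-t) :=
        mul_lt_mul_of_pos_right h12 (Real.exp_pos _)
      simp only [betaFn]
      linarith
    · simp [betaFn, Bfun_zero]
  · intro r hr t1 t2 ht1 h12 hpos
    rcases eq_or_lt_of_le hr with rfl | hrpos
    · simp [betaFn, Bfun_zero] at hpos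
    · have hB := Bfun_anti_t (φ := φ) (θ := θ) (r := r) hν h12.le
      have hx : r * Real.exp (-t2) < r * Real.exp (-t1) :=
        mul_lt_mul_of_pos_left (Real.exp_lt_exp.2 (by linarith)) hrpos
      simp only [betaFn]
      linarith
  · intro r hr
    have h1 := Bfun_tendsto (θ := θ) hφ hν hθ hr
    have h2 : Tendsto (fun t : ℝ => r * Real.exp (-t)) atTop (nhds 0) := by
      simpa using (Real.tendsto_exp_neg_atTop_nhds_zero.const_mul r)
    simpa [betaFn] using h1.add h2

section ODE
variable {φ p : ℝ → ℝ} {t0 w0 : ℝ} {w : ℝ → ℝ}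

lemma sol_f_nonneg (hφ : ClassP φ) (hp : LocIntNN p) (hw : IsODESol p φ t0 w0 w)
    {s : ℝ} (hs : t0 ≤ s) : 0 ≤ p s * φ (w s) := by
  apply mul_nonneg (hp.1 s)
  rcases eq_or_lt_of_le (hw.2.1 s hs) with h | h
  · rw [← h]; exact le_of_eq hφ.2.1.symm
  · exact (hφ.2.2 _ h).le

lemma sol_anti (hφ : ClassP φ) (hp : LocIntNN p) (hw : IsODESol p φ t0 w0 w)
    {t1 t2 : ℝ} (h1 : t0 ≤ t1) (h12 : t1 ≤ t2) : w t2 ≤ w t1 := by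
  have ha := hw.2.2 t1 h1
  have hb := hw.2.2 t2 (h1.trans h12)
  have hsub : (∫ s in t0..t2, p s * φ (w s)) - ∫ s in t0..t1, p s * φ (w s)
      = ∫ s in t1..t2, p s * φ (w s) :=
    intervalIntegral.integral_interval_sub_left hb.1 ha.1
  have hpos : 0 ≤ ∫ s in t1..t2, p s * φ (w s) :=
    intervalIntegral.integral_nonneg h12 (fun u hu => sol_f_nonneg hφ hp hw (h1.trans hu.1))
  rw [ha.2, hb.2]; linarith

lemma sol_le_w0 (hφ : ClassP φ) (hp : LocIntNN p) (hw : IsODESol p φ t0 w0 w)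
    {t : ℝ} (ht : t0 ≤ t) : w t ≤ w0 := by
  have := sol_anti hφ hp hw le_rfl ht
  rwa [hw.1] at this

lemma sol_contOn (hw : IsODESol p φ t0 w0 w) {T : ℝ} (hT : t0 ≤ T) :
    ContinuousOn w (Icc t0 T) := by
  have hi := (hw.2.2 T hT).1
  have h1 : ContinuousOn (fun b => ∫ s in t0..b, p s * φ (w s)) (uIcc t0 T) :=
    intervalIntegral.continuousOn_primitive_interval' hi left_mem_uIcc
  rw [uIcc_of_le hT] at h1
  have h2 : ContinuousOn (fun b => w0 - ∫ s in t0..b, p s * φ (w s)) (Icc t0 T) :=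
    continuousOn_const.sub h1
  apply h2.congr
  intro u hu
  exact (hw.2.2 u hu.1).2

lemma sol_sub_eq (hw : IsODESol p φ t0 w0 w) {a b : ℝ} (ha : t0 ≤ a) (hab : a ≤ b) :
    w a - w b = ∫ s in a..b, p s * φ (w s) := by
  have hA := hw.2.2 a ha
  have hB := hw.2.2 b (ha.trans hab)
  have hsub : (∫ s in t0..b, p s * φ (w s)) - ∫ s in t0..a, p s * φ (w s)
      = ∫ s in a..b, p s * φ (w s) :=
    intervalIntegral.integral_interval_sub_left hB.1 hA.1
  rw [hA.2, hB.2]; linarith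

lemma eta_drop (hφ : ClassP φ) (hp : LocIntNN p) (ht0 : 0 ≤ t0)
    (hw : IsODESol p φ t0 w0 w) {t : ℝ} (ht : t0 ≤ t) (hwt : 0 < w t) :
    ∫ s in t0..t, p s ≤ eta φ w0 - eta φ (w t) := by
  have hwle : w t ≤ w0 := sol_le_w0 hφ hp hw ht
  have hw0pos : 0 < w0 := lt_of_lt_of_le hwt hwle
  rcases eq_or_lt_of_le ht with rfl | htlt
  · rw [intervalIntegral.integral_same, hw.1]; linarith
  have hD0 : 0 ≤ eta φ w0 - eta φ (w t) := by
    have := eta_le_eta hφ hwt hwle; linarith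
  have hI0 : 0 ≤ ∫ s in t0..t, p s :=
    intervalIntegral.integral_nonneg ht (fun u _ => hp.1 u)
  -- membership of w-values in K := Icc (w t) w0
  have hwmem : ∀ u : ℝ, u ∈ Icc t0 t → w u ∈ Icc (w t) w0 := by
    intro u hu
    exact ⟨sol_anti hφ hp hw hu.1 hu.2, sol_le_w0 hφ hp hw hu.1⟩
  -- min of φ on K
  obtain ⟨z, hzmem, hzmin⟩ := isCompact_Icc.exists_isMinOn (nonempty_Icc.2 hwle)
    (hφ.1.mono (fun u hu => le_trans hwt.le hu.1 : Icc (w t) w0 ⊆ Ici 0))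
  set c := φ z with hcdef
  clear_value c
  have hc : 0 < c := hcdef ▸ hφ.2.2 z (lt_of_lt_of_le hwt hzmem.1)
  have hcle : ∀ u : ℝ, u ∈ Icc (w t) w0 → c ≤ φ u := fun u hu => hcdef ▸ hzmin hu
  -- main epsilon estimate
  have main : ∀ ε : ℝ, 0 < ε → ε < 1 →
      (1 - 2*ε) * (∫ s in t0..t, p s) ≤ eta φ w0 - eta φ (w t) := by
    intro ε hε hε1
    -- uniform continuity of φ on K
    have hUCφ := (isCompact_Icc (a := w t) (b := w0)).uniformContinuousOn_of_continuous
      (hφ.1.mono (fun u hu => le_trans hwt.le hu.1))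
    rw [Metric.uniformContinuousOn_iff] at hUCφ
    obtain ⟨δw, hδw, hφosc⟩ := hUCφ (ε * c) (mul_pos hε hc)
    -- uniform continuity of w on [t0, t]
    have hUCw := (isCompact_Icc (a := t0) (b := t)).uniformContinuousOn_of_continuous
      (sol_contOn hw ht)
    rw [Metric.uniformContinuousOn_iff] at hUCw
    obtain ⟨δt, hδt, hwosc⟩ := hUCw δw hδw
    -- partition
    obtain ⟨n, hnpos, hstep⟩ : ∃ n : ℕ, 0 < n ∧ (t - t0)/(n:ℝ) < δt := by
      refine ⟨⌈(t - t0)/δt⌉₊ + 1, Nat.succ_pos _, ?_⟩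
      have hn0 : (0:ℝ) < (⌈(t - t0)/δt⌉₊ + 1 : ℕ) := by positivity
      rw [div_lt_iff₀ hn0]
      have h1 : (t - t0)/δt < ((⌈(t - t0)/δt⌉₊ + 1 : ℕ) : ℝ) := by
        have := Nat.le_ceil ((t - t0)/δt)
        push_cast; linarith
      calc t - t0 = ((t - t0)/δt) * δt := by field_simp
        _ < ((⌈(t - t0)/δt⌉₊ + 1 : ℕ) : ℝ) * δt := mul_lt_mul_of_pos_right h1 hδt
        _ = δt * ((⌈(t - t0)/δt⌉₊ + 1 : ℕ) : ℝ) := by ring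
    have hn0 : (0:ℝ) < (n:ℝ) := by exact_mod_cast hnpos
    have hstep0 : 0 ≤ (t - t0)/(n:ℝ) := div_nonneg (by linarith) hn0.le
    obtain ⟨x, hx0, hxn, hxmono, hxmem, hba⟩ : ∃ x : ℕ → ℝ, x 0 = t0 ∧ x n = t ∧
        (∀ i : ℕ, x i ≤ x (i+1)) ∧ (∀ i : ℕ, i ≤ n → x i ∈ Icc t0 t) ∧
        (∀ i : ℕ, x (i+1) - x i = (t - t0)/(n:ℝ)) := by
      refine ⟨fun i => t0 + i * ((t - t0)/(n:ℝ)), by simp, ?_, ?_, ?_, ?_⟩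
      · show t0 + (n:ℝ) * ((t - t0)/(n:ℝ)) = t
        field_simp
        ring
      · intro i
        show t0 + (i:ℝ) * _ ≤ t0 + ((i+1:ℕ):ℝ) * _
        push_cast
        nlinarith [hstep0]
      · intro i hi
        have hin : (i:ℝ) ≤ (n:ℝ) := by exact_mod_cast hi
        have h1 : 0 ≤ (i:ℝ) * ((t - t0)/(n:ℝ)) := mul_nonneg (Nat.cast_nonneg i) hstep0
        have h2 : (i:ℝ) * ((t - t0)/(n:ℝ)) ≤ (n:ℝ) * ((t - t0)/(n:ℝ)) :=
          mul_le_mul_of_nonneg_right hin hstep0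
        have h3 : (n:ℝ) * ((t - t0)/(n:ℝ)) = t - t0 := by field_simp
        exact ⟨by simp only; linarith, by simp only; linarith⟩
      · intro i
        show (t0 + ((i+1:ℕ):ℝ) * _) - (t0 + (i:ℝ) * _) = _
        push_cast
        ring
    -- per-interval estimate
    have per : ∀ i : ℕ, i < n →
        (1 - 2*ε) * (∫ s in x i..x (i+1), p s) ≤ eta φ (w (x i)) - eta φ (w (x (i+1))) := by
      intro i hi
      set a := x i with hadef
      set b := x (i+1) with hbdef
      clear_value a b
      have hamem : a ∈ Icc t0 t := by rw [hadef]; exact hxmem i hi.le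
      have hbmem : b ∈ Icc t0 t := by rw [hbdef]; exact hxmem (i+1) hi
      have hab : a ≤ b := by rw [hadef, hbdef]; exact hxmono i
      have hab' : b - a = (t - t0)/(n:ℝ) := by rw [hadef, hbdef]; exact hba i
      set A := w a with hAdef
      set Bv := w b with hBdef
      clear_value A Bv
      have hAmem : A ∈ Icc (w t) w0 := by rw [hAdef]; exact hwmem a hamem
      have hBmem : Bv ∈ Icc (w t) w0 := by rw [hBdef]; exact hwmem b hbmem
      have hBA : Bv ≤ A := by rw [hAdef, hBdef]; exact sol_anti hφ hp hw hamem.1 hab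
      have hBpos : 0 < Bv := lt_of_lt_of_le hwt hBmem.1
      have hABδ : A - Bv < δw := by
        have hd : dist a b < δt := by
          rw [Real.dist_eq, abs_sub_lt_iff]
          constructor <;> [linarith [hstep0, hab', hstep]; linarith [hstep0, hab', hstep]]
        have h7 := hwosc a hamem b hbmem hd
        rw [Real.dist_eq, abs_sub_lt_iff] at h7
        rw [hAdef, hBdef]
        exact h7.1
      have hsubK : Icc Bv A ⊆ Icc (w t) w0 := fun u hu => ⟨le_trans hBmem.1 hu.1, le_trans hu.2 hAmem.2⟩
      have hφub : ∀ u : ℝ, u ∈ Icc Bv A → φ u < φ Bv + ε * c := by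
        intro u hu
        have hd : dist u Bv < δw := by
          rw [Real.dist_eq, abs_sub_lt_iff]
          constructor <;> [linarith [hu.1, hu.2]; linarith [hu.1, hu.2, hδw]]
        have := hφosc u (hsubK hu) Bv hBmem hd
        rw [Real.dist_eq, abs_sub_lt_iff] at this
        linarith [this.1]
      have hφlb : ∀ u : ℝ, u ∈ Icc Bv A → φ Bv - ε * c < φ u := by
        intro u hu
        have hd : dist u Bv < δw := by
          rw [Real.dist_eq, abs_sub_lt_iff]
          constructor <;> [linarith [hu.1, hu.2]; linarith [hu.1, hu.2, hδw]]
        have := hφosc u (hsubK hu) Bv hBmem hd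
        rw [Real.dist_eq, abs_sub_lt_iff] at this
        linarith [this.2]
      have hwin : ∀ u : ℝ, u ∈ Icc a b → w u ∈ Icc Bv A := by
        intro u hu
        rw [hAdef, hBdef]
        exact ⟨sol_anti hφ hp hw (le_trans hamem.1 hu.1) hu.2,
               sol_anti hφ hp hw hamem.1 hu.1⟩
      have hcB : c ≤ φ Bv := hcle Bv hBmem
      have ha0 : 0 ≤ a := le_trans ht0 hamem.1
      -- step 1 : (φ Bv - εc) * ∫ p ≤ A - Bv
      have hint_p : IntervalIntegrable p volume a b := hp.2 a b ha0 hab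
      have hint_f : IntervalIntegrable (fun s => p s * φ (w s)) volume a b := by
        have := (hw.2.2 b hbmem.1).1
        apply this.mono_set
        rw [uIcc_of_le hab, uIcc_of_le hbmem.1]
        exact Icc_subset_Icc hamem.1 le_rfl
      have hP0 : 0 ≤ ∫ s in a..b, p s :=
        intervalIntegral.integral_nonneg hab (fun u _ => hp.1 u)
      have step1 : (φ Bv - ε * c) * (∫ s in a..b, p s) ≤ A - Bv := by
        have hmono : (∫ s in a..b, (φ Bv - ε * c) * p s) ≤ ∫ s in a..b, p s * φ (w s) := by
          apply intervalIntegral.integral_mono_on hab (hint_p.const_mul _) hint_f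
          intro u hu
          have h1 := hφlb (w u) (hwin u hu)
          have h2 := hp.1 u
          nlinarith
        rw [intervalIntegral.integral_const_mul] at hmono
        have := sol_sub_eq hw hamem.1 hab
        rw [← hAdef, ← hBdef] at this
        linarith
      -- step 2 : (A - Bv) * (φ Bv + εc)⁻¹ ≤ eta A - eta Bv
      have hden : 0 < φ Bv + ε * c := by nlinarith
      have step2 : (A - Bv) * (φ Bv + ε * c)⁻¹ ≤ eta φ A - eta φ Bv := by
        have heq : eta φ A - eta φ Bv = ∫ u in Bv..A, (φ u)⁻¹ :=
          eta_sub hφ hBpos (lt_of_lt_of_le hBpos hBA)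
        have hmono : (∫ u in Bv..A, (φ Bv + ε * c)⁻¹) ≤ ∫ u in Bv..A, (φ u)⁻¹ := by
          apply intervalIntegral.integral_mono_on hBA intervalIntegrable_const
            (psi_intble hφ hBpos (lt_of_lt_of_le hBpos hBA))
          intro u hu
          have hupos : 0 < φ u := hφ.2.2 u (lt_of_lt_of_le hBpos hu.1)
          exact (inv_le_inv₀ hden hupos).mpr (le_of_lt (hφub u hu))
        rw [intervalIntegral.integral_const, smul_eq_mul] at hmono
        linarith [heq, hmono]
      -- combine
      have hkey : (1 - 2*ε) * (∫ s in a..b, p s) ≤ eta φ A - eta φ Bv := by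
        have h3 : (φ Bv - ε * c) * (∫ s in a..b, p s) * (φ Bv + ε * c)⁻¹
            ≤ (A - Bv) * (φ Bv + ε * c)⁻¹ :=
          mul_le_mul_of_nonneg_right step1 (inv_nonneg.2 hden.le)
        have h4 : (1 - 2*ε) * (∫ s in a..b, p s)
            ≤ (φ Bv - ε * c) * (∫ s in a..b, p s) * (φ Bv + ε * c)⁻¹ := by
          have hratio : (1 - 2*ε) * (φ Bv + ε * c) ≤ φ Bv - ε * c := by
            nlinarith [mul_nonneg hε.le (show (0:ℝ) ≤ φ Bv + ε * c - c by nlinarith [mul_pos hε hc])]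
          have hr2 : (1 - 2*ε) ≤ (φ Bv - ε * c) * (φ Bv + ε * c)⁻¹ := by
            rw [← div_eq_mul_inv, le_div_iff₀ hden]
            exact hratio
          calc (1 - 2*ε) * (∫ s in a..b, p s)
              ≤ ((φ Bv - ε * c) * (φ Bv + ε * c)⁻¹) * (∫ s in a..b, p s) :=
                mul_le_mul_of_nonneg_right hr2 hP0
            _ = (φ Bv - ε * c) * (∫ s in a..b, p s) * (φ Bv + ε * c)⁻¹ := by ring
        linarith
      exact hkey
    -- sum up
    have hintp : ∀ k : ℕ, k < n → IntervalIntegrable p volume (x k) (x (k+1)) := by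
      intro k hk
      exact hp.2 _ _ (le_trans ht0 (hxmem k hk.le).1) (hxmono k)
    have hsum1 : ∑ i ∈ Finset.range n, ∫ s in x i..x (i+1), p s = ∫ s in t0..t, p s := by
      rw [intervalIntegral.sum_integral_adjacent_intervals hintp, hx0, hxn]
    have hsum2 : ∑ i ∈ Finset.range n, (eta φ (w (x i)) - eta φ (w (x (i+1))))
        = eta φ w0 - eta φ (w t) := by
      rw [Finset.sum_range_sub' (f := fun i => eta φ (w (x i)))]
      rw [hx0, hxn, hw.1]
    calc (1 - 2*ε) * (∫ s in t0..t, p s)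
        = ∑ i ∈ Finset.range n, (1 - 2*ε) * ∫ s in x i..x (i+1), p s := by
          rw [← Finset.mul_sum, hsum1]
      _ ≤ ∑ i ∈ Finset.range n, (eta φ (w (x i)) - eta φ (w (x (i+1)))) :=
          Finset.sum_le_sum (fun i hi => per i (Finset.mem_range.1 hi))
      _ = eta φ w0 - eta φ (w t) := hsum2
  -- conclude from main
  by_contra hcon
  push_neg at hcon
  set D := eta φ w0 - eta φ (w t) with hDdef
  set I := ∫ s in t0..t, p s with hIdef
  clear_value D I
  have hIpos : 0 < I := lt_of_le_of_lt hD0 hcon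
  set ε := min ((I - D)/(4*I)) (1/2 : ℝ) with hεdef
  have hε : 0 < ε := lt_min (div_pos (by linarith) (by linarith)) (by norm_num)
  have hε1 : ε < 1 := lt_of_le_of_lt (min_le_right _ _) (by norm_num)
  have hεle : ε ≤ (I - D)/(4*I) := min_le_left _ _
  clear_value ε
  have h := main ε hε hε1
  have h2 : ε * I ≤ (I - D)/4 := by
    have h5 := mul_le_mul_of_nonneg_right hεle hIpos.le
    have h6 : (I - D)/(4*I) * I = (I - D)/4 := by field_simp
    linarith [h5, h6]
  nlinarith
end ODE

lemma Nval_le (hp : LocIntNN p) {θ : ℝ} (hθ : 0 < θ) {a : ℝ} (ha : 0 ≤ a) :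
    Nval p θ ≤ ∫ s in a..(a + θ), p s := by
  apply csInf_le
  · refine ⟨0, ?_⟩
    rintro y ⟨u, hu, rfl⟩
    exact intervalIntegral.integral_nonneg (by linarith) (fun s _ => hp.1 s)
  · exact ⟨a, ha, rfl⟩

lemma intp_ge (hp : LocIntNN p) {θ : ℝ} (hθ : 0 < θ) (hN : 0 < Nval p θ) {t0 t : ℝ}
    (ht0 : 0 ≤ t0) (ht : t0 ≤ t) :
    (Nval p θ / θ) * max (t - t0 - θ) 0 ≤ ∫ s in t0..t, p s := by
  set N := Nval p θ with hNdef
  clear_value N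
  have hI0 : 0 ≤ ∫ s in t0..t, p s := intervalIntegral.integral_nonneg ht (fun u _ => hp.1 u)
  by_cases hcase : t - t0 ≤ θ
  · rw [max_eq_right (by linarith)]
    simpa using hI0
  push_neg at hcase
  rw [max_eq_left (by linarith)]
  set k := ⌊(t - t0)/θ⌋₊ with hkdef
  have hdiv0 : 0 ≤ (t - t0)/θ := div_nonneg (by linarith) hθ.le
  have hkle : (k:ℝ) * θ ≤ t - t0 := by
    have := Nat.floor_le hdiv0
    rw [← hkdef] at this
    calc (k:ℝ) * θ ≤ ((t - t0)/θ) * θ := mul_le_mul_of_nonneg_right this hθ.le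
      _ = t - t0 := by field_simp
  have hkgt : t - t0 < ((k:ℝ) + 1) * θ := by
    have := Nat.lt_floor_add_one ((t - t0)/θ)
    rw [← hkdef] at this
    calc t - t0 = ((t - t0)/θ) * θ := by field_simp
      _ < ((k:ℝ) + 1) * θ := mul_lt_mul_of_pos_right this hθ
  have heach : ∀ i : ℕ, N ≤ ∫ s in (t0 + i*θ)..(t0 + (i+1)*θ), p s := by
    intro i
    have h1 : t0 + (i:ℝ)*θ + θ = t0 + ((i:ℝ)+1)*θ := by ring
    have := Nval_le (θ := θ) hp hθ (show (0:ℝ) ≤ t0 + i*θ by positivity)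
    rw [hNdef]
    convert this using 2
    ring
  have hsum : ∑ i ∈ Finset.range k, ∫ s in (t0 + i*θ)..(t0 + (i+1)*θ), p s
      = ∫ s in t0..(t0 + k*θ), p s := by
    have := intervalIntegral.sum_integral_adjacent_intervals
      (a := fun i : ℕ => t0 + i*θ) (n := k) (f := p) (μ := volume) ?_
    · simpa using this
    · intro j hj
      have hj0 : 0 ≤ (j:ℝ)*θ := mul_nonneg (Nat.cast_nonneg j) hθ.le
      apply hp.2
      · show (0:ℝ) ≤ t0 + j*θ
        linarith
      · show t0 + (j:ℝ)*θ ≤ t0 + (((j+1):ℕ):ℝ)*θ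
        push_cast
        linarith
  have hkN : (k:ℝ) * N ≤ ∫ s in t0..(t0 + k*θ), p s := by
    rw [← hsum]
    calc (k:ℝ) * N = ∑ _i ∈ Finset.range k, N := by
          rw [Finset.sum_const, Finset.card_range, nsmul_eq_mul]
      _ ≤ ∑ i ∈ Finset.range k, ∫ s in (t0 + i*θ)..(t0 + (i+1)*θ), p s :=
          Finset.sum_le_sum (fun i _ => heach i)
  have hkθ : 0 ≤ (k:ℝ)*θ := mul_nonneg (Nat.cast_nonneg k) hθ.le
  have hkt : t0 + (k:ℝ)*θ ≤ t := by linarith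
  have hsplit : ∫ s in t0..t, p s
      = (∫ s in t0..(t0 + k*θ), p s) + ∫ s in (t0 + k*θ)..t, p s := by
    rw [intervalIntegral.integral_add_adjacent_intervals]
    · exact hp.2 _ _ ht0 (by linarith)
    · exact hp.2 _ _ (by linarith) hkt
  have htail : 0 ≤ ∫ s in (t0 + k*θ)..t, p s :=
    intervalIntegral.integral_nonneg hkt (fun u _ => hp.1 u)
  have hfinal : N / θ * (t - t0 - θ) ≤ (k:ℝ) * N := by
    have h1 : t - t0 - θ ≤ (k:ℝ) * θ := by linarith
    have h2 : N / θ * (t - t0 - θ) ≤ N / θ * ((k:ℝ) * θ) :=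
      mul_le_mul_of_nonneg_left h1 (by positivity)
    have h3 : N / θ * ((k:ℝ) * θ) = (k:ℝ) * N := by field_simp
    linarith
  linarith

/-- Lemma 3 b): under the hypotheses of Lemma 3, there is a class-`KL` function `β` such
that every forward solution of `ẇ = −p(t)φ(w)` with `w(t0) = w0 ≥ 0`, `t0 ≥ 0`, satisfies
`w(t) ≤ β(w0, t − t0)` for all `t ≥ t0`. -/
theorem ode_KL_bound (φ p : ℝ → ℝ) (hφ : ClassP φ) (hp : LocIntNN p)
    (θ : ℝ) (hθ : 0 < θ) (hN : 0 < Nval p θ) :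
    ∃ β : ℝ → ℝ → ℝ, ClassKL β ∧
      ∀ t0 : ℝ, 0 ≤ t0 → ∀ w0 : ℝ, 0 ≤ w0 → ∀ w : ℝ → ℝ, IsODESol p φ t0 w0 w →
        ∀ t : ℝ, t0 ≤ t → w t ≤ β w0 (t - t0) := by
  have hν : 0 < Nval p θ / θ := div_pos hN hθ
  refine ⟨betaFn φ (Nval p θ / θ) θ, betaFn_classKL hφ hν hθ, ?_⟩
  intro t0 ht0 w0 hw0 w hw t ht
  have hwle : w t ≤ w0 := sol_le_w0 hφ hp hw ht
  have hexp : 0 ≤ w0 * Real.exp (-(t - t0)) := mul_nonneg hw0 (Real.exp_pos _).le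
  rcases eq_or_lt_of_le (hw.2.1 t ht) with h | hpos
  · rw [← h]
    exact add_nonneg (Bfun_nonneg _ _) hexp
  · have hkey := eta_drop hφ hp ht0 hw ht hpos
    have hint := intp_ge hp hθ hN ht0 ht
    have hBle : eta φ (w t) ≤ eta φ w0 - (Nval p θ / θ) * max ((t - t0) - θ) 0 := by
      have : (Nval p θ / θ) * max (t - t0 - θ) 0 ≤ ∫ s in t0..t, p s := hint
      linarith
    have hB := le_Bfun hpos hwle hBle
    show w t ≤ Bfun φ (Nval p θ / θ) θ w0 (t - t0) + w0 * Real.exp (-(t - t0))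
    linarith
end
end

section
/- Let φ, ψ be of class P and let p : ℝ≥0 → ℝ≥0 be locally integrable. Then every maximally defined solution of the comparison system is forward complete (defined on [t0,∞)). Moreover, if a solution z of the comparison system (with any γ ∈ Γ, t0 ≥ 0, z0 ≥ 0) satisfies z(s) = 0 for some s ≥ t0, then z(t) = 0 for all t ≥ s in its domain. -/
open Set Filter MeasureTheory

noncomputable section

/-- `z : [t0, T) → [0,∞)` is a solution of the comparison system
`ż(t) ∈ (−∞, −p(t)φ(z(t))]` for `t ∉ γ`, `z(t) ∈ [0, ψ(z(t⁻))]` for `t ∈ γ`,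
with `z(t0) = z0` (the right endpoint `T` is an extended real, `T = ⊤` meaning a
solution defined on all of `[t0,∞)`).  Between impulse times `z` is continuous, and its
local absolute continuity together with `z' ≤ −p·φ∘z` a.e. is encoded by the integral
inequality `z(b) − z(a) ≤ −∫_a^b p(s)φ(z(s)) ds` on impulse-free subintervals;
at each impulse time in `(t0, T)` the left limit exists and the jump condition holds. -/
structure IsCompSol (p φ ψ : ℝ → ℝ) (γ : Set ℝ) (t0 : ℝ) (T : EReal) (z0 : ℝ)
    (z : ℝ → ℝ) : Prop where
  dom : (t0 : EReal) < T
  init : z t0 = z0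
  nonneg : ∀ t : ℝ, t0 ≤ t → (t : EReal) < T → 0 ≤ z t
  flow_cont : ∀ a b : ℝ, t0 ≤ a → a ≤ b → (b : EReal) < T → γ ∩ Set.Ioc a b = ∅ →
    ContinuousOn z (Set.Icc a b)
  flow_int : ∀ a b : ℝ, t0 ≤ a → a ≤ b → (b : EReal) < T → γ ∩ Set.Ioc a b = ∅ →
    IntervalIntegrable (fun s => p s * φ (z s)) MeasureTheory.volume a b ∧
      z b - z a ≤ - ∫ s in a..b, p s * φ (z s)
  jump : ∀ τ ∈ γ, t0 < τ → (τ : EReal) < T →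
    ∃ L : ℝ, Filter.Tendsto z (nhdsWithin τ (Set.Iio τ)) (nhds L) ∧ z τ ≤ ψ L

/-- The comparison system is weakly GUAS uniformly over the family `S` of impulse-time
sequences. -/
def WeakGUAS (p φ ψ : ℝ → ℝ) (S : Set (Set ℝ)) : Prop :=
  ∃ β : ℝ → ℝ → ℝ, ClassKL β ∧
    ∀ γ ∈ S, ∀ t0 : ℝ, 0 ≤ t0 → ∀ z0 : ℝ, 0 ≤ z0 → ∀ (T : EReal) (z : ℝ → ℝ),
      IsCompSol p φ ψ γ t0 T z0 z →
        ∀ t : ℝ, t0 ≤ t → (t : EReal) < T → z t ≤ β z0 (t - t0)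

/-- The comparison system is strongly GUAS uniformly over the family `S` of impulse-time
sequences (the decay also counts the number of impulses). -/
def StrongGUAS (p φ ψ : ℝ → ℝ) (S : Set (Set ℝ)) : Prop :=
  ∃ β : ℝ → ℝ → ℝ, ClassKL β ∧
    ∀ γ ∈ S, ∀ t0 : ℝ, 0 ≤ t0 → ∀ z0 : ℝ, 0 ≤ z0 → ∀ (T : EReal) (z : ℝ → ℝ),
      IsCompSol p φ ψ γ t0 T z0 z →
        ∀ t : ℝ, t0 ≤ t → (t : EReal) < T →
          z t ≤ β z0 (t - t0 + (impCnt γ t0 t : ℝ))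

/-- `S` is uniformly incrementally bounded (UIB). -/
def UIB (S : Set (Set ℝ)) : Prop :=
  ∃ φ₀ : ℝ → ℝ, ContinuousOn φ₀ (Set.Ioi 0) ∧ MonotoneOn φ₀ (Set.Ioi 0) ∧
    ∀ γ ∈ S, ∀ s t : ℝ, 0 ≤ s → s < t → (impCnt γ s t : ℝ) ≤ φ₀ (t - s)

/-- `M = sup_{a > 0} ∫_a^{ψ(a)} ds/φ(s)`. -/
def Mval (φ ψ : ℝ → ℝ) : ℝ :=
  sSup {y : ℝ | ∃ a : ℝ, 0 < a ∧ y = ∫ s in a..(ψ a), 1 / φ s}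

/-- `z` is a maximally defined solution of the comparison system: it is a solution and
admits no proper extension which is again a solution. -/
def IsMaxCompSol (p φ ψ : ℝ → ℝ) (γ : Set ℝ) (t0 : ℝ) (T : EReal) (z0 : ℝ)
    (z : ℝ → ℝ) : Prop :=
  IsCompSol p φ ψ γ t0 T z0 z ∧
    ¬ ∃ (T' : EReal) (z' : ℝ → ℝ), T < T' ∧ IsCompSol p φ ψ γ t0 T' z0 z' ∧
        ∀ t : ℝ, t0 ≤ t → (t : EReal) < T → z' t = z t

section Helpers

variable {φ ψ p : ℝ → ℝ} {γ : Set ℝ} {t0 : ℝ} {T : EReal} {z0 : ℝ} {z : ℝ → ℝ}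

lemma ClassP.nonneg' (hφ : ClassP φ) {x : ℝ} (hx : 0 ≤ x) : 0 ≤ φ x := by
  rcases hx.eq_or_lt with h | h
  · rw [← h, hφ.2.1]
  · exact (hφ.2.2 x h).le

/-- On impulse-free intervals the solution is nonincreasing. -/
lemma sol_mono (hφ : ClassP φ) (hp : LocIntNN p)
    (hz : IsCompSol p φ ψ γ t0 T z0 z) :
    ∀ u v : ℝ, t0 ≤ u → u ≤ v → (v : EReal) < T → γ ∩ Set.Ioc u v = ∅ → z v ≤ z u := by
  intro u v hu huv hv hfree
  have h := (hz.flow_int u v hu huv hv hfree).2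
  have hnn : 0 ≤ ∫ s in u..v, p s * φ (z s) := by
    apply intervalIntegral.integral_nonneg huv
    intro s hs
    have hzs : 0 ≤ z s := hz.nonneg s (hu.trans hs.1)
      (lt_of_le_of_lt (EReal.coe_le_coe_iff.2 hs.2) hv)
    exact mul_nonneg (hp.1 s) (hφ.nonneg' hzs)
  linarith

/-- Zero propagation. -/
lemma sol_zero (hφ : ClassP φ) (hψ : ClassP ψ) (hp : LocIntNN p)
    (hγ : IsImpulseSeq γ) (hz : IsCompSol p φ ψ γ t0 T z0 z) :
    ∀ s : ℝ, t0 ≤ s → (s : EReal) < T → z s = 0 →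
      ∀ t : ℝ, s ≤ t → (t : EReal) < T → z t = 0 := by
  intro s hs hsT hzs
  have key : ∀ n : ℕ, ∀ t : ℝ, s ≤ t → (t : EReal) < T →
      (γ ∩ Set.Ioc s t).ncard ≤ n → z t = 0 := by
    intro n
    induction n with
    | zero =>
      intro t hst htT hcard
      have hfin : (γ ∩ Set.Ioc s t).Finite := (hγ.2 t).subset
        (by exact Set.inter_subset_inter_right _ Set.Ioc_subset_Iic_self)
      have hempty : γ ∩ Set.Ioc s t = ∅ :=
        (Set.ncard_eq_zero hfin).1 (Nat.le_zero.1 hcard)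
      have h1 := sol_mono hφ hp hz s t hs hst htT hempty
      have h2 := hz.nonneg t (hs.trans hst) htT
      rw [hzs] at h1; linarith
    | succ n ih =>
      intro t hst htT hcard
      set F := γ ∩ Set.Ioc s t with hF
      have hfin : F.Finite := (hγ.2 t).subset
        (by exact Set.inter_subset_inter_right _ Set.Ioc_subset_Iic_self)
      rcases Set.eq_empty_or_nonempty F with hFe | hFne
      · have h1 := sol_mono hφ hp hz s t hs hst htT hFe
        have h2 := hz.nonneg t (hs.trans hst) htT
        rw [hzs] at h1; linarith
      · set τ := sSup F with hτ
        have hτF : τ ∈ F := hFne.csSup_mem hfin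
        have hτγ : τ ∈ γ := hτF.1
        have hsτ : s < τ := hτF.2.1
        have hτt : τ ≤ t := hτF.2.2
        have hτT : (τ : EReal) < T := lt_of_le_of_lt (EReal.coe_le_coe_iff.2 hτt) htT
        -- z vanishes on [s, τ)
        have hzero : ∀ u : ℝ, s ≤ u → u < τ → z u = 0 := by
          intro u hsu huτ
          apply ih u hsu (lt_of_le_of_lt (EReal.coe_le_coe_iff.2 (huτ.le.trans hτt)) htT)
          have hsub : γ ∩ Set.Ioc s u ⊆ F \ {τ} := by
            intro x hx
            refine ⟨⟨hx.1, hx.2.1, hx.2.2.trans (huτ.le.trans hτt)⟩, ?_⟩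
            intro hxτ
            rw [Set.mem_singleton_iff] at hxτ
            exact absurd (hxτ ▸ hx.2.2) (not_le.2 huτ)
          calc (γ ∩ Set.Ioc s u).ncard ≤ (F \ {τ}).ncard :=
                Set.ncard_le_ncard hsub (hfin.subset Set.diff_subset)
            _ = F.ncard - 1 := by rw [Set.ncard_diff_singleton_of_mem hτF]
            _ ≤ n := by omega
        -- left limit at τ is 0, hence z τ = 0
        obtain ⟨L, hLlim, hLψ⟩ := hz.jump τ hτγ (lt_of_le_of_lt hs hsτ) hτT
        have hL0 : L = 0 := by
          have h0 : Filter.Tendsto z (nhdsWithin τ (Set.Iio τ)) (nhds 0) := by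
            apply Filter.Tendsto.congr' _ tendsto_const_nhds
            filter_upwards [Filter.inter_mem (self_mem_nhdsWithin)
              (mem_nhdsWithin_of_mem_nhds (Ioi_mem_nhds hsτ))] with u hu
            exact (hzero u (le_of_lt hu.2) hu.1).symm
          exact tendsto_nhds_unique hLlim h0
        have hzτ : z τ = 0 := by
          have h1 : z τ ≤ ψ 0 := hL0 ▸ hLψ
          rw [hψ.2.1] at h1
          have h2 := hz.nonneg τ (hs.trans hsτ.le) hτT
          linarith
        -- flow from τ to t
        have hfree : γ ∩ Set.Ioc τ t = ∅ := by
          ext x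
          simp only [Set.mem_inter_iff, Set.mem_Ioc, Set.mem_empty_iff_false, iff_false]
          rintro ⟨hxγ, hτx, hxt⟩
          have : x ∈ F := ⟨hxγ, hsτ.trans hτx, hxt⟩
          exact absurd (le_csSup hfin.bddAbove this) (not_le.2 hτx)
        have h1 := sol_mono hφ hp hz τ t (hs.trans hsτ.le) hτt htT hfree
        have h2 := hz.nonneg t (hs.trans hst) htT
        rw [hzτ] at h1; linarith
  intro t hst htT
  have hfin : (γ ∩ Set.Ioc s t).Finite := (hγ.2 t).subset
    (by exact Set.inter_subset_inter_right _ Set.Ioc_subset_Iic_self)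
  exact key (γ ∩ Set.Ioc s t).ncard t hst htT le_rfl
end Helpers
section GLem
variable {φ ψ p : ℝ → ℝ}

lemma gLemma (hφ : ClassP φ) (hp : LocIntNN p) {T₁ : ℝ} (hT₁ : 0 ≤ T₁)
    {c K : ℝ} (hc : 0 ≤ c) (hK0 : 0 ≤ K) (hK : ∀ x : ℝ, 0 ≤ x → x ≤ c → φ x ≤ K)
    {g : ℝ → ℝ} (hg : ∀ t, g t = max (c - K * ∫ s in T₁..t, p s) 0) :
    (∀ b, T₁ ≤ b → ContinuousOn g (Set.Icc T₁ b)) ∧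
    (∀ a b, T₁ ≤ a → a ≤ b →
      IntervalIntegrable (fun s => p s * φ (g s)) MeasureTheory.volume a b ∧
      g b - g a ≤ - ∫ s in a..b, p s * φ (g s)) := by
  set Q : ℝ → ℝ := fun t => ∫ s in T₁..t, p s with hQ
  have hpint : ∀ a b : ℝ, T₁ ≤ a → a ≤ b → IntervalIntegrable p MeasureTheory.volume a b :=
    fun a b ha hab => hp.2 a b (hT₁.trans ha) hab
  have hpint' : ∀ b, T₁ ≤ b → IntervalIntegrable p MeasureTheory.volume T₁ b :=
    fun b hb => hpint T₁ b le_rfl hb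
  have hQsub : ∀ a b : ℝ, T₁ ≤ a → a ≤ b → Q b - Q a = ∫ s in a..b, p s := by
    intro a b ha hab
    exact intervalIntegral.integral_interval_sub_left (hpint' b (ha.trans hab)) (hpint' a ha)
  have hQmono : ∀ a b : ℝ, T₁ ≤ a → a ≤ b → Q a ≤ Q b := by
    intro a b ha hab
    have h1 : 0 ≤ ∫ s in a..b, p s :=
      intervalIntegral.integral_nonneg hab (fun s _ => hp.1 s)
    have := hQsub a b ha hab; linarith
  have hQT₁ : Q T₁ = 0 := intervalIntegral.integral_same
  have hQ0 : ∀ t, T₁ ≤ t → 0 ≤ Q t := fun t ht => hQT₁ ▸ hQmono T₁ t le_rfl ht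
  have hQcont : ∀ b, T₁ ≤ b → ContinuousOn Q (Set.Icc T₁ b) := by
    intro b hb
    have h := intervalIntegral.continuousOn_primitive_interval'
      (hpint' b hb) (Set.left_mem_uIcc (a := T₁) (b := b))
    rwa [Set.uIcc_of_le hb] at h
  have hg0 : ∀ t, 0 ≤ g t := fun t => (hg t) ▸ le_max_right _ _
  have hgc : ∀ t, T₁ ≤ t → g t ≤ c := by
    intro t ht
    rw [hg]
    exact max_le (by nlinarith [hQ0 t ht]) hc
  have hφg0 : ∀ t, 0 ≤ φ (g t) := fun t => hφ.nonneg' (hg0 t)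
  have hφgK : ∀ t, T₁ ≤ t → φ (g t) ≤ K := fun t ht => hK _ (hg0 t) (hgc t ht)
  have hgcont : ∀ b, T₁ ≤ b → ContinuousOn g (Set.Icc T₁ b) := by
    intro b hb
    have hco : ContinuousOn (fun t => max (c - K * Q t) 0) (Set.Icc T₁ b) := by
      exact (continuousOn_const.sub (continuousOn_const.mul (hQcont b hb))).sup continuousOn_const
    exact hco.congr fun t _ => hg t
  refine ⟨hgcont, ?_⟩
  intro a b ha hab
  have hInt : IntervalIntegrable (fun s => p s * φ (g s)) MeasureTheory.volume a b := by
    rw [intervalIntegrable_iff_integrableOn_Ioc_of_le hab]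
    have hpI : MeasureTheory.IntegrableOn p (Set.Ioc a b) MeasureTheory.volume := by
      rw [← intervalIntegrable_iff_integrableOn_Ioc_of_le hab]; exact hpint a b ha hab
    apply MeasureTheory.Integrable.mono' (hpI.const_mul K)
    · apply MeasureTheory.AEStronglyMeasurable.mul hpI.aestronglyMeasurable
      apply ContinuousOn.aestronglyMeasurable _ measurableSet_Ioc
      apply (hφ.1.comp ((hgcont b (ha.trans hab)).mono ?_) ?_)
      · exact fun s hs => ⟨ha.trans hs.1.le, hs.2⟩
      · exact fun s _ => hg0 s
    · filter_upwards [MeasureTheory.ae_restrict_mem measurableSet_Ioc] with s hs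
      have h1 : 0 ≤ p s * φ (g s) := mul_nonneg (hp.1 s) (hφg0 s)
      rw [Real.norm_eq_abs, abs_of_nonneg h1, mul_comm K (p s)]
      exact mul_le_mul_of_nonneg_left (hφgK s (ha.trans hs.1.le)) (hp.1 s)
  refine ⟨hInt, ?_⟩
  rcases lt_or_ge (K * Q b) c with hcb | hcb
  · -- g positive on the whole interval
    have hpt : ∀ s ∈ Set.Icc a b, g s = c - K * Q s := by
      intro s hs
      rw [hg]
      apply max_eq_left
      have h1 : K * Q s ≤ K * Q b :=
        mul_le_mul_of_nonneg_left (hQmono s b (ha.trans hs.1) hs.2) hK0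
      linarith
    have h1 : ∫ s in a..b, p s * φ (g s) ≤ ∫ s in a..b, K * p s := by
      apply intervalIntegral.integral_mono_on hab hInt ((hpint a b ha hab).const_mul K)
      intro s hs
      rw [mul_comm K (p s)]
      exact mul_le_mul_of_nonneg_left (hφgK s (ha.trans hs.1)) (hp.1 s)
    have h2 : ∫ s in a..b, K * p s = K * (Q b - Q a) := by
      rw [intervalIntegral.integral_const_mul, ← hQsub a b ha hab]
    rw [hpt b ⟨hab, le_rfl⟩, hpt a ⟨le_rfl, hab⟩]
    linarith
  · rcases le_or_gt c (K * Q a) with hca | hca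
    · -- g vanishes on the whole interval
      have hpt : ∀ s ∈ Set.uIcc a b, p s * φ (g s) = 0 := by
        intro s hs
        rw [Set.uIcc_of_le hab] at hs
        have h1 : K * Q a ≤ K * Q s :=
          mul_le_mul_of_nonneg_left (hQmono a s ha hs.1) hK0
        have h2 : g s = 0 := by rw [hg]; exact max_eq_right (by linarith)
        rw [h2, hφ.2.1, mul_zero]
      have h0 : (∫ s in a..b, p s * φ (g s)) = 0 := by
        rw [intervalIntegral.integral_congr hpt, intervalIntegral.integral_zero]
      have hga : g a = 0 := by rw [hg]; exact max_eq_right (by linarith)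
      have hgb : g b = 0 := by
        rw [hg]
        apply max_eq_right
        have h1 : K * Q a ≤ K * Q b := mul_le_mul_of_nonneg_left (hQmono a b ha hab) hK0
        linarith
      rw [hga, hgb, h0]; norm_num
    · -- g crosses zero inside the interval
      have hcont : ContinuousOn (fun s => K * Q s) (Set.Icc a b) :=
        continuousOn_const.mul (((hQcont b (ha.trans hab)).mono
          (Set.Icc_subset_Icc ha le_rfl)))
      obtain ⟨r, hr, hrc⟩ : ∃ r ∈ Set.Icc a b, K * Q r = c := by
        have := intermediate_value_Icc hab hcont
        exact this ⟨hca.le, hcb⟩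
      have hIr : IntervalIntegrable (fun s => p s * φ (g s)) MeasureTheory.volume a r :=
        hInt.mono_set (by rw [Set.uIcc_of_le hab, Set.uIcc_of_le hr.1]
                          exact Set.Icc_subset_Icc le_rfl hr.2)
      have hIrb : IntervalIntegrable (fun s => p s * φ (g s)) MeasureTheory.volume r b :=
        hInt.mono_set (by rw [Set.uIcc_of_le hab, Set.uIcc_of_le hr.2]
                          exact Set.Icc_subset_Icc hr.1 le_rfl)
      have hsplit : (∫ s in a..r, p s * φ (g s)) + (∫ s in r..b, p s * φ (g s)) =
          ∫ s in a..b, p s * φ (g s) :=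
        intervalIntegral.integral_add_adjacent_intervals hIr hIrb
      have hzero : (∫ s in r..b, p s * φ (g s)) = 0 := by
        have hpt : ∀ s ∈ Set.uIcc r b, p s * φ (g s) = 0 := by
          intro s hs
          rw [Set.uIcc_of_le hr.2] at hs
          have h1 : K * Q r ≤ K * Q s :=
            mul_le_mul_of_nonneg_left (hQmono r s (ha.trans hr.1) hs.1) hK0
          have h2 : g s = 0 := by rw [hg]; exact max_eq_right (by linarith)
          rw [h2, hφ.2.1, mul_zero]
        rw [intervalIntegral.integral_congr hpt, intervalIntegral.integral_zero]
      have h1 : ∫ s in a..r, p s * φ (g s) ≤ ∫ s in a..r, K * p s := by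
        apply intervalIntegral.integral_mono_on hr.1 hIr ((hpint a r ha hr.1).const_mul K)
        intro s hs
        rw [mul_comm K (p s)]
        exact mul_le_mul_of_nonneg_left (hφgK s (ha.trans hs.1)) (hp.1 s)
      have h2 : ∫ s in a..r, K * p s = K * (Q r - Q a) := by
        rw [intervalIntegral.integral_const_mul, ← hQsub a r ha hr.1]
      have hga : g a = c - K * Q a := by rw [hg]; exact max_eq_left (by linarith)
      have hgb : g b = 0 := by rw [hg]; exact max_eq_right (by linarith)
      rw [hga, hgb]
      nlinarith [hsplit, hzero, h1, h2]
end GLem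
section Cross
variable {φ ψ p : ℝ → ℝ} {γ : Set ℝ} {t0 : ℝ} {T : EReal} {z0 : ℝ} {z : ℝ → ℝ}

lemma crossLemma (hφ : ClassP φ) (hp : LocIntNN p)
    (hz : IsCompSol p φ ψ γ t0 T z0 z) (ht0 : 0 ≤ t0)
    {T₁ : ℝ} (hTeq : T = (T₁ : EReal))
    {L : ℝ} (hL : Filter.Tendsto z (nhdsWithin T₁ (Set.Iio T₁)) (nhds L))
    {f : ℝ → ℝ} (hf : ∀ s : ℝ, s < T₁ → f s = p s * φ (z s))
    {a : ℝ} (ha : t0 ≤ a) (haT : a < T₁) (hfree : γ ∩ Set.Ioc a T₁ = ∅) :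
    IntervalIntegrable f MeasureTheory.volume a T₁ ∧ L - z a ≤ - ∫ s in a..T₁, f s := by
  have hlt : ∀ u : ℝ, u < T₁ → ((u : EReal) < T) := by
    intro u hu; rw [hTeq]; exact_mod_cast hu
  have hfree' : ∀ u : ℝ, u ≤ T₁ → γ ∩ Set.Ioc a u = ∅ := by
    intro u hu
    rw [← Set.subset_empty_iff, ← hfree]
    exact Set.inter_subset_inter_right _ (Set.Ioc_subset_Ioc_right hu)
  have hznn : ∀ u : ℝ, a ≤ u → u < T₁ → 0 ≤ z u := fun u hu huT =>
    hz.nonneg u (ha.trans hu) (hlt u huT)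
  have hzmono : ∀ u : ℝ, a ≤ u → u < T₁ → z u ≤ z a := fun u hu huT =>
    sol_mono hφ hp hz a u ha hu (hlt u huT) (hfree' u huT.le)
  have hza0 : 0 ≤ z a := hznn a le_rfl haT
  -- continuity of z on [a, T₁)
  have hzcont : ContinuousOn z (Set.Ico a T₁) := by
    intro x hx
    have hxu : x < (x + T₁) / 2 := by linarith [hx.2]
    have huT : (x + T₁) / 2 < T₁ := by linarith [hx.2]
    have h1 := hz.flow_cont a ((x + T₁) / 2) ha (hx.1.trans hxu.le) (hlt _ huT)
      (hfree' _ huT.le)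
    refine (h1 x ⟨hx.1, hxu.le⟩).mono_of_mem_nhdsWithin ?_
    refine Filter.mem_of_superset
      (inter_mem_nhdsWithin (Set.Ico a T₁) (Iio_mem_nhds hxu)) ?_
    rintro y ⟨hy1, hy2⟩
    exact ⟨hy1.1, hy2.le⟩
  -- a bound for φ on [0, z a]
  obtain ⟨Ca, hCa⟩ := (isCompact_Icc (a := (0:ℝ)) (b := z a)).exists_bound_of_continuousOn
    (hφ.1.mono (fun x hx => hx.1))
  -- integrability on (a, T₁)
  have hpI : MeasureTheory.IntegrableOn p (Set.Ioo a T₁) MeasureTheory.volume := by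
    have := hp.2 a T₁ (ht0.trans ha) haT.le
    rw [intervalIntegrable_iff_integrableOn_Ioc_of_le haT.le] at this
    exact this.mono_set Set.Ioo_subset_Ioc_self
  have hIoo : MeasureTheory.IntegrableOn f (Set.Ioo a T₁) MeasureTheory.volume := by
    apply MeasureTheory.Integrable.mono' (hpI.const_mul Ca)
    · apply MeasureTheory.AEStronglyMeasurable.congr
        (f := fun s => p s * φ (z s))
      · apply MeasureTheory.AEStronglyMeasurable.mul hpI.aestronglyMeasurable
        apply ContinuousOn.aestronglyMeasurable _ measurableSet_Ioo
        apply hφ.1.comp (hzcont.mono Set.Ioo_subset_Ico_self)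
        exact fun s hs => hznn s hs.1.le hs.2
      · filter_upwards [MeasureTheory.ae_restrict_mem measurableSet_Ioo] with s hs
        exact (hf s hs.2).symm
    · filter_upwards [MeasureTheory.ae_restrict_mem measurableSet_Ioo] with s hs
      rw [hf s hs.2]
      have h1 : 0 ≤ φ (z s) := hφ.nonneg' (hznn s hs.1.le hs.2)
      have h2 : 0 ≤ p s * φ (z s) := mul_nonneg (hp.1 s) h1
      rw [Real.norm_eq_abs, abs_of_nonneg h2, mul_comm Ca (p s)]
      apply mul_le_mul_of_nonneg_left _ (hp.1 s)
      calc φ (z s) ≤ |φ (z s)| := le_abs_self _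
        _ ≤ Ca := by
            have := hCa (z s) ⟨hznn s hs.1.le hs.2, hzmono s hs.1.le hs.2⟩
            rwa [Real.norm_eq_abs] at this
  have hIint : IntervalIntegrable f MeasureTheory.volume a T₁ := by
    rw [intervalIntegrable_iff_integrableOn_Ioc_of_le haT.le,
      integrableOn_Ioc_iff_integrableOn_Ioo]
    exact hIoo
  refine ⟨hIint, ?_⟩
  -- limit of the primitive
  have hprim : Filter.Tendsto (fun u => ∫ s in a..u, f s) (nhdsWithin T₁ (Set.Iio T₁))
      (nhds (∫ s in a..T₁, f s)) := by
    have h1 := intervalIntegral.continuousOn_primitive_interval' hIint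
      (Set.left_mem_uIcc (a := a) (b := T₁))
    rw [Set.uIcc_of_le haT.le] at h1
    have h2 := h1 T₁ (Set.right_mem_Icc.2 haT.le)
    refine h2.tendsto.mono_left ?_
    rw [← nhdsWithin_Ioo_eq_nhdsLT haT]
    exact nhdsWithin_mono _ Set.Ioo_subset_Icc_self
  have hev : ∀ᶠ u in nhdsWithin T₁ (Set.Iio T₁),
      z u - z a + ∫ s in a..u, f s ≤ 0 := by
    filter_upwards [Ioo_mem_nhdsLT haT] with u hu
    have h1 := (hz.flow_int a u ha hu.1.le (hlt u hu.2) (hfree' u hu.2.le)).2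
    have h2 : (∫ s in a..u, f s) = ∫ s in a..u, p s * φ (z s) := by
      apply intervalIntegral.integral_congr
      intro s hs
      rw [Set.uIcc_of_le hu.1.le] at hs
      exact hf s (lt_of_le_of_lt hs.2 hu.2)
    linarith
  have hfin := le_of_tendsto ((hL.sub tendsto_const_nhds).add hprim) hev
  linarith
end Cross
/-- Lemma 4: if `φ, ψ` are of class `P` and `p` is nonnegative and locally integrable, then
every maximally defined solution of the comparison system is forward complete
(`T = ∞`); moreover, if a solution vanishes at some time `s ≥ t0`, it vanishes at every
later time of its domain. -/
theorem compSol_complete_and_zero (φ ψ p : ℝ → ℝ) (hφ : ClassP φ) (hψ : ClassP ψ)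
    (hp : LocIntNN p) :
    (∀ (γ : Set ℝ) (t0 : ℝ) (T : EReal) (z0 : ℝ) (z : ℝ → ℝ),
      IsImpulseSeq γ → 0 ≤ t0 → 0 ≤ z0 →
        IsMaxCompSol p φ ψ γ t0 T z0 z → T = ⊤) ∧
    (∀ (γ : Set ℝ) (t0 : ℝ) (T : EReal) (z0 : ℝ) (z : ℝ → ℝ),
      IsImpulseSeq γ → 0 ≤ t0 → 0 ≤ z0 → IsCompSol p φ ψ γ t0 T z0 z →
        ∀ s : ℝ, t0 ≤ s → (s : EReal) < T → z s = 0 →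
          ∀ t : ℝ, s ≤ t → (t : EReal) < T → z t = 0) := by
  constructor
  · intro γ t0 T z0 z hγ ht0 hz0 hmax
    classical
    obtain ⟨hz, hnoext⟩ := hmax
    by_contra hTtop
    have hTbot : T ≠ ⊥ := fun h => absurd (h ▸ hz.dom) (by simp)
    obtain ⟨T₁, hTeq⟩ : ∃ T₁ : ℝ, T = (T₁ : EReal) :=
      ⟨T.toReal, (EReal.coe_toReal hTtop hTbot).symm⟩
    subst hTeq
    have ht0T : t0 < T₁ := by exact_mod_cast hz.dom
    have hT₁0 : 0 ≤ T₁ := ht0.trans ht0T.le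
    have hlt : ∀ u : ℝ, u < T₁ → (u : EReal) < (T₁ : EReal) := fun u h =>
      EReal.coe_lt_coe_iff.2 h
    -- last impulse before T₁
    obtain ⟨a0, ha00, ha01, ha02⟩ :
        ∃ a0 : ℝ, t0 ≤ a0 ∧ a0 < T₁ ∧ γ ∩ Set.Ioo a0 T₁ = ∅ := by
      rcases Set.eq_empty_or_nonempty (γ ∩ Set.Ioo t0 T₁) with he | hne
      · exact ⟨t0, le_rfl, ht0T, he⟩
      · have hfin : (γ ∩ Set.Ioo t0 T₁).Finite := (hγ.2 T₁).subset
          (Set.inter_subset_inter_right _ (fun x hx => hx.2.le))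
        have hmem := hne.csSup_mem hfin
        refine ⟨sSup (γ ∩ Set.Ioo t0 T₁), hmem.2.1.le, hmem.2.2, ?_⟩
        ext x
        simp only [Set.mem_inter_iff, Set.mem_Ioo, Set.mem_empty_iff_false, iff_false]
        rintro ⟨hxγ, hx1, hx2⟩
        have hx : x ∈ γ ∩ Set.Ioo t0 T₁ := ⟨hxγ, hmem.2.1.trans hx1, hx2⟩
        exact absurd (le_csSup hfin.bddAbove hx) (not_le.2 hx1)
    -- left limit L at T₁
    have hanti : AntitoneOn z (Set.Ioo a0 T₁) := by
      intro u hu v hv huv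
      apply sol_mono hφ hp hz u v (ha00.trans hu.1.le) huv (hlt v hv.2)
      rw [← Set.subset_empty_iff, ← ha02]
      rintro x ⟨hxγ, hx1, hx2⟩
      exact ⟨hxγ, hu.1.trans hx1, lt_of_le_of_lt hx2 hv.2⟩
    have hbdd : BddBelow (z '' Set.Ioo a0 T₁) := by
      refine ⟨0, ?_⟩
      rintro y ⟨x, hx, rfl⟩
      exact hz.nonneg x (ha00.trans hx.1.le) (hlt x hx.2)
    have hne' : (Set.Ioo a0 T₁).Nonempty := Set.nonempty_Ioo.2 ha01
    have hL : Filter.Tendsto z (nhdsWithin T₁ (Set.Iio T₁))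
        (nhds (sInf (z '' Set.Ioo a0 T₁))) :=
      AntitoneOn.tendsto_nhdsWithin_Ioo_left hne' hanti hbdd
    set L := sInf (z '' Set.Ioo a0 T₁) with hLdef
    have hL0 : 0 ≤ L := by
      refine ge_of_tendsto hL ?_
      filter_upwards [Ioo_mem_nhdsLT ha01] with u hu
      exact hz.nonneg u (ha00.trans hu.1.le) (hlt u hu.2)
    -- impulse-free interval after T₁
    obtain ⟨δ, hδ0, hδγ⟩ : ∃ δ : ℝ, 0 < δ ∧ γ ∩ Set.Ioo T₁ (T₁ + δ) = ∅ := by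
      rcases Set.eq_empty_or_nonempty (γ ∩ Set.Ioc T₁ (T₁ + 1)) with he | hne1
      · refine ⟨1, one_pos, ?_⟩
        rw [← Set.subset_empty_iff, ← he]
        rintro x ⟨hxγ, hx1, hx2⟩
        exact ⟨hxγ, hx1, hx2.le⟩
      · have hfin1 : (γ ∩ Set.Ioc T₁ (T₁ + 1)).Finite := (hγ.2 (T₁ + 1)).subset
          (Set.inter_subset_inter_right _ (fun x hx => hx.2))
        have hmem := hne1.csInf_mem hfin1
        refine ⟨sInf (γ ∩ Set.Ioc T₁ (T₁ + 1)) - T₁, by linarith [hmem.2.1], ?_⟩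
        ext x
        simp only [Set.mem_inter_iff, Set.mem_Ioo, Set.mem_empty_iff_false, iff_false]
        rintro ⟨hxγ, hx1, hx2⟩
        have hx2' : x < sInf (γ ∩ Set.Ioc T₁ (T₁ + 1)) := by linarith
        have hx : x ∈ γ ∩ Set.Ioc T₁ (T₁ + 1) :=
          ⟨hxγ, hx1, by linarith [hmem.2.2]⟩
        exact absurd (csInf_le hfin1.bddBelow hx) (not_le.2 hx2')
    -- a bound for φ on [0, L]
    obtain ⟨K, hKb⟩ := (isCompact_Icc (a := (0:ℝ)) (b := L)).exists_bound_of_continuousOn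
      (hφ.1.mono (fun x hx => hx.1))
    have hK0 : 0 ≤ K := le_trans (norm_nonneg _) (hKb 0 ⟨le_rfl, hL0⟩)
    have hK : ∀ x : ℝ, 0 ≤ x → x ≤ L → φ x ≤ K := by
      intro x h1 h2
      calc φ x ≤ ‖φ x‖ := le_abs_self _
        _ ≤ K := hKb x ⟨h1, h2⟩
    -- the extension value and extension function
    set c : ℝ := if T₁ ∈ γ then 0 else L with hcdef
    have hc0 : 0 ≤ c := by rw [hcdef]; split <;> [exact le_rfl; exact hL0]
    have hcL : c ≤ L := by rw [hcdef]; split <;> [exact hL0; exact le_rfl]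
    set g : ℝ → ℝ := fun t => max (c - K * ∫ s in T₁..t, p s) 0 with hgdef
    obtain ⟨hgcont, hgflow⟩ := gLemma hφ hp hT₁0 hc0 hK0
      (fun x h1 h2 => hK x h1 (h2.trans hcL)) (g := g) (fun t => rfl)
    have hgT₁ : g T₁ = c := by
      rw [hgdef]
      simp only [intervalIntegral.integral_same, mul_zero, sub_zero]
      exact max_eq_left hc0
    set z' : ℝ → ℝ := fun t => if t < T₁ then z t else g t with hz'def
    have hz'lt : ∀ t : ℝ, t < T₁ → z' t = z t := fun t ht => if_pos ht
    have hz'ge : ∀ t : ℝ, T₁ ≤ t → z' t = g t := fun t ht => if_neg (not_lt.2 ht)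
    have hz'T₁ : z' T₁ = c := by rw [hz'ge T₁ le_rfl, hgT₁]
    have hz'f : ∀ s : ℝ, s < T₁ → (fun s => p s * φ (z' s)) s = p s * φ (z s) := by
      intro s hs; simp only [hz'lt s hs]
    -- the extended solution
    have hsol : IsCompSol p φ ψ γ t0 ((T₁ + δ : ℝ) : EReal) z0 z' := by
      refine ⟨EReal.coe_lt_coe_iff.2 (by linarith), ?_, ?_, ?_, ?_, ?_⟩
      · rw [hz'lt t0 ht0T]; exact hz.init
      · intro t ht htT
        by_cases h : t < T₁
        · rw [hz'lt t h]; exact hz.nonneg t ht (hlt t h)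
        · rw [hz'ge t (not_lt.1 h), hgdef]; exact le_max_right _ _
      · -- flow_cont
        intro a b ha hab hbT hfree
        replace hbT : b < T₁ + δ := EReal.coe_lt_coe_iff.1 hbT
        rcases lt_or_ge b T₁ with h1 | h1
        · exact (hz.flow_cont a b ha hab (hlt b h1) hfree).congr
            (fun t ht => hz'lt t (lt_of_le_of_lt ht.2 h1))
        · rcases le_or_gt T₁ a with h2 | h2
          · exact ((hgcont b h1).mono (Set.Icc_subset_Icc h2 le_rfl)).congr
              (fun t ht => hz'ge t (h2.trans ht.1))
          · -- crossing interval: T₁ is not an impulse time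
            have hT₁γ : T₁ ∉ γ := by
              intro h
              have : T₁ ∈ γ ∩ Set.Ioc a b := ⟨h, h2, h1⟩
              rw [hfree] at this
              exact this
            have hcc : c = L := by rw [hcdef]; exact if_neg hT₁γ
            intro x hx
            rcases lt_trichotomy x T₁ with hx1 | hx1 | hx1
            · have hxu : x < (x + T₁) / 2 := by linarith
              have huT : (x + T₁) / 2 < T₁ := by linarith
              have h3 : γ ∩ Set.Ioc a ((x + T₁) / 2) = ∅ := by
                rw [← Set.subset_empty_iff, ← hfree]
                exact Set.inter_subset_inter_right _
                  (Set.Ioc_subset_Ioc_right (by linarith))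
              have h4 := hz.flow_cont a ((x + T₁) / 2) ha (hx.1.trans hxu.le)
                (hlt _ huT) h3
              have h5 : ContinuousWithinAt z (Set.Icc a b) x := by
                refine (h4 x ⟨hx.1, hxu.le⟩).mono_of_mem_nhdsWithin ?_
                refine Filter.mem_of_superset
                  (inter_mem_nhdsWithin (Set.Icc a b) (Iio_mem_nhds hxu)) ?_
                rintro y ⟨hy1, hy2⟩
                exact ⟨hy1.1, hy2.le⟩
              refine h5.congr_of_eventuallyEq ?_ (hz'lt x hx1)
              filter_upwards [mem_nhdsWithin_of_mem_nhds (Iio_mem_nhds hx1)] with y hy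
              exact hz'lt y hy
            · subst hx1
              show Filter.Tendsto z' (nhdsWithin x (Set.Icc a b)) (nhds (z' x))
              have hsplit : Set.Icc a b =
                  (Set.Icc a b ∩ Set.Iio x) ∪ (Set.Icc a b ∩ Set.Ici x) := by
                rw [← Set.inter_union_distrib_left, Set.Iio_union_Ici, Set.inter_univ]
              rw [hsplit, nhdsWithin_union, Filter.tendsto_sup]
              constructor
              · have h6 : Filter.Tendsto z' (nhdsWithin x (Set.Iio x)) (nhds L) := by
                  refine Filter.Tendsto.congr' ?_ hL
                  filter_upwards [self_mem_nhdsWithin] with y hy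
                  exact (hz'lt y hy).symm
                rw [hz'T₁, hcc]
                exact h6.mono_left (nhdsWithin_mono _ Set.inter_subset_right)
              · have h6 : ContinuousWithinAt g (Set.Icc x b) x :=
                  (hgcont b h1) x (Set.left_mem_Icc.2 h1)
                have h7 : Filter.Tendsto g (nhdsWithin x (Set.Icc a b ∩ Set.Ici x))
                    (nhds (g x)) :=
                  h6.mono_left (nhdsWithin_mono _ (fun y hy => ⟨hy.2, hy.1.2⟩))
                rw [hz'T₁, ← hgT₁]
                refine Filter.Tendsto.congr' ?_ h7
                filter_upwards [self_mem_nhdsWithin] with y hy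
                exact (hz'ge y hy.2).symm
            · have h6 : ContinuousWithinAt g (Set.Icc T₁ b) x :=
                (hgcont b h1) x ⟨hx1.le, hx.2⟩
              have h7 : ContinuousWithinAt g (Set.Icc a b) x := by
                refine h6.mono_of_mem_nhdsWithin ?_
                refine Filter.mem_of_superset
                  (inter_mem_nhdsWithin (Set.Icc a b) (Ioi_mem_nhds hx1)) ?_
                rintro y ⟨hy1, hy2⟩
                exact ⟨hy2.le, hy1.2⟩
              refine h7.congr_of_eventuallyEq ?_ (hz'ge x hx1.le)
              filter_upwards [mem_nhdsWithin_of_mem_nhds (Ioi_mem_nhds hx1)] with y hy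
              exact hz'ge y hy.le
      · -- flow_int
        intro a b ha hab hbT hfree
        replace hbT : b < T₁ + δ := EReal.coe_lt_coe_iff.1 hbT
        rcases lt_or_ge b T₁ with h1 | h1
        · obtain ⟨hi, hq⟩ := hz.flow_int a b ha hab (hlt b h1) hfree
          have heq : Set.EqOn (fun s => p s * φ (z' s)) (fun s => p s * φ (z s))
              (Set.uIcc a b) := by
            intro s hs
            rw [Set.uIcc_of_le hab] at hs
            simp only [hz'lt s (lt_of_le_of_lt hs.2 h1)]
          constructor
          · rw [intervalIntegrable_iff_integrableOn_Ioc_of_le hab] at hi ⊢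
            exact hi.congr_fun (fun s hs => (heq (by
              rw [Set.uIcc_of_le hab]; exact Set.Ioc_subset_Icc_self hs)).symm)
              measurableSet_Ioc
          · rw [intervalIntegral.integral_congr heq, hz'lt b h1,
              hz'lt a (lt_of_le_of_lt hab h1)]
            exact hq
        · rcases le_or_gt T₁ a with h2 | h2
          · obtain ⟨hi, hq⟩ := hgflow a b h2 hab
            have heq : Set.EqOn (fun s => p s * φ (z' s)) (fun s => p s * φ (g s))
                (Set.uIcc a b) := by
              intro s hs
              rw [Set.uIcc_of_le hab] at hs
              simp only [hz'ge s (h2.trans hs.1)]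
            constructor
            · rw [intervalIntegrable_iff_integrableOn_Ioc_of_le hab] at hi ⊢
              exact hi.congr_fun (fun s hs => (heq (by
                rw [Set.uIcc_of_le hab]; exact Set.Ioc_subset_Icc_self hs)).symm)
                measurableSet_Ioc
            · rw [intervalIntegral.integral_congr heq, hz'ge b (h2.trans hab),
                hz'ge a h2]
              exact hq
          · -- crossing
            have hT₁γ : T₁ ∉ γ := by
              intro h
              have : T₁ ∈ γ ∩ Set.Ioc a b := ⟨h, h2, h1⟩
              rw [hfree] at this
              exact this
            have hcc : c = L := by rw [hcdef]; exact if_neg hT₁γ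
            have hfree2 : γ ∩ Set.Ioc a T₁ = ∅ := by
              rw [← Set.subset_empty_iff, ← hfree]
              exact Set.inter_subset_inter_right _ (Set.Ioc_subset_Ioc_right h1)
            obtain ⟨hi1, hq1⟩ := crossLemma hφ hp hz ht0 rfl hL
              (f := fun s => p s * φ (z' s)) hz'f ha h2 hfree2
            obtain ⟨hi2, hq2⟩ := hgflow T₁ b le_rfl h1
            have heq2 : Set.EqOn (fun s => p s * φ (z' s)) (fun s => p s * φ (g s))
                (Set.uIcc T₁ b) := by
              intro s hs
              rw [Set.uIcc_of_le h1] at hs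
              simp only [hz'ge s hs.1]
            have hi2' : IntervalIntegrable (fun s => p s * φ (z' s))
                MeasureTheory.volume T₁ b := by
              rw [intervalIntegrable_iff_integrableOn_Ioc_of_le h1] at hi2 ⊢
              exact hi2.congr_fun (fun s hs => (heq2 (by
                rw [Set.uIcc_of_le h1]; exact Set.Ioc_subset_Icc_self hs)).symm)
                measurableSet_Ioc
            refine ⟨hi1.trans hi2', ?_⟩
            have hsplit := intervalIntegral.integral_add_adjacent_intervals hi1 hi2'
            have e1 : z' b - z' T₁ ≤ - ∫ s in T₁..b, p s * φ (z' s) := by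
              rw [intervalIntegral.integral_congr heq2, hz'ge b h1, hz'T₁, ← hgT₁]
              exact hq2
            have e2 : z' T₁ - z' a ≤ - ∫ s in a..T₁, p s * φ (z' s) := by
              rw [hz'T₁, hcc, hz'lt a h2]
              exact hq1
            linarith
      · -- jump
        intro τ hτγ hτ0 hτT
        replace hτT : τ < T₁ + δ := EReal.coe_lt_coe_iff.1 hτT
        rcases lt_trichotomy τ T₁ with h1 | h1 | h1
        · obtain ⟨L', hL1, hL2⟩ := hz.jump τ hτγ hτ0 (hlt τ h1)
          refine ⟨L', ?_, ?_⟩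
          · refine Filter.Tendsto.congr' ?_ hL1
            filter_upwards [self_mem_nhdsWithin] with y hy
            exact (hz'lt y (lt_trans hy h1)).symm
          · rw [hz'lt τ h1]; exact hL2
        · subst h1
          refine ⟨L, ?_, ?_⟩
          · refine Filter.Tendsto.congr' ?_ hL
            filter_upwards [self_mem_nhdsWithin] with y hy
            exact (hz'lt y hy).symm
          · rw [hz'T₁, hcdef, if_pos hτγ]
            exact hψ.nonneg' hL0
        · exfalso
          have : τ ∈ γ ∩ Set.Ioo T₁ (T₁ + δ) := ⟨hτγ, h1, hτT⟩
          rw [hδγ] at this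
          exact this
    exact hnoext ⟨((T₁ + δ : ℝ) : EReal), z', EReal.coe_lt_coe_iff.2 (by linarith),
      hsol, fun t ht htT => hz'lt t (EReal.coe_lt_coe_iff.1 htT)⟩
  · intro γ t0 T z0 z hγ ht0 hz0 hz
    exact sol_zero hφ hψ hp hγ hz
end
end
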